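/- arXiv:1501.04904 — 10 statements merged into one kernel-verified Lean document; each statement's English description precedes it below -/
import Mathlib

section
/- Let q be a prime power, let r and k be positive integers with r dividing k, and let C ⊆ 𝔽_q^n be a linear code of dimension k that has all-symbol locality r. Then the minimum distance of C satisfies d(C) ≤ n - k - ⌈k/r⌉ + 2. -/
/-- `C` (a set of words indexed by `ι` over alphabet `F`) has all-symbol locality `r`:
every coordinate `i` has a recovering set `I` of at most `r` other coordinates such that
any two codewords agreeing on `I` agree at `i`. -/
def HasAllSymbolLocality {ι F : Type*} (C : Set (ι → F)) (r : ℕ) : Prop :=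
  ∀ i : ι, ∃ I : Finset ι, i ∉ I ∧ I.card ≤ r ∧
    ∀ c ∈ C, ∀ c' ∈ C, (∀ j ∈ I, c j = c' j) → c i = c' i

/-- `d` is the minimum Hamming distance between distinct codewords of `C`. -/
def IsMinDist {ι F : Type*} [Fintype ι] [DecidableEq F] (C : Set (ι → F)) (d : ℕ) : Prop :=
  (∃ c ∈ C, ∃ c' ∈ C, c ≠ c' ∧ hammingDist c c' = d) ∧
  (∀ c ∈ C, ∀ c' ∈ C, c ≠ c' → d ≤ hammingDist c c')

/-- Singleton-type bound for LRC codes: if a linear code `C ⊆ 𝔽_q^n` of dimension `k`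
has all-symbol locality `r` (with `r ∣ k`), then its minimum distance `d` satisfies
`d ≤ n - k - ⌈k/r⌉ + 2` (here `⌈k/r⌉ = k / r` since `r ∣ k`). -/
theorem lrc_singleton_bound
    (q r k n d : ℕ) (hq : IsPrimePow q) (hr : 0 < r) (hk : 0 < k) (hrk : r ∣ k)
    (F : Type*) [Field F] [Fintype F] [DecidableEq F] (hF : Fintype.card F = q)
    (C : Submodule F (Fin n → F)) (hdim : Module.finrank F C = k)
    (hloc : HasAllSymbolLocality (C : Set (Fin n → F)) r)
    (hd : IsMinDist (C : Set (Fin n → F)) d) :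
    (d : ℤ) ≤ (n : ℤ) - (k : ℤ) - ((k / r : ℕ) : ℤ) + 2 := by
  classical
  have htr : (k / r) * r = k := Nat.div_mul_cancel hrk
  have hrlek : r ≤ k := Nat.le_of_dvd hk hrk
  have ht1 : 1 ≤ k / r := (Nat.one_le_div_iff hr).2 hrlek
  set t := k / r with htdef
  -- the coordinate functionals on `C`
  set φ : Fin n → Module.Dual F ↥C := fun i => (LinearMap.proj i).comp C.subtype with hφdef
  set rk : Finset (Fin n) → ℕ :=
    fun A => Module.finrank F ↥(Submodule.span F (φ '' (A : Set (Fin n)))) with hrkdef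
  -- the span of all coordinate functionals is everything
  have h_total : ∀ g : Module.Dual F ↥C, g ∈ Submodule.span F (Set.range φ) := by
    intro g
    apply mem_span_of_iInf_ker_le_ker (L := φ)
    intro c hc
    simp only [Submodule.mem_iInf, LinearMap.mem_ker] at hc
    have hc0 : (c : Fin n → F) = 0 := funext fun i => hc i
    have : c = 0 := Subtype.ext hc0
    rw [this]
    simp
  -- if the rank of `A` is < k, some functional is outside the span of `A`
  have h_exists : ∀ A : Finset (Fin n), rk A < k →
      ∃ i, φ i ∉ Submodule.span F (φ '' (A : Set (Fin n))) := by
    intro A hA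
    by_contra hcon
    push_neg at hcon
    have hsp : Submodule.span F (φ '' (A : Set (Fin n))) = ⊤ := by
      rw [eq_top_iff]
      intro g _
      exact Submodule.span_le.2 (Set.range_subset_iff.2 hcon) (h_total g)
    have h6 : Module.finrank F ↥(Submodule.span F (φ '' (A : Set (Fin n))))
        = Module.finrank F (Module.Dual F ↥C) :=
      (congrArg (fun W : Submodule F (Module.Dual F ↥C) => Module.finrank F ↥W) hsp).trans
        (finrank_top F _)
    have h7 : Module.finrank F (Module.Dual F ↥C) = k := by
      rw [Subspace.dual_finrank_eq, hdim]
    simp only [hrkdef] at hA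
    omega
  -- rank is subadditive
  have h_card : ∀ A B : Finset (Fin n), rk (A ∪ B) ≤ rk A + B.card := by
    intro A B
    have h2 : Module.finrank F ↥(Submodule.span F (φ '' (B : Set (Fin n)))) ≤ B.card := by
      have h3 := finrank_span_finset_le_card (R := F) (B.image φ)
      unfold Set.finrank at h3
      rw [Finset.coe_image] at h3
      exact h3.trans (Finset.card_image_le)
    have h1 : Submodule.span F (φ '' ((A ∪ B : Finset (Fin n)) : Set (Fin n)))
        = Submodule.span F (φ '' (A : Set (Fin n))) ⊔ Submodule.span F (φ '' (B : Set (Fin n))) := by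
      rw [Finset.coe_union, Set.image_union, Submodule.span_union]
    have h4 := Submodule.finrank_sup_add_finrank_inf_eq
      (Submodule.span F (φ '' (A : Set (Fin n)))) (Submodule.span F (φ '' (B : Set (Fin n))))
    have h5 : Module.finrank F ↥(Submodule.span F (φ '' ((A ∪ B : Finset (Fin n)) : Set (Fin n))))
        = Module.finrank F ↥(Submodule.span F (φ '' (A : Set (Fin n)))
            ⊔ Submodule.span F (φ '' (B : Set (Fin n)))) :=
      congrArg (fun W : Submodule F (Module.Dual F ↥C) => Module.finrank F ↥W) h1
    simp only [hrkdef]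
    omega
  -- locality in dual form
  have h_loc : ∀ i : Fin n, ∃ I : Finset (Fin n), i ∉ I ∧ I.card ≤ r ∧
      φ i ∈ Submodule.span F (φ '' (I : Set (Fin n))) := by
    intro i
    obtain ⟨I, hiI, hIcard, hIrec⟩ := hloc i
    refine ⟨I, hiI, hIcard, ?_⟩
    rw [Set.image_eq_range φ (I : Set (Fin n))]
    apply mem_span_of_iInf_ker_le_ker
    intro c hc
    simp only [Submodule.mem_iInf, LinearMap.mem_ker] at hc
    rw [LinearMap.mem_ker]
    have h0 := hIrec (c : Fin n → F) c.2 0 C.zero_mem ?_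
    · simpa [hφdef] using h0
    · intro j hj
      have := hc ⟨j, Finset.mem_coe.2 hj⟩
      simpa [hφdef] using this
  -- Phase 1 : greedy accumulation of recovering sets
  have phase1 : ∀ j : ℕ, j ≤ t - 1 →
      ∃ A : Finset (Fin n), rk A ≤ j * r ∧ rk A + j ≤ A.card := by
    intro j
    induction j with
    | zero =>
      intro _
      refine ⟨∅, ?_, ?_⟩ <;> simp [hrkdef]
    | succ j ih =>
      intro hj
      obtain ⟨A, hArk, hAcard⟩ := ih (by omega)
      have h3 : (t - 1) * r = k - r := by rw [Nat.sub_mul, one_mul, htr]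
      have hlt : rk A < k := by
        have h1 : j * r ≤ (t - 1) * r := Nat.mul_le_mul_right r (by omega)
        omega
      obtain ⟨i, hi⟩ := h_exists A hlt
      obtain ⟨I, hiI, hIcard, hIspan⟩ := h_loc i
      have hiA : i ∉ A := fun hmem =>
        hi (Submodule.subset_span (Set.mem_image_of_mem φ (Finset.mem_coe.2 hmem)))
      refine ⟨insert i (A ∪ I), ?_, ?_⟩ <;>
      · have hspan_eq : Submodule.span F (φ '' ((insert i (A ∪ I) : Finset (Fin n)) : Set (Fin n)))
            = Submodule.span F (φ '' ((A ∪ I : Finset (Fin n)) : Set (Fin n))) := by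
          rw [Finset.coe_insert, Set.image_insert_eq]
          refine Submodule.span_insert_eq_span ?_
          exact Submodule.span_mono (Set.image_mono (f := φ) (by
            intro x hx
            simp only [Finset.coe_union, Set.mem_union]
            exact Or.inr hx)) hIspan
        have hrk_eq : rk (insert i (A ∪ I)) = rk (A ∪ I) := by
          simp only [hrkdef]
          exact congrArg (fun W : Submodule F (Module.Dual F ↥C) => Module.finrank F ↥W) hspan_eq
        have hAI : A ∪ I = A ∪ (I \ A) := (Finset.union_sdiff_self_eq_union).symm
        have hrk_le : rk (A ∪ I) ≤ rk A + (I \ A).card := by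
          rw [hAI]; exact h_card A (I \ A)
        have hsd : (I \ A).card ≤ I.card := Finset.card_le_card (Finset.sdiff_subset)
        have hcard1 : (insert i (A ∪ I)).card = (A ∪ I).card + 1 :=
          Finset.card_insert_of_notMem (by simp [hiA, hiI])
        have hcard2 : (A ∪ I).card = A.card + (I \ A).card := by
          rw [hAI, Finset.card_union_of_disjoint Finset.disjoint_sdiff]
        have hmul : (j + 1) * r = j * r + r := by ring
        omega
  -- Phase 2 : pad up to rank k - 1
  have phase2 : ∀ m : ℕ, ∀ A : Finset (Fin n), rk A ≤ k - 1 → rk A + (t - 1) ≤ A.card →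
      k - 1 ≤ rk A + m →
      ∃ B : Finset (Fin n), rk B ≤ k - 1 ∧ (k - 1) + (t - 1) ≤ B.card := by
    intro m
    induction m with
    | zero =>
      intro A h1 h2 h3
      exact ⟨A, h1, by omega⟩
    | succ m ih =>
      intro A h1 h2 h3
      by_cases hcase : k - 1 ≤ rk A
      · exact ⟨A, h1, by omega⟩
      · obtain ⟨i, hi⟩ := h_exists A (by omega)
        have hiA : i ∉ A := fun hmem =>
          hi (Submodule.subset_span (Set.mem_image_of_mem φ (Finset.mem_coe.2 hmem)))
        have hle : rk (insert i A) ≤ rk A + 1 := by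
          have h4 := h_card A {i}
          have hins : insert i A = A ∪ {i} := by
            rw [Finset.union_comm, ← Finset.insert_eq]
          rw [hins]
          simpa using h4
        have hgt : rk A < rk (insert i A) := by
          simp only [hrkdef]
          apply Submodule.finrank_lt_finrank_of_lt
          have hle2 : Submodule.span F (φ '' (A : Set (Fin n)))
              ≤ Submodule.span F (φ '' ((insert i A : Finset (Fin n)) : Set (Fin n))) := by
            refine Submodule.span_mono (Set.image_mono (f := φ) ?_)
            rw [Finset.coe_insert]
            exact Set.subset_insert i (A : Set (Fin n))
          have hmem : φ i ∈ Submodule.span F (φ '' ((insert i A : Finset (Fin n)) : Set (Fin n))) := by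
            refine Submodule.subset_span ?_
            exact Set.mem_image_of_mem φ (by simp)
          exact lt_of_le_of_ne hle2 (fun h => hi (by rw [h]; exact hmem))
        refine ih (insert i A) (by omega) ?_ (by omega)
        rw [Finset.card_insert_of_notMem hiA]
        omega
  -- combine the two phases
  obtain ⟨A0, hA0rk, hA0card⟩ := phase1 (t - 1) le_rfl
  have h3 : (t - 1) * r = k - r := by rw [Nat.sub_mul, one_mul, htr]
  obtain ⟨B, hBrk, hBcard⟩ := phase2 k A0 (by omega) hA0card (by omega)
  -- produce a nonzero codeword vanishing on B
  have hBne : ∃ c : ↥C, c ≠ 0 ∧ ∀ i ∈ B, (c : Fin n → F) i = 0 := by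
    by_contra hcon
    push_neg at hcon
    have hker : ∀ c : ↥C, (∀ i ∈ B, (c : Fin n → F) i = 0) → c = 0 := by
      intro c hc
      by_contra hc0
      obtain ⟨i, hiB, hine⟩ := hcon c hc0
      exact hine (hc i hiB)
    have hspan_top : Submodule.span F (φ '' (B : Set (Fin n))) = ⊤ := by
      rw [eq_top_iff]
      intro g _
      rw [Set.image_eq_range φ (B : Set (Fin n))]
      apply mem_span_of_iInf_ker_le_ker
      intro c hc
      simp only [Submodule.mem_iInf, LinearMap.mem_ker] at hc
      have hc0 : c = 0 := by
        apply hker c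
        intro i hiB
        have := hc ⟨i, Finset.mem_coe.2 hiB⟩
        simpa [hφdef] using this
      rw [hc0]
      simp
    have hBk : rk B = k := by
      simp only [hrkdef]
      refine ((congrArg (fun W : Submodule F (Module.Dual F ↥C) => Module.finrank F ↥W)
        hspan_top).trans (finrank_top F _)).trans ?_
      rw [Subspace.dual_finrank_eq, hdim]
    omega
  obtain ⟨c, hc0, hcB⟩ := hBne
  have hcne : (c : Fin n → F) ≠ (0 : Fin n → F) := fun h => hc0 (Subtype.ext h)
  have hdle : d ≤ hammingDist (c : Fin n → F) (0 : Fin n → F) :=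
    hd.2 _ c.2 0 C.zero_mem hcne
  have hweight : hammingDist (c : Fin n → F) (0 : Fin n → F) + B.card ≤ n := by
    have hsub : (Finset.univ.filter fun i => (c : Fin n → F) i ≠ 0) ⊆ Bᶜ := by
      intro i hi
      simp only [Finset.mem_filter] at hi
      simp only [Finset.mem_compl]
      intro hiB
      exact hi.2 (hcB i hiB)
    have h5 := Finset.card_le_card hsub
    have hcompl : (Bᶜ : Finset (Fin n)).card = n - B.card := by
      rw [Finset.card_compl]
      simp
    have hdeq : hammingDist (c : Fin n → F) (0 : Fin n → F)
        = (Finset.univ.filter fun i => (c : Fin n → F) i ≠ 0).card := by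
      simp [hammingDist]
    have hBn : B.card ≤ n := by simpa using Finset.card_le_univ B
    omega
  omega
end

section
/- Let q be a prime power and let r, k, n be positive integers with r | k, (r+1) | n, n ≤ q and k/r ≤ n/(r+1). Let A ⊆ 𝔽_q with |A| = n be partitioned into blocks A_1, …, A_{n/(r+1)}, each of size r+1, and let g ∈ 𝔽_q[X] be a polynomial of degree r+1 that is constant on each block A_m. Let V ⊆ 𝔽_q[X] be the 𝔽_q-linear span of the polynomials g(X)^j X^i for 0 ≤ i ≤ r-1 and 0 ≤ j ≤ k/r - 1, and let C ⊆ 𝔽_q^A be the image of V under the evaluation map f ↦ (f(P))_{P ∈ A}. Then the minimum distance of C equals n - k - k/r + 2. -/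
open Polynomial

noncomputable section

/-- The evaluation map sending a polynomial `f ∈ F[X]` to the vector of its values
`(f(P))_{P ∈ A}`. -/
def evalOn {F : Type*} [CommSemiring F] (A : Finset F) :
    Polynomial F →ₗ[F] (A → F) :=
  LinearMap.pi fun P => Polynomial.leval (P : F)

lemma evalOn_norm {F : Type*} [Field F] [DecidableEq F] (A : Finset F) (f : F[X]) :
    hammingNorm (evalOn A f) = (A.filter fun P => ¬ f.eval P = 0).card := by
  unfold hammingNorm
  apply Finset.card_bij (fun (P : A) _ => (P : F))
  · intro P hP
    simp only [Finset.mem_filter, Finset.mem_univ, true_and] at hP ⊢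
    exact ⟨P.2, by simpa [evalOn] using hP⟩
  · intro a ha b hb hab; exact Subtype.ext hab
  · intro P hP
    simp only [Finset.mem_filter] at hP
    exact ⟨⟨P, hP.1⟩, by simp [evalOn, hP.2], rfl⟩

lemma root_filter_card_le {F : Type*} [Field F] [DecidableEq F] (A : Finset F) (f : F[X])
    (hf : f ≠ 0) : (A.filter fun P => f.eval P = 0).card ≤ f.natDegree := by
  apply Polynomial.card_le_degree_of_subset_roots
  intro P hP
  simp only [Finset.mem_val, Finset.mem_filter] at hP
  exact (Polynomial.mem_roots hf).mpr hP.2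

/-- The Tamo–Barg LRC code has minimum distance exactly `n - k - k/r + 2`
(which equals `n - k - ⌈k/r⌉ + 2` since `r ∣ k`). -/
theorem tamo_barg_min_distance
    (q r k n : ℕ) (hq : IsPrimePow q) (hr : 0 < r) (hk : 0 < k) (hn : 0 < n)
    (hrk : r ∣ k) (hr1n : (r + 1) ∣ n) (hnq : n ≤ q) (hkn : k / r ≤ n / (r + 1))
    (F : Type*) [Field F] [Fintype F] [DecidableEq F] (hF : Fintype.card F = q)
    (A : Finset F) (hA : A.card = n)
    (𝒜 : Fin (n / (r + 1)) → Finset F)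
    (hsub : ∀ m, 𝒜 m ⊆ A)
    (hpart : ∀ P ∈ A, ∃! m, P ∈ 𝒜 m)
    (hcard : ∀ m, (𝒜 m).card = r + 1)
    (g : Polynomial F) (hg : g.natDegree = r + 1)
    (hconst : ∀ m, ∀ P ∈ 𝒜 m, ∀ Q ∈ 𝒜 m, g.eval P = g.eval Q)
    (V : Submodule F (Polynomial F))
    (hV : V = Submodule.span F
      {p : Polynomial F | ∃ i j : ℕ, i < r ∧ j < k / r ∧ p = g ^ j * Polynomial.X ^ i})
    (C : Submodule F (A → F)) (hC : C = Submodule.map (evalOn A) V) :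
    IsMinDist (C : Set (A → F)) (n - k - k / r + 2) := by
  classical
  set t := k / r with ht
  have hkt : r * t = k := Nat.mul_div_cancel' hrk
  have htpos : 0 < t := Nat.div_pos (Nat.le_of_dvd hk hrk) hr
  obtain ⟨t', ht'⟩ : ∃ t', t = t' + 1 := ⟨t - 1, by omega⟩
  have hktn : k + t ≤ n := by
    have h1 : t * (r + 1) ≤ (n / (r + 1)) * (r + 1) := Nat.mul_le_mul_right _ hkn
    have h2 : (n / (r + 1)) * (r + 1) = n := Nat.div_mul_cancel hr1n
    have h3 : k + t = t * (r + 1) := by rw [← hkt]; ring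
    omega
  have hg0 : g ≠ 0 := fun h0 => by simp [h0] at hg
  -- the key expansion constant
  have hkey : t' * (r + 1) + (r - 1) = k + t - 2 := by
    have h2 : k + t = t * (r + 1) := by rw [← hkt]; ring
    have h3 : t * (r + 1) = t' * (r + 1) + (r + 1) := by rw [ht']; ring
    omega
  -- degree bound on members of V
  have hdeg : ∀ f ∈ V, f ≠ 0 → f.natDegree ≤ k + t - 2 := by
    have hle : V ≤ Polynomial.degreeLT F (k + t - 1) := by
      rw [hV]
      apply Submodule.span_le.mpr
      rintro p ⟨i, j, hi, hj, rfl⟩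
      rw [SetLike.mem_coe, Polynomial.mem_degreeLT]
      have hnd : (g ^ j * X ^ i).natDegree = j * (r + 1) + i := by
        rw [natDegree_mul (pow_ne_zero _ hg0) (pow_ne_zero _ X_ne_zero),
          natDegree_pow, natDegree_pow, natDegree_X, hg, mul_one]
      have hb : j * (r + 1) + i ≤ k + t - 2 := by
        have : j * (r + 1) ≤ t' * (r + 1) := Nat.mul_le_mul_right _ (by omega)
        omega
      calc (g ^ j * X ^ i).degree ≤ ((g ^ j * X ^ i).natDegree : WithBot ℕ) :=
            degree_le_natDegree
        _ < ((k + t - 1 : ℕ) : WithBot ℕ) := by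
            exact_mod_cast (by omega : (g ^ j * X ^ i).natDegree < k + t - 1)
    intro f hf hf0
    have := Polynomial.mem_degreeLT.mp (hle hf)
    have := (Polynomial.natDegree_lt_iff_degree_lt hf0).mpr this
    omega
  -- weight of a nonzero member of V
  have hwt : ∀ f ∈ V, f ≠ 0 →
      n - (k + t - 2) ≤ hammingNorm (evalOn A f) := by
    intro f hf hf0
    rw [evalOn_norm]
    have hsum := Finset.card_filter_add_card_filter_not
      (s := A) (p := fun P => f.eval P = 0)
    have hroot := root_filter_card_le A f hf0
    have := hdeg f hf hf0
    omega
  constructor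
  · -- existence of a codeword achieving the distance
    -- pick representative points of each block
    have hne : ∀ m, (𝒜 m).Nonempty := fun m =>
      Finset.card_pos.mp (by rw [hcard]; omega)
    have hdisj : ∀ m m' : Fin (n / (r + 1)), m ≠ m' → Disjoint (𝒜 m) (𝒜 m') := by
      intro m m' hmm
      rw [Finset.disjoint_left]
      intro P hP hP'
      obtain ⟨u, _, hu⟩ := hpart P (hsub m hP)
      exact hmm ((hu m hP).trans (hu m' hP').symm)
    set L : Fin (n / (r + 1)) := ⟨t', by omega⟩ with hL
    set S : Finset (Fin (n / (r + 1))) := (Finset.range t').attachFin (fun m hm => by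
      rw [Finset.mem_range] at hm; omega) with hS
    have hScard : S.card = t' := by rw [hS, Finset.card_attachFin, Finset.card_range]
    have hSmem : ∀ m : Fin (n / (r + 1)), m ∈ S ↔ (m : ℕ) < t' := by
      intro m; rw [hS, Finset.mem_attachFin, Finset.mem_range]
    obtain ⟨B, hBsub, hBcard⟩ := Finset.exists_subset_card_eq (s := 𝒜 L) (n := r - 1)
      (by rw [hcard]; omega)
    set w : Fin (n / (r + 1)) → F := fun m => (hne m).choose with hw
    have hwmem : ∀ m, w m ∈ 𝒜 m := fun m => (hne m).choose_spec
    set h : F[X] := ∏ m ∈ S, (X - Polynomial.C (g.eval (w m))) with hh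
    set p : F[X] := ∏ b ∈ B, (X - Polynomial.C b) with hp
    set f : F[X] := (Polynomial.aeval g) h * p with hf
    have hhmonic : h.Monic := monic_prod_of_monic _ _ fun m _ => monic_X_sub_C _
    have hpmonic : p.Monic := monic_prod_of_monic _ _ fun b _ => monic_X_sub_C _
    have hhdeg : h.natDegree = t' := by
      rw [hh, natDegree_prod_of_monic _ _ fun m _ => monic_X_sub_C _]
      simp [hScard]
    have hpdeg : p.natDegree = r - 1 := by
      rw [hp, natDegree_prod_of_monic _ _ fun b _ => monic_X_sub_C _]
      simp [hBcard]
    -- f ∈ V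
    have hfV : f ∈ V := by
      rw [hf, hV, Polynomial.aeval_eq_sum_range' (n := t) (by omega) g,
        p.as_sum_range' r (by omega), Finset.sum_mul_sum]
      apply Submodule.sum_mem
      intro j hj
      apply Submodule.sum_mem
      intro i hi
      have heq : (h.coeff j • g ^ j) * (monomial i (p.coeff i))
          = (h.coeff j * p.coeff i) • (g ^ j * X ^ i) := by
        rw [← C_mul_X_pow_eq_monomial, Polynomial.smul_eq_C_mul, Polynomial.smul_eq_C_mul,
          map_mul]
        ring
      rw [heq]
      exact Submodule.smul_mem _ _ (Submodule.subset_span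
        ⟨i, j, Finset.mem_range.mp hi, Finset.mem_range.mp hj, rfl⟩)
    -- f ≠ 0
    have haeval : (Polynomial.aeval g) h = ∏ m ∈ S, (g - Polynomial.C (g.eval (w m))) := by
      rw [hh, map_prod]
      simp
    have hf0 : f ≠ 0 := by
      rw [hf, haeval]
      apply mul_ne_zero _ hpmonic.ne_zero
      rw [Finset.prod_ne_zero_iff]
      intro m _ h0
      have : (g - Polynomial.C (g.eval (w m))).natDegree = r + 1 := by
        rw [natDegree_sub_C, hg]
      rw [h0] at this
      simp at this
    -- the zero set
    set Z : Finset F := (S.biUnion 𝒜) ∪ B with hZ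
    have hZA : Z ⊆ A := by
      rw [hZ]
      apply Finset.union_subset
      · intro P hP
        obtain ⟨m, _, hPm⟩ := Finset.mem_biUnion.mp hP
        exact hsub m hPm
      · exact (hBsub.trans (hsub L))
    have hLS : L ∉ S := by rw [hSmem]; simp [hL]
    have hZcard : Z.card = k + t - 2 := by
      rw [hZ, Finset.card_union_of_disjoint, Finset.card_biUnion, hBcard]
      · rw [Finset.sum_congr rfl fun m _ => hcard m, Finset.sum_const, hScard, smul_eq_mul]
        omega
      · intro m hm m' hm' hmm; exact hdisj m m' hmm
      · rw [Finset.disjoint_left]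
        intro P hP hPB
        obtain ⟨m, hmS, hPm⟩ := Finset.mem_biUnion.mp hP
        have hPL : P ∈ 𝒜 L := hBsub hPB
        obtain ⟨u, _, hu⟩ := hpart P (hsub m hPm)
        have hLm : L = m := (hu L hPL).trans (hu m hPm).symm
        exact hLS (hLm ▸ hmS)
    have hZzero : ∀ P ∈ Z, f.eval P = 0 := by
      intro P hP
      rw [hf, haeval, eval_mul]
      rcases Finset.mem_union.mp hP with hP | hP
      · obtain ⟨m, hmS, hPm⟩ := Finset.mem_biUnion.mp hP
        apply mul_eq_zero_of_left
        rw [eval_prod]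
        apply Finset.prod_eq_zero hmS
        rw [eval_sub, eval_C, hconst m P hPm (w m) (hwmem m), sub_self]
      · apply mul_eq_zero_of_right
        rw [hp, eval_prod]
        apply Finset.prod_eq_zero hP
        simp
    -- exact root count
    have hfilter : (A.filter fun P => f.eval P = 0).card = k + t - 2 := by
      have h1 : Z ⊆ A.filter fun P => f.eval P = 0 := fun P hP =>
        Finset.mem_filter.mpr ⟨hZA hP, hZzero P hP⟩
      have h2 := Finset.card_le_card h1
      have h3 := root_filter_card_le A f hf0
      have h4 := hdeg f hfV hf0
      omega
    refine ⟨evalOn A f, ?_, 0, C.zero_mem, ?_, ?_⟩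
    · rw [hC]; exact ⟨f, hfV, rfl⟩
    · intro hcontra
      have : hammingNorm (evalOn A f) = 0 := by rw [hcontra]; simp
      rw [evalOn_norm] at this
      have hsum := Finset.card_filter_add_card_filter_not
        (s := A) (p := fun P => f.eval P = 0)
      omega
    · rw [hammingDist_zero_right, evalOn_norm]
      have hsum := Finset.card_filter_add_card_filter_not
        (s := A) (p := fun P => f.eval P = 0)
      omega
  · -- lower bound
    intro c hc c' hc' hcc
    rw [hC] at hc hc'
    obtain ⟨f1, hf1, rfl⟩ := hc
    obtain ⟨f2, hf2, rfl⟩ := hc'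
    have hfd : f1 - f2 ≠ 0 := by
      intro h0
      exact hcc (by rw [sub_eq_zero.mp h0])
    have hmem : f1 - f2 ∈ V := V.sub_mem hf1 hf2
    have := hwt (f1 - f2) hmem hfd
    rw [hammingDist_comm, hammingDist_eq_hammingNorm, neg_add_eq_sub, ← map_sub] at *
    omega
end
end

section
/- Let q be a prime power and let r, k, n be positive integers with r | k, (r+1) | n, n ≤ q and k/r ≤ n/(r+1). Let A ⊆ 𝔽_q with |A| = n be partitioned into blocks A_1, …, A_{n/(r+1)}, each of size r+1, and let g ∈ 𝔽_q[X] be a polynomial of degree r+1 that is constant on each block A_m. Let V ⊆ 𝔽_q[X] be the 𝔽_q-linear span of the polynomials g(X)^j X^i for 0 ≤ i ≤ r-1 and 0 ≤ j ≤ k/r - 1, and let C ⊆ 𝔽_q^A be the image of V under the evaluation map f ↦ (f(P))_{P ∈ A}. Then for every f ∈ V and every block A_m there exists a univariate polynomial δ ∈ 𝔽_q[X] of degree at most r-1 with f(P) = δ(P) for all P ∈ A_m; consequently C has all-symbol locality r, where for each coordinate P ∈ A_m the recovering set is A_m \ {P}. -/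
open Polynomial

noncomputable section

/-- On every block `A_m`, each function of the Tamo–Barg code space `V` agrees with a
univariate polynomial of degree at most `r - 1`; consequently the evaluation code `C` has
all-symbol locality `r`, the recovering set of a coordinate `P ∈ A_m` being `A_m \ {P}`. -/
theorem tamo_barg_locality
    (q r k n : ℕ) (hq : IsPrimePow q) (hr : 0 < r) (hk : 0 < k) (hn : 0 < n)
    (hrk : r ∣ k) (hr1n : (r + 1) ∣ n) (hnq : n ≤ q) (hkn : k / r ≤ n / (r + 1))
    (F : Type*) [Field F] [Fintype F] [DecidableEq F] (hF : Fintype.card F = q)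
    (A : Finset F) (hA : A.card = n)
    (𝒜 : Fin (n / (r + 1)) → Finset F)
    (hsub : ∀ m, 𝒜 m ⊆ A)
    (hpart : ∀ P ∈ A, ∃! m, P ∈ 𝒜 m)
    (hcard : ∀ m, (𝒜 m).card = r + 1)
    (g : Polynomial F) (hg : g.natDegree = r + 1)
    (hconst : ∀ m, ∀ P ∈ 𝒜 m, ∀ Q ∈ 𝒜 m, g.eval P = g.eval Q)
    (V : Submodule F (Polynomial F))
    (hV : V = Submodule.span F
      {p : Polynomial F | ∃ i j : ℕ, i < r ∧ j < k / r ∧ p = g ^ j * Polynomial.X ^ i})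
    (C : Submodule F (A → F)) (hC : C = Submodule.map (evalOn A) V) :
    (∀ f ∈ V, ∀ m, ∃ δ : Polynomial F, δ.degree ≤ ((r - 1 : ℕ) : WithBot ℕ) ∧
        ∀ P ∈ 𝒜 m, f.eval P = δ.eval P) ∧
    (∀ m, ∀ P : A, (P : F) ∈ 𝒜 m →
        ∀ c ∈ C, ∀ c' ∈ C,
          (∀ Q : A, (Q : F) ∈ 𝒜 m → Q ≠ P → c Q = c' Q) → c P = c' P) := by
  have key : ∀ f ∈ V, ∀ m, ∃ δ : Polynomial F, δ.degree ≤ ((r - 1 : ℕ) : WithBot ℕ) ∧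
      ∀ P ∈ 𝒜 m, f.eval P = δ.eval P := by
    intro f hf m
    rw [hV] at hf
    induction hf using Submodule.span_induction with
    | mem p hp =>
      obtain ⟨i, j, hi, hj, rfl⟩ := hp
      obtain ⟨Q, hQ⟩ : (𝒜 m).Nonempty := Finset.card_pos.mp (by rw [hcard]; omega)
      refine ⟨Polynomial.C ((g.eval Q) ^ j) * Polynomial.X ^ i, ?_, ?_⟩
      · exact (Polynomial.degree_C_mul_X_pow_le _ _).trans (by exact_mod_cast Nat.le_sub_one_of_lt hi)
      · intro P hP
        simp [hconst m P hP Q hQ]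
    | zero => exact ⟨0, by simp⟩
    | add x y hx hy ihx ihy =>
      obtain ⟨δ1, h1, h1'⟩ := ihx
      obtain ⟨δ2, h2, h2'⟩ := ihy
      exact ⟨δ1 + δ2, (Polynomial.degree_add_le _ _).trans (max_le h1 h2),
        fun P hP => by simp [h1' P hP, h2' P hP]⟩
    | smul a x hx ihx =>
      obtain ⟨δ, h1, h1'⟩ := ihx
      refine ⟨Polynomial.C a * δ, (Polynomial.degree_mul_le _ _).trans ?_,
        fun P hP => by simp [h1' P hP]⟩
      calc (Polynomial.C a).degree + δ.degree ≤ 0 + ((r-1:ℕ) : WithBot ℕ) :=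
            add_le_add Polynomial.degree_C_le h1
        _ = _ := by simp
  refine ⟨key, ?_⟩
  intro m P hP c hc c' hc' hagree
  rw [hC] at hc hc'
  obtain ⟨f, hf, rfl⟩ := hc
  obtain ⟨f', hf', rfl⟩ := hc'
  obtain ⟨δ, hδdeg, hδ⟩ := key (f - f') (V.sub_mem hf hf') m
  have hδ0 : δ = 0 := by
    apply Polynomial.eq_zero_of_natDegree_lt_card_of_eval_eq_zero' δ ((𝒜 m).erase P)
    · intro Q hQ
      have hQm := Finset.mem_of_mem_erase hQ
      have hne : (⟨Q, hsub m hQm⟩ : A) ≠ P :=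
        fun h => (Finset.ne_of_mem_erase hQ) (congrArg Subtype.val h)
      have h1 := hagree ⟨Q, hsub m hQm⟩ hQm hne
      simp only [evalOn, LinearMap.pi_apply, Polynomial.leval_apply] at h1
      have h2 := hδ Q hQm
      rw [Polynomial.eval_sub] at h2
      rw [← h2, h1, sub_self]
    · rw [Finset.card_erase_of_mem hP, hcard]
      have hle : δ.natDegree ≤ r - 1 := Polynomial.natDegree_le_iff_degree_le.mpr hδdeg
      omega
  have h3 := hδ P hP
  rw [hδ0, Polynomial.eval_zero, Polynomial.eval_sub, sub_eq_zero] at h3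
  simp only [evalOn, LinearMap.pi_apply, Polynomial.leval_apply]
  exact h3
end
end

section
/- Let q0 be a prime power and q = q0². The number of affine 𝔽_q-rational points of the Hermitian curve, i.e., the number of pairs (a, b) ∈ 𝔽_q × 𝔽_q with a^{q0} + a = b^{q0+1}, equals q0³. -/
open Finset Polynomial

/-- The set of roots of `X^q0 + u•X + v` has at most `q0` elements, when `q0 ≥ 2`. -/
private lemma hermitian_aux_card_filter_le {F : Type*} [Field F] [Fintype F] [DecidableEq F]
    {q0 : ℕ} (hq0 : 2 ≤ q0) (u v : F) :
    (Finset.univ.filter fun a : F => a ^ q0 + u * a + v = 0).card ≤ q0 := by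
  set P : F[X] := X ^ q0 + C u * X + C v with hP
  have hdeg : P.natDegree = q0 := by
    rw [hP]
    compute_degree
    · simp only [if_neg (by omega : ¬ q0 = 1), if_neg (by omega : ¬ q0 = 0), add_zero]
      exact one_ne_zero
    · omega
    · omega
  have hP0 : P ≠ 0 := by
    intro h
    rw [h, Polynomial.natDegree_zero] at hdeg
    omega
  have hsub : (Finset.univ.filter fun a : F => a ^ q0 + u * a + v = 0).val ⊆ P.roots := by
    intro a ha
    rw [Finset.mem_val, Finset.mem_filter] at ha
    rw [Polynomial.mem_roots hP0]
    simp only [hP, Polynomial.IsRoot, Polynomial.eval_add, Polynomial.eval_pow,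
      Polynomial.eval_X, Polynomial.eval_mul, Polynomial.eval_C]
    exact ha.2
  calc (Finset.univ.filter fun a : F => a ^ q0 + u * a + v = 0).card
      ≤ P.natDegree := Polynomial.card_le_degree_of_subset_roots hsub
    _ = q0 := hdeg

/-- The Hermitian curve `x^{q0} + x = y^{q0+1}` over `𝔽_{q0²}` has exactly `q0³` affine
rational points. -/
theorem hermitian_curve_point_count
    (q0 : ℕ) (hq0 : IsPrimePow q0)
    (F : Type*) [Field F] [Fintype F] [DecidableEq F] (hF : Fintype.card F = q0 ^ 2) :
    (Finset.univ.filter fun p : F × F => p.1 ^ q0 + p.1 = p.2 ^ (q0 + 1)).card = q0 ^ 3 := by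
  classical
  obtain ⟨p, k, hp, hk, hpk⟩ := hq0
  have hpprime : p.Prime := hp.nat_prime
  have hq2 : 2 ≤ q0 := by
    calc 2 ≤ p := hpprime.two_le
    _ ≤ p ^ k := Nat.le_self_pow hk.ne' p
    _ = q0 := hpk
  -- characteristic of F is p
  haveI : CharP F (ringChar F) := ringChar.charP F
  have hrp : (ringChar F).Prime := CharP.char_is_prime F (ringChar F)
  obtain ⟨n, -, hcard⟩ := FiniteField.card F (ringChar F)
  have hpchar : p = ringChar F := by
    have hdvd : p ∣ ringChar F ^ (n : ℕ) := by
      rw [← hcard, hF, ← hpk]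
      exact dvd_pow (dvd_pow_self p hk.ne') (by positivity)
    exact (Nat.prime_dvd_prime_iff_eq hpprime hrp).mp (hpprime.dvd_of_dvd_pow hdvd)
  haveI : CharP F p := hpchar ▸ ringChar.charP F
  haveI : Fact p.Prime := ⟨hpprime⟩
  -- key algebraic facts
  have hfrob : ∀ x y : F, (x + y) ^ q0 = x ^ q0 + y ^ q0 := by
    intro x y
    rw [← hpk]
    exact add_pow_char_pow x y p k
  have hpow : ∀ x : F, x ^ (q0 * q0) = x := by
    intro x
    have := FiniteField.pow_card x
    rwa [hF, pow_two] at this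
  -- fibers of the trace-like map
  set fib : F → Finset F := fun c => Finset.univ.filter fun a : F => a ^ q0 + a = c with hfibdef
  have hfible : ∀ c : F, (fib c).card ≤ q0 := by
    intro c
    have h := hermitian_aux_card_filter_le (F := F) hq2 1 (-c)
    have : (Finset.univ.filter fun a : F => a ^ q0 + 1 * a + (-c) = 0) = fib c := by
      ext a
      simp only [hfibdef, Finset.mem_filter, Finset.mem_univ, true_and]
      constructor <;> intro h' <;> linear_combination h'
    rwa [this] at h
  set S : Finset F := Finset.univ.filter fun c : F => c ^ q0 = c with hSdef
  have hSle : S.card ≤ q0 := by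
    have h := hermitian_aux_card_filter_le (F := F) hq2 (-1) 0
    have : (Finset.univ.filter fun a : F => a ^ q0 + (-1) * a + 0 = 0) = S := by
      ext a
      simp only [hSdef, Finset.mem_filter, Finset.mem_univ, true_and]
      constructor <;> intro h' <;> linear_combination h'
    rwa [this] at h
  set I : Finset F := Finset.univ.image (fun a : F => a ^ q0 + a) with hIdef
  have hIS : I ⊆ S := by
    intro c hc
    rw [hIdef, Finset.mem_image] at hc
    obtain ⟨a, -, rfl⟩ := hc
    rw [hSdef, Finset.mem_filter]
    refine ⟨Finset.mem_univ _, ?_⟩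
    rw [hfrob, ← pow_mul, hpow, add_comm]
  have hsum : Fintype.card F = ∑ c ∈ I, (fib c).card := by
    rw [← Finset.card_univ]
    exact Finset.card_eq_sum_card_fiberwise
      (fun a _ => Finset.mem_image_of_mem _ (Finset.mem_univ a))
  have hIcard : I.card ≤ q0 := le_trans (Finset.card_le_card hIS) hSle
  have hsumle : ∑ c ∈ I, (fib c).card ≤ I.card * q0 := by
    calc ∑ c ∈ I, (fib c).card ≤ ∑ _c ∈ I, q0 := Finset.sum_le_sum fun c _ => hfible c
    _ = I.card * q0 := by rw [Finset.sum_const, smul_eq_mul]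
  have hq0sq : q0 ^ 2 = ∑ c ∈ I, (fib c).card := by rw [← hF, hsum]
  have hIq0 : I.card = q0 := by
    have h1 : q0 ^ 2 ≤ I.card * q0 := hq0sq ▸ hsumle
    nlinarith [hIcard, hq2]
  -- every fiber over an element of I has exactly q0 elements
  have hfib_eq : ∀ c ∈ I, (fib c).card = q0 := by
    intro c hc
    by_contra hne
    have hlt : (fib c).card < q0 := lt_of_le_of_ne (hfible c) hne
    have : ∑ c ∈ I, (fib c).card < ∑ _c ∈ I, q0 :=
      Finset.sum_lt_sum (fun i _ => hfible i) ⟨c, hc, hlt⟩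
    rw [Finset.sum_const, smul_eq_mul, hIq0, ← pow_two] at this
    omega
  have hISeq : I = S := Finset.eq_of_subset_of_card_le hIS (by rw [hIq0]; exact hSle)
  -- every b^(q0+1) lies in S = I
  have hbI : ∀ b : F, b ^ (q0 + 1) ∈ I := by
    intro b
    rw [hISeq, hSdef, Finset.mem_filter]
    refine ⟨Finset.mem_univ _, ?_⟩
    calc (b ^ (q0 + 1)) ^ q0 = b ^ (q0 * q0) * b ^ q0 := by
          rw [← pow_mul, add_mul, one_mul, pow_add]
    _ = b ^ (q0 + 1) := by rw [hpow, pow_succ, mul_comm]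
  -- decompose the point count fiberwise over the second coordinate
  have hmain : (Finset.univ.filter fun p : F × F => p.1 ^ q0 + p.1 = p.2 ^ (q0 + 1)).card
      = ∑ b : F, ((Finset.univ.filter fun p : F × F =>
          p.1 ^ q0 + p.1 = p.2 ^ (q0 + 1)).filter fun x => x.2 = b).card :=
    Finset.card_eq_sum_card_fiberwise (fun x _ => Finset.mem_univ x.2)
  have hslice : ∀ b : F, ((Finset.univ.filter fun p : F × F =>
      p.1 ^ q0 + p.1 = p.2 ^ (q0 + 1)).filter fun x => x.2 = b).card
      = (fib (b ^ (q0 + 1))).card := by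
    intro b
    have himg : ((Finset.univ.filter fun p : F × F =>
        p.1 ^ q0 + p.1 = p.2 ^ (q0 + 1)).filter fun x => x.2 = b)
        = (fib (b ^ (q0 + 1))).image (fun a => (a, b)) := by
      ext x
      simp only [Finset.mem_filter, Finset.mem_univ, true_and, Finset.mem_image,
        hfibdef, Prod.ext_iff]
      constructor
      · rintro ⟨h1, h2⟩
        exact ⟨x.1, by rw [← h2]; exact h1, rfl, h2.symm⟩
      · rintro ⟨a, ha, h1, h2⟩
        rw [← h1, ← h2]
        exact ⟨ha, rfl⟩
    rw [himg]
    exact Finset.card_image_of_injective _ (fun a1 a2 h => (Prod.ext_iff.mp h).1)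
  rw [hmain]
  calc ∑ b : F, ((Finset.univ.filter fun p : F × F =>
          p.1 ^ q0 + p.1 = p.2 ^ (q0 + 1)).filter fun x => x.2 = b).card
      = ∑ _b : F, q0 := by
        refine Finset.sum_congr rfl fun b _ => ?_
        rw [hslice b, hfib_eq _ (hbI b)]
    _ = Fintype.card F * q0 := by rw [Finset.sum_const, smul_eq_mul, Finset.card_univ]
    _ = q0 ^ 3 := by rw [hF]; ring
end

section
/- Let q0 be a prime power and q = q0², and let M = {a ∈ 𝔽_q : a^{q0} + a = 0}. Then |M| = q0; for every a ∈ 𝔽_q \ M the set {b ∈ 𝔽_q : b^{q0+1} = a^{q0} + a} has exactly q0 + 1 elements; and for every a ∈ M that set equals {0}. In particular, the number of affine points (a,b) of the Hermitian curve with a ∉ M equals q0³ - q0. -/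
open Finset Polynomial

/-- The number of roots of `x^n + u*x` in a field is at most `n` (for `1 ≤ n`). -/
lemma aux_card_roots_le {F : Type*} [Field F] [Fintype F] [DecidableEq F]
    (n : ℕ) (hn : 2 ≤ n) (u : F) :
    (Finset.univ.filter fun x : F => x ^ n + u * x = 0).card ≤ n := by
  set P : F[X] := X ^ n + C u * X with hP
  have hmono : P.Monic := by
    apply (monic_X_pow n).add_of_left
    calc degree (C u * X) ≤ degree (C u) + degree (X : F[X]) := degree_mul_le _ _
      _ ≤ 0 + 1 := add_le_add degree_C_le (le_of_eq degree_X)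
      _ = (1 : ℕ) := by norm_num
      _ < (n : ℕ) := by exact_mod_cast (by omega : 1 < n)
      _ = degree ((X : F[X]) ^ n) := (degree_X_pow n).symm
  have hPne : P ≠ 0 := hmono.ne_zero
  have hdeg : P.natDegree ≤ n :=
    natDegree_add_le_of_degree_le (le_of_eq (natDegree_X_pow n))
      (le_trans natDegree_mul_le
        (by simp only [natDegree_C, natDegree_X, zero_add]; omega))
  have hsub : (Finset.univ.filter fun x : F => x ^ n + u * x = 0) ⊆ P.roots.toFinset := by
    intro x hx
    simp only [mem_filter, mem_univ, true_and] at hx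
    rw [Multiset.mem_toFinset, mem_roots hPne]
    simp [hP, IsRoot, hx]
  calc (Finset.univ.filter fun x : F => x ^ n + u * x = 0).card
      ≤ P.roots.toFinset.card := Finset.card_le_card hsub
    _ ≤ Multiset.card P.roots := Multiset.toFinset_card_le _
    _ ≤ P.natDegree := card_roots' P
    _ ≤ n := hdeg

/-- Fibers of the projection `(x,y) ↦ x` of the Hermitian curve `x^{q0} + x = y^{q0+1}`
over `𝔽_{q0²}`: the set `M = {a : a^{q0} + a = 0}` of fully ramified points has size `q0`;
for `a ∉ M` the fiber `{b : b^{q0+1} = a^{q0} + a}` has exactly `q0 + 1` elements; for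
`a ∈ M` that fiber is `{0}`; and the number of affine points `(a,b)` of the curve with
`a ∉ M` equals `q0³ - q0`. -/
theorem hermitian_x_projection_fibers
    (q0 : ℕ) (hq0 : IsPrimePow q0)
    (F : Type*) [Field F] [Fintype F] [DecidableEq F] (hF : Fintype.card F = q0 ^ 2)
    (M : Finset F) (hM : M = Finset.univ.filter fun a : F => a ^ q0 + a = 0) :
    M.card = q0 ∧
    (∀ a : F, a ∉ M →
      (Finset.univ.filter fun b : F => b ^ (q0 + 1) = a ^ q0 + a).card = q0 + 1) ∧
    (∀ a : F, a ∈ M →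
      (Finset.univ.filter fun b : F => b ^ (q0 + 1) = a ^ q0 + a) = {(0 : F)}) ∧
    (Finset.univ.filter fun p : F × F =>
        p.1 ^ q0 + p.1 = p.2 ^ (q0 + 1) ∧ p.1 ∉ M).card = q0 ^ 3 - q0 := by
  classical
  have hq2 : 2 ≤ q0 := hq0.two_le
  obtain ⟨p, k, hpp, hk, hq0k⟩ := hq0
  have hpprime : p.Prime := hpp.nat_prime
  haveI : Fact p.Prime := ⟨hpprime⟩
  -- characteristic of F is p
  haveI : CharP F (ringChar F) := ringChar.charP F
  obtain ⟨n, hrprime, hcard⟩ := FiniteField.card F (ringChar F)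
  have hpq : Fintype.card F = p ^ (2 * k) := by
    rw [hF, ← hq0k]; ring
  have hring : ringChar F = p := by
    have hdvd : ringChar F ∣ p ^ (2 * k) := by
      rw [← hpq, hcard]
      exact dvd_pow_self _ (by positivity)
    exact ((Nat.prime_dvd_prime_iff_eq hrprime hpprime).mp
      (hrprime.dvd_of_dvd_pow hdvd))
  haveI hcharp : CharP F p := by rw [← hring]; infer_instance
  -- Frobenius-additivity of x ↦ x^q0
  have hadd : ∀ x y : F, (x + y) ^ q0 = x ^ q0 + y ^ q0 := by
    intro x y; rw [← hq0k]; exact add_pow_char_pow ..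
  have hsub : ∀ x y : F, (x - y) ^ q0 = x ^ q0 - y ^ q0 := by
    intro x y; rw [← hq0k]; exact sub_pow_char_pow ..
  have hpow2 : ∀ x : F, (x ^ q0) ^ q0 = x := by
    intro x
    rw [← pow_mul, ← pow_two, ← hF]
    exact FiniteField.pow_card x
  have htrace : ∀ a : F, (a ^ q0 + a) ^ q0 = a ^ q0 + a := by
    intro a; rw [hadd, hpow2, add_comm]
  -- the factorization of q0^2 - 1
  have hfact : q0 ^ 2 - 1 = (q0 + 1) * (q0 - 1) := by
    obtain ⟨t, rfl⟩ : ∃ t, q0 = t + 2 := ⟨q0 - 2, by omega⟩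
    have h1 : (t + 2) ^ 2 = ((t + 2 + 1) * (t + 2 - 1)) + 1 := by
      show (t + 2) ^ 2 = (t + 3) * (t + 1) + 1
      ring
    omega
  -- cyclic group of units
  have hcardU : Fintype.card Fˣ = q0 ^ 2 - 1 := by
    rw [Fintype.card_units, hF]
  obtain ⟨g, hg⟩ := IsCyclic.exists_monoid_generator (α := Fˣ)
  have hgz : ∀ y : Fˣ, y ∈ Subgroup.zpowers g := by
    intro y
    obtain ⟨m, hmm⟩ := hg y
    exact ⟨(m : ℤ), by simpa using hmm⟩
  have hog : orderOf g = q0 ^ 2 - 1 := by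
    rw [orderOf_eq_card_of_forall_mem_zpowers hgz, Nat.card_eq_fintype_card, hcardU]
  -- a primitive (q0+1)-th root of unity
  have hdvd1 : (q0 - 1) ∣ (q0 ^ 2 - 1) := ⟨q0 + 1, by rw [hfact]; ring⟩
  have hoζ : orderOf (g ^ (q0 - 1)) = q0 + 1 := by
    rw [orderOf_pow, hog, Nat.gcd_eq_right hdvd1, hfact,
      Nat.mul_div_cancel _ (by omega : 0 < q0 - 1)]
  have hζ : IsPrimitiveRoot ((g ^ (q0 - 1) : Fˣ) : F) (q0 + 1) := by
    rw [IsPrimitiveRoot.coe_units_iff, ← hoζ]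
    exact IsPrimitiveRoot.orderOf _
  -- existence of (q0+1)-th roots of elements of the small field
  have hexists : ∀ c : F, c ≠ 0 → c ^ q0 = c → ∃ α : F, α ^ (q0 + 1) = c := by
    intro c hc hcq
    have hc1 : c ^ (q0 - 1) = 1 := by
      have h1 : c ^ (q0 - 1) * c = 1 * c := by
        rw [one_mul, ← pow_succ, (by omega : q0 - 1 + 1 = q0), hcq]
      exact mul_right_cancel₀ hc h1
    obtain ⟨m, hm⟩ : ∃ m : ℕ, g ^ m = Units.mk0 c hc := hg (Units.mk0 c hc)
    have hker : g ^ (m * (q0 - 1)) = 1 := by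
      rw [pow_mul, hm]
      ext
      push_cast
      simpa using hc1
    have hdvd : (q0 ^ 2 - 1) ∣ m * (q0 - 1) := by
      rw [← hog]; exact orderOf_dvd_of_pow_eq_one hker
    have hdvd2 : (q0 + 1) ∣ m := by
      rw [hfact] at hdvd
      exact (Nat.mul_dvd_mul_iff_right (by omega : 0 < q0 - 1)).mp hdvd
    obtain ⟨j, rfl⟩ := hdvd2
    refine ⟨((g ^ j : Fˣ) : F), ?_⟩
    have h2 : (g ^ j) ^ (q0 + 1) = Units.mk0 c hc := by
      rw [← pow_mul, mul_comm j (q0 + 1), hm]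
    calc ((g ^ j : Fˣ) : F) ^ (q0 + 1) = (((g ^ j) ^ (q0 + 1) : Fˣ) : F) := by push_cast; rfl
      _ = c := by rw [h2]; rfl
  -- Part 1 : M.card = q0
  have hM_le : M.card ≤ q0 := by
    have h := aux_card_roots_le q0 (by omega) (1 : F)
    simp only [one_mul] at h
    rw [hM]; exact h
  have hS_le : (Finset.univ.filter fun x : F => x ^ q0 = x).card ≤ q0 := by
    have h := aux_card_roots_le q0 (by omega) (-1 : F)
    have heq : (Finset.univ.filter fun x : F => x ^ q0 + (-1) * x = 0)
        = (Finset.univ.filter fun x : F => x ^ q0 = x) := by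
      ext x; simp [sub_eq_zero, neg_mul, ← sub_eq_add_neg]
    rwa [heq] at h
  have hfibercard : ∀ a0 : F,
      (Finset.univ.filter fun x : F => x ^ q0 + x = a0 ^ q0 + a0).card = M.card := by
    intro a0
    rw [hM]
    apply Finset.card_nbij' (i := fun x => x - a0) (j := fun x => x + a0)
    · intro x hx
      simp only [mem_coe, mem_filter, mem_univ, true_and] at hx ⊢
      rw [hsub]
      rw [sub_add_sub_comm, hx, sub_self]
    · intro x hx
      simp only [mem_coe, mem_filter, mem_univ, true_and] at hx ⊢
      rw [hadd]
      rw [add_add_add_comm, hx, zero_add]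
    · intro x _; simp
    · intro x _; simp
  have himage_le : (Finset.univ.image fun a : F => a ^ q0 + a).card ≤ q0 := by
    refine le_trans (Finset.card_le_card ?_) hS_le
    intro x hx
    simp only [mem_image, mem_univ, true_and] at hx
    obtain ⟨a, rfl⟩ := hx
    simp [htrace]
  have hcount : q0 ^ 2 = (Finset.univ.image fun a : F => a ^ q0 + a).card * M.card := by
    have h := Finset.card_eq_sum_card_image (fun a : F => a ^ q0 + a) Finset.univ
    rw [Finset.card_univ, hF] at h
    rw [h, Finset.sum_congr rfl (fun c hc => ?_), Finset.sum_const, smul_eq_mul]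
    simp only [mem_image, mem_univ, true_and] at hc
    obtain ⟨a0, rfl⟩ := hc
    exact hfibercard a0
  have hM_ge : q0 ≤ M.card := by
    have h1 : q0 * q0 ≤ q0 * M.card := by
      calc q0 * q0 = q0 ^ 2 := (sq q0).symm
        _ = (Finset.univ.image fun a : F => a ^ q0 + a).card * M.card := hcount
        _ ≤ q0 * M.card := Nat.mul_le_mul_right _ himage_le
    exact Nat.le_of_mul_le_mul_left h1 (by omega)
  have part1 : M.card = q0 := le_antisymm hM_le hM_ge
  -- Part 2
  have part2 : ∀ a : F, a ∉ M →
      (Finset.univ.filter fun b : F => b ^ (q0 + 1) = a ^ q0 + a).card = q0 + 1 := by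
    intro a ha
    have hc : a ^ q0 + a ≠ 0 := by
      rw [hM] at ha; simpa using ha
    obtain ⟨α, hα⟩ := hexists _ hc (htrace a)
    have heq : (Finset.univ.filter fun b : F => b ^ (q0 + 1) = a ^ q0 + a)
        = (Polynomial.nthRoots (q0 + 1) (a ^ q0 + a)).toFinset := by
      ext x
      simp [Polynomial.mem_nthRoots (Nat.succ_pos q0)]
    rw [heq, Multiset.toFinset_card_of_nodup (hζ.nthRoots_nodup hc),
      hζ.card_nthRoots, if_pos ⟨α, hα⟩]
  -- Part 3
  have part3 : ∀ a : F, a ∈ M →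
      (Finset.univ.filter fun b : F => b ^ (q0 + 1) = a ^ q0 + a) = {(0 : F)} := by
    intro a ha
    have hc : a ^ q0 + a = 0 := by
      rw [hM] at ha; simpa using ha
    ext b
    simp [hc, pow_eq_zero_iff (by omega : q0 + 1 ≠ 0)]
  -- Part 4
  refine ⟨part1, part2, part3, ?_⟩
  rw [Finset.card_eq_sum_card_fiberwise
    (f := Prod.fst) (t := (Finset.univ : Finset F)) (fun x _ => mem_univ _)]
  have hterm : ∀ a : F,
      ((Finset.univ.filter fun p : F × F =>
        p.1 ^ q0 + p.1 = p.2 ^ (q0 + 1) ∧ p.1 ∉ M).filter fun p => p.1 = a).card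
      = if a ∈ M then 0 else q0 + 1 := by
    intro a
    by_cases haM : a ∈ M
    · rw [if_pos haM, Finset.card_eq_zero, Finset.filter_eq_empty_iff]
      intro p hp
      simp only [mem_filter, mem_univ, true_and] at hp
      rintro rfl
      exact hp.2 haM
    · rw [if_neg haM]
      have hbij : ((Finset.univ.filter fun p : F × F =>
            p.1 ^ q0 + p.1 = p.2 ^ (q0 + 1) ∧ p.1 ∉ M).filter fun p => p.1 = a).card
          = (Finset.univ.filter fun b : F => b ^ (q0 + 1) = a ^ q0 + a).card := by
        refine Finset.card_nbij' (i := fun p => p.2) (j := fun b => (a, b)) ?_ ?_ ?_ ?_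
        · intro x hx
          simp only [mem_coe, mem_filter, mem_univ, true_and] at hx ⊢
          obtain ⟨⟨h1, _⟩, h3⟩ := hx
          rw [← h3, h1]
        · intro b hb
          simp only [mem_coe, mem_filter, mem_univ, true_and] at hb ⊢
          exact ⟨⟨hb.symm, haM⟩, trivial⟩
        · intro x hx
          simp only [mem_coe, mem_filter, mem_univ, true_and] at hx
          exact Prod.ext hx.2.symm rfl
        · intro b _; rfl
      rw [hbij, part2 a haM]
  calc ∑ a : F, ((Finset.univ.filter fun p : F × F =>
        p.1 ^ q0 + p.1 = p.2 ^ (q0 + 1) ∧ p.1 ∉ M).filter fun p => p.1 = a).card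
      = ∑ a : F, if a ∈ M then 0 else q0 + 1 :=
        Finset.sum_congr rfl (fun a _ => hterm a)
    _ = (Finset.univ.filter fun a : F => a ∉ M).card * (q0 + 1) := by
        rw [Finset.sum_ite, Finset.sum_const, Finset.sum_const]
        simp [mul_comm]
    _ = (q0 ^ 2 - q0) * (q0 + 1) := by
        congr 1
        have h := Finset.card_filter_add_card_filter_not
          (s := (Finset.univ : Finset F)) (p := fun a : F => a ∈ M)
        have hfm : (Finset.univ.filter fun a : F => a ∈ M) = M := by
          ext x; simp
        rw [hfm, Finset.card_univ, hF, part1] at h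
        omega
    _ = q0 ^ 3 - q0 := by
        rw [Nat.sub_mul]
        have e1 : q0 ^ 2 * (q0 + 1) = q0 ^ 3 + q0 ^ 2 := by ring
        have e2 : q0 * (q0 + 1) = q0 ^ 2 + q0 := by ring
        rw [e1, e2]
        omega
end

section
/- Let q0 be a prime power, q = q0², and let t ≥ 1 be an integer with t·q0 + (q0-2)(q0+1) < q0³. Let V ⊆ 𝔽_q[x,y] be the 𝔽_q-linear span of the monomials x^i y^j for 0 ≤ i ≤ q0-2 and 0 ≤ j ≤ t. Then the evaluation map V → 𝔽_q^H, F ↦ (F(a,b))_{(a,b) ∈ H}, where H is the set of affine points of the Hermitian curve, is injective, and hence its image is a linear code of length q0³ and dimension (t+1)(q0-1). -/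
noncomputable section

open Polynomial Finset

open Polynomial Finset

lemma monic_XqX {F : Type*} [Field F] (q0 : ℕ) (h2 : 2 ≤ q0) :
    (Polynomial.X ^ q0 + Polynomial.X : Polynomial F).Monic := by
  apply Polynomial.monic_X_pow_add
  rw [Polynomial.degree_X]
  exact_mod_cast h2

lemma natDegree_XqX {F : Type*} [Field F] (q0 : ℕ) (h2 : 2 ≤ q0) :
    (Polynomial.X ^ q0 + Polynomial.X : Polynomial F).natDegree = q0 := by
  have hd : (Polynomial.X ^ q0 + Polynomial.X : Polynomial F).degree = q0 := by
    rw [Polynomial.degree_add_eq_left_of_degree_lt, Polynomial.degree_X_pow]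
    rw [Polynomial.degree_X, Polynomial.degree_X_pow]
    exact_mod_cast h2
  exact Polynomial.natDegree_eq_of_degree_eq_some hd

/-- If `∑ (X^q0+X)^u * g u = 0` with all `g u` of degree `≤ q0 - 2`, then all `g u = 0`. -/
lemma forall_eq_zero_of_sum_eq_zero {F : Type*} [Field F] (q0 : ℕ) (h2 : 2 ≤ q0)
    (g : ℕ → Polynomial F) (hdeg : ∀ u, (g u).natDegree ≤ q0 - 2) (n : ℕ)
    (hsum : ∑ u ∈ Finset.range n, (Polynomial.X ^ q0 + Polynomial.X) ^ u * g u = 0) :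
    ∀ u < n, g u = 0 := by
  classical
  by_contra hcon
  push_neg at hcon
  obtain ⟨u₀, hu₀n, hu₀⟩ := hcon
  set s : Finset ℕ := (Finset.range n).filter (fun u => g u ≠ 0) with hs
  have hne : s.Nonempty := ⟨u₀, by simp [hs, hu₀, Finset.mem_range.2 hu₀n]⟩
  set M := s.max' hne with hM
  have hMs : M ∈ s := s.max'_mem hne
  have hgM : g M ≠ 0 := (Finset.mem_filter.1 hMs).2
  have hmonic := monic_XqX (F := F) q0 h2
  have hnd := natDegree_XqX (F := F) q0 h2
  have hsum2 : ∑ u ∈ s, (Polynomial.X ^ q0 + Polynomial.X) ^ u * g u = 0 := by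
    rw [← hsum]
    apply Finset.sum_subset (Finset.filter_subset _ _)
    intro u _ hus
    have : g u = 0 := by
      by_contra h
      exact hus (Finset.mem_filter.2 ⟨by assumption, h⟩)
    rw [this, mul_zero]
  set top := (Polynomial.X ^ q0 + Polynomial.X : Polynomial F) ^ M * g M with htop
  have htopne : top ≠ 0 := mul_ne_zero ((hmonic.pow _).ne_zero) hgM
  have htopnd : top.natDegree = M * q0 + (g M).natDegree := by
    rw [htop, Polynomial.natDegree_mul ((hmonic.pow M).ne_zero) hgM, Polynomial.natDegree_pow, hnd]
  have hrest : (∑ u ∈ s.erase M, (Polynomial.X ^ q0 + Polynomial.X) ^ u * g u).degree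
      < top.degree := by
    refine lt_of_le_of_lt (Polynomial.degree_sum_le _ _) ?_
    rw [Finset.sup_lt_iff]
    · intro u hu
      have hus : u ∈ s := Finset.mem_of_mem_erase hu
      have huM : u < M := lt_of_le_of_ne (s.le_max' u hus) (Finset.ne_of_mem_erase hu)
      have hbound : ((Polynomial.X ^ q0 + Polynomial.X : Polynomial F) ^ u * g u).natDegree
          ≤ u * q0 + (q0 - 2) :=
        le_trans (Polynomial.natDegree_mul_le) (add_le_add
          (le_trans (Polynomial.natDegree_pow_le) (by rw [hnd])) (hdeg u))
      have hlt : u * q0 + (q0 - 2) < M * q0 + (g M).natDegree := by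
        have h1 : u * q0 + q0 ≤ M * q0 := by
          calc u * q0 + q0 = (u + 1) * q0 := by ring
            _ ≤ M * q0 := Nat.mul_le_mul_right q0 huM
        have h3 : q0 - 2 < q0 := by omega
        omega
      calc ((Polynomial.X ^ q0 + Polynomial.X : Polynomial F) ^ u * g u).degree
          ≤ (((Polynomial.X ^ q0 + Polynomial.X : Polynomial F) ^ u * g u).natDegree : WithBot ℕ) :=
            Polynomial.degree_le_natDegree
        _ ≤ ((u * q0 + (q0 - 2) : ℕ) : WithBot ℕ) := by exact_mod_cast hbound
        _ < ((M * q0 + (g M).natDegree : ℕ) : WithBot ℕ) := by exact_mod_cast hlt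
        _ = top.degree := by rw [Polynomial.degree_eq_natDegree htopne, htopnd]
    · rw [bot_lt_iff_ne_bot]
      rw [Ne, Polynomial.degree_eq_bot]
      exact htopne
  have hadd : top + ∑ u ∈ s.erase M, (Polynomial.X ^ q0 + Polynomial.X) ^ u * g u = 0 := by
    rw [← hsum2, htop]
    exact Finset.add_sum_erase s (fun u => (Polynomial.X ^ q0 + Polynomial.X) ^ u * g u) hMs
  have : (0 : Polynomial F).degree = top.degree := by
    rw [← hadd]
    exact Polynomial.degree_add_eq_left_of_degree_lt hrest
  rw [Polynomial.degree_zero, eq_comm, Polynomial.degree_eq_bot] at this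
  exact htopne this

open Polynomial Finset

/-- A finset of roots of a nonzero polynomial has card at most the natDegree. -/
lemma card_le_natDegree_of_roots {F : Type*} [Field F] (s : Finset F) (g : Polynomial F)
    (hg : g ≠ 0) (h : ∀ x ∈ s, g.eval x = 0) : s.card ≤ g.natDegree := by
  classical
  have hsub : s ⊆ g.roots.toFinset := fun x hx =>
    Multiset.mem_toFinset.2 ((Polynomial.mem_roots hg).2 (h x hx))
  calc s.card ≤ g.roots.toFinset.card := Finset.card_le_card hsub
    _ ≤ Multiset.card g.roots := Multiset.toFinset_card_le _
    _ ≤ g.natDegree := Polynomial.card_roots' g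

lemma eq_zero_of_eval_zero' {F : Type*} [Field F] [Fintype F] [DecidableEq F]
    (g : Polynomial F) (hdeg : g.natDegree < Fintype.card F) (h : ∀ x : F, g.eval x = 0) :
    g = 0 := by
  by_contra hg
  have := card_le_natDegree_of_roots Finset.univ g hg (fun x _ => h x)
  rw [Finset.card_univ] at this
  omega

/-- Sum rigidity: if a sum of `≤ m` terms each `≤ k` equals `k * m`, every term is `k`. -/
lemma all_eq_of_sum_eq {α : Type*} {s : Finset α} (g : α → ℕ) (k m : ℕ)
    (hcard : s.card ≤ m) (hle : ∀ x ∈ s, g x ≤ k) (hsum : ∑ x ∈ s, g x = k * m) :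
    ∀ x ∈ s, g x = k := by
  have h2 : ∑ _x ∈ s, k = s.card * k := by simp [Finset.sum_const, smul_eq_mul]
  have h1 : ∑ x ∈ s, g x = ∑ _x ∈ s, k := by
    refine le_antisymm (Finset.sum_le_sum hle) ?_
    rw [h2, hsum]
    calc s.card * k ≤ m * k := Nat.mul_le_mul_right k hcard
      _ = k * m := Nat.mul_comm m k
  exact fun x hx => (Finset.sum_eq_sum_iff_of_le hle).1 h1 x hx

/-- Coefficient of `∑ C (g v) * X^v`. -/
lemma coeff_sum_C_mul_X_pow {F : Type*} [Field F] (n : ℕ) (g : ℕ → F) (w : ℕ) (hw : w < n) :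
    (∑ v ∈ Finset.range n, Polynomial.C (g v) * Polynomial.X ^ v).coeff w = g w := by
  rw [Polynomial.finset_sum_coeff]
  have : ∀ v ∈ Finset.range n, (Polynomial.C (g v) * Polynomial.X ^ v).coeff w
      = if w = v then g v else 0 := by
    intro v _
    rw [Polynomial.coeff_C_mul, Polynomial.coeff_X_pow, mul_ite, mul_one, mul_zero]
  rw [Finset.sum_congr rfl this, Finset.sum_ite_eq (Finset.range n) w g,
    if_pos (Finset.mem_range.2 hw)]
open Polynomial Finset

-- arithmetic helpers
lemma arith1 (q0 t u : ℕ) (h2 : 2 ≤ q0) (hlt : t * q0 + (q0 - 2) * (q0 + 1) < q0 ^ 3)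
    (hu : (q0 + 1) * u ≤ t) : u * q0 + (q0 - 2) < q0 * q0 := by
  have h3 : (q0 + 1) * (u * q0 + (q0 - 2)) < q0 ^ 3 := by
    calc (q0 + 1) * (u * q0 + (q0 - 2)) = ((q0 + 1) * u) * q0 + (q0 - 2) * (q0 + 1) := by ring
      _ ≤ t * q0 + (q0 - 2) * (q0 + 1) := by
          exact Nat.add_le_add_right (Nat.mul_le_mul_right q0 hu) _
      _ < q0 ^ 3 := hlt
  have h4 : q0 ^ 3 ≤ (q0 + 1) * (q0 * q0) := by
    calc q0 ^ 3 = q0 * (q0 * q0) := by ring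
      _ ≤ (q0 + 1) * (q0 * q0) := Nat.mul_le_mul_right _ (by omega)
  exact Nat.lt_of_mul_lt_mul_left (h3.trans_le h4)

lemma arith2 (q0 t u v : ℕ) (h2 : 2 ≤ q0) (hlt : t * q0 + (q0 - 2) * (q0 + 1) < q0 ^ 3)
    (hv : 1 ≤ v) (hu : (q0 + 1) * u + v ≤ t) : q0 + (u * q0 + (q0 - 2)) < q0 * q0 := by
  have hu1 : (q0 + 1) * u + 1 ≤ t := by omega
  have h3 : (q0 + 1) * (q0 + (u * q0 + (q0 - 2))) < q0 ^ 3 + q0 * q0 := by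
    calc (q0 + 1) * (q0 + (u * q0 + (q0 - 2)))
        = (((q0 + 1) * u + 1) * q0) + ((q0 - 2) * (q0 + 1) + q0 * q0) := by ring
      _ ≤ t * q0 + ((q0 - 2) * (q0 + 1) + q0 * q0) :=
          Nat.add_le_add_right (Nat.mul_le_mul_right q0 hu1) _
      _ = (t * q0 + (q0 - 2) * (q0 + 1)) + q0 * q0 := by ring
      _ < q0 ^ 3 + q0 * q0 := Nat.add_lt_add_right hlt _
  have h4 : q0 ^ 3 + q0 * q0 = (q0 + 1) * (q0 * q0) := by ring
  rw [h4] at h3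
  exact Nat.lt_of_mul_lt_mul_left h3

/-- Core vanishing lemma. -/
lemma core_vanish (q0 t : ℕ) (h2 : 2 ≤ q0) (hlt : t * q0 + (q0 - 2) * (q0 + 1) < q0 ^ 3)
    {F : Type*} [Field F] [Fintype F] [DecidableEq F] (hF : Fintype.card F = q0 ^ 2)
    (hfib : ∀ a : F, a ^ q0 + a ≠ 0 →
      q0 + 1 ≤ (Finset.univ.filter fun b : F => b ^ (q0 + 1) = a ^ q0 + a).card)
    (f : ℕ → Polynomial F)
    (hdeg : ∀ j, (f j).natDegree ≤ q0 - 2)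
    (hsupp : ∀ j, t < j → f j = 0)
    (hz : ∀ a b : F, b ^ (q0 + 1) = a ^ q0 + a →
      ∑ j ∈ Finset.range (t + 1), (f j).eval a * b ^ j = 0) :
    ∀ j, f j = 0 := by
  classical
  have hcard : Fintype.card F = q0 * q0 := by rw [hF]; ring
  set P : ℕ → Polynomial F := fun v =>
    ∑ u ∈ Finset.range (t + 1), (Polynomial.X ^ q0 + Polynomial.X) ^ u * f ((q0 + 1) * u + v)
    with hP
  have hPeval : ∀ (v : ℕ) (a : F), (P v).eval a =
      ∑ u ∈ Finset.range (t + 1), (a ^ q0 + a) ^ u * (f ((q0 + 1) * u + v)).eval a := by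
    intro v a
    rw [hP]
    rw [Polynomial.eval_finset_sum]
    refine Finset.sum_congr rfl fun u _ => ?_
    simp [Polynomial.eval_mul, Polynomial.eval_pow]
  -- Step 1: vanishing of P v at points a with trace ≠ 0
  have step1 : ∀ (a : F), a ^ q0 + a ≠ 0 → ∀ v < q0 + 1, (P v).eval a = 0 := by
    intro a ha v hv
    set R : Polynomial F :=
      ∑ v' ∈ Finset.range (q0 + 1), Polynomial.C ((P v').eval a) * Polynomial.X ^ v' with hR
    have hRroots : ∀ b : F, b ^ (q0 + 1) = a ^ q0 + a → R.eval b = 0 := by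
      intro b hb
      have h1 : R.eval b = ∑ v' ∈ Finset.range (q0 + 1), (P v').eval a * b ^ v' := by
        rw [hR, Polynomial.eval_finset_sum]
        refine Finset.sum_congr rfl fun v' _ => by simp
      have h2 : ∀ v' u : ℕ, (a ^ q0 + a) ^ u * (f ((q0 + 1) * u + v')).eval a * b ^ v'
          = (f ((q0 + 1) * u + v')).eval a * b ^ ((q0 + 1) * u + v') := by
        intro v' u
        have hpow : b ^ ((q0 + 1) * u + v') = (b ^ (q0 + 1)) ^ u * b ^ v' := by
          rw [pow_add, pow_mul]
        rw [hpow, hb]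
        ring
      have h3 : R.eval b = ∑ x ∈ Finset.range (t + 1) ×ˢ Finset.range (q0 + 1),
          (f ((q0 + 1) * x.1 + x.2)).eval a * b ^ ((q0 + 1) * x.1 + x.2) := by
        rw [h1, Finset.sum_product_right]
        refine Finset.sum_congr rfl fun v' _ => ?_
        rw [hPeval, Finset.sum_mul]
        exact Finset.sum_congr rfl fun u _ => h2 v' u
      have h4 : R.eval b = ∑ j ∈ Finset.range ((t + 1) * (q0 + 1)),
          (f j).eval a * b ^ j := by
        rw [h3]
        refine Finset.sum_nbij' (fun x => (q0 + 1) * x.1 + x.2)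
          (fun j => (j / (q0 + 1), j % (q0 + 1))) ?_ ?_ ?_ ?_ ?_
        · rintro ⟨u, v'⟩ hx
          rw [Finset.mem_product, Finset.mem_range, Finset.mem_range] at hx
          rw [Finset.mem_range]
          calc (q0 + 1) * u + v' < (q0 + 1) * u + (q0 + 1) := by omega
            _ = (u + 1) * (q0 + 1) := by ring
            _ ≤ (t + 1) * (q0 + 1) := Nat.mul_le_mul_right _ (by omega)
        · intro j hj
          rw [Finset.mem_range] at hj
          rw [Finset.mem_product, Finset.mem_range, Finset.mem_range]
          constructor
          · rw [Nat.div_lt_iff_lt_mul (by omega : 0 < q0 + 1)]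
            calc j < (t + 1) * (q0 + 1) := hj
              _ = (q0 + 1) * (t + 1) := by ring
              _ = (t + 1) * (q0 + 1) := by ring
          · exact Nat.mod_lt _ (by omega)
        · rintro ⟨u, v'⟩ hx
          rw [Finset.mem_product, Finset.mem_range, Finset.mem_range] at hx
          have h5 : ((q0 + 1) * u + v') / (q0 + 1) = u := by
            rw [Nat.mul_add_div (by omega : 0 < q0 + 1), Nat.div_eq_of_lt hx.2, add_zero]
          have h6 : ((q0 + 1) * u + v') % (q0 + 1) = v' := by
            rw [Nat.mul_add_mod, Nat.mod_eq_of_lt hx.2]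
          simp [h5, h6]
        · intro j _
          simp [Nat.div_add_mod]
        · intro x _
          rfl
      have h7 : R.eval b = ∑ j ∈ Finset.range (t + 1), (f j).eval a * b ^ j := by
        rw [h4]
        symm
        apply Finset.sum_subset
        · apply Finset.range_subset_range.2
          calc t + 1 = (t + 1) * 1 := by ring
            _ ≤ (t + 1) * (q0 + 1) := Nat.mul_le_mul_left _ (by omega)
        · intro j _ hj
          rw [Finset.mem_range, not_lt] at hj
          rw [hsupp j (by omega), Polynomial.eval_zero, zero_mul]
      rw [h7]
      exact hz a b hb
    have hR0 : R = 0 := by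
      by_contra hRne
      have h8 : (Finset.univ.filter fun b : F => b ^ (q0 + 1) = a ^ q0 + a).card
          ≤ R.natDegree := by
        apply card_le_natDegree_of_roots _ _ hRne
        intro b hb
        exact hRroots b (Finset.mem_filter.1 hb).2
      have h9 : R.natDegree ≤ q0 := by
        apply Polynomial.natDegree_sum_le_of_forall_le
        intro v' hv'
        rw [Finset.mem_range] at hv'
        calc (Polynomial.C ((P v').eval a) * Polynomial.X ^ v').natDegree
            ≤ v' := by
              refine le_trans (Polynomial.natDegree_mul_le) ?_
              simp [Polynomial.natDegree_C, Polynomial.natDegree_X_pow]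
          _ ≤ q0 := by omega
      have := hfib a ha
      omega
    have : (P v).eval a = R.coeff v := by
      rw [hR, coeff_sum_C_mul_X_pow (q0 + 1) (fun v' => (P v').eval a) v hv]
    rw [this, hR0, Polynomial.coeff_zero]
  -- Step 2: P 0 vanishes at points with trace zero as well
  have step2 : ∀ a : F, a ^ q0 + a = 0 → (P 0).eval a = 0 := by
    intro a ha
    have hz0 : (f 0).eval a = 0 := by
      have := hz a 0 (by rw [ha, zero_pow (by omega : q0 + 1 ≠ 0)])
      rw [Finset.sum_eq_single 0] at this
      · simpa using this
      · intro j _ hj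
        rw [zero_pow hj, mul_zero]
      · intro h; exact absurd (Finset.mem_range.2 (by omega)) h
    rw [hPeval, Finset.sum_eq_single 0]
    · simpa using hz0
    · intro u _ hu
      rw [ha, zero_pow hu, zero_mul]
    · intro h; exact absurd (Finset.mem_range.2 (by omega)) h
  -- degree bounds
  have hndP : ∀ v, 1 ≤ v →
      ((Polynomial.X ^ q0 + Polynomial.X) * P v).natDegree < q0 * q0 := by
    intro v hv
    have hrw : (Polynomial.X ^ q0 + Polynomial.X) * P v = ∑ u ∈ Finset.range (t + 1),
        (Polynomial.X ^ q0 + Polynomial.X) * ((Polynomial.X ^ q0 + Polynomial.X) ^ u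
          * f ((q0 + 1) * u + v)) := by
      rw [hP, Finset.mul_sum]
    rw [hrw]
    have hq0pos : 0 < q0 * q0 := by positivity
    refine lt_of_le_of_lt (Polynomial.natDegree_sum_le_of_forall_le _ _ ?_)
      (Nat.sub_lt hq0pos one_pos)
    intro u _
    by_cases hf : f ((q0 + 1) * u + v) = 0
    · rw [hf, mul_zero, mul_zero, Polynomial.natDegree_zero]; omega
    · have hut : (q0 + 1) * u + v ≤ t := by
        by_contra h
        exact hf (hsupp _ (by omega))
      have harith := arith2 q0 t u v h2 hlt hv hut
      apply Nat.le_pred_of_lt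
      calc ((Polynomial.X ^ q0 + Polynomial.X) * ((Polynomial.X ^ q0 + Polynomial.X) ^ u
            * f ((q0 + 1) * u + v))).natDegree
          ≤ (Polynomial.X ^ q0 + Polynomial.X : Polynomial F).natDegree
            + ((Polynomial.X ^ q0 + Polynomial.X) ^ u * f ((q0 + 1) * u + v)).natDegree :=
            Polynomial.natDegree_mul_le
        _ ≤ q0 + (u * q0 + (q0 - 2)) := by
            refine add_le_add (le_of_eq (natDegree_XqX q0 h2)) ?_
            refine le_trans Polynomial.natDegree_mul_le (add_le_add ?_ (hdeg _))
            refine le_trans Polynomial.natDegree_pow_le ?_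
            rw [natDegree_XqX q0 h2]
        _ < q0 * q0 := harith
  have hndP0 : (P 0).natDegree < q0 * q0 := by
    rw [hP]
    have hq0pos : 0 < q0 * q0 := by positivity
    refine lt_of_le_of_lt (Polynomial.natDegree_sum_le_of_forall_le _ _ ?_)
      (Nat.sub_lt hq0pos one_pos)
    intro u _
    by_cases hf : f ((q0 + 1) * u + 0) = 0
    · rw [hf, mul_zero, Polynomial.natDegree_zero]; omega
    · have hut : (q0 + 1) * u ≤ t := by
        by_contra h
        exact hf (hsupp _ (by omega))
      have harith := arith1 q0 t u h2 hlt hut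
      apply Nat.le_pred_of_lt
      calc ((Polynomial.X ^ q0 + Polynomial.X) ^ u * f ((q0 + 1) * u + 0)).natDegree
          ≤ u * q0 + (q0 - 2) := by
            refine le_trans Polynomial.natDegree_mul_le (add_le_add ?_ (hdeg _))
            refine le_trans Polynomial.natDegree_pow_le ?_
            rw [natDegree_XqX q0 h2]
        _ < q0 * q0 := harith
  -- All P v = 0
  have hPzero : ∀ v < q0 + 1, P v = 0 := by
    intro v hv
    rcases Nat.eq_zero_or_pos v with rfl | hvpos
    · apply eq_zero_of_eval_zero' _ (by rw [hcard]; exact hndP0)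
      intro a
      by_cases ha : a ^ q0 + a = 0
      · exact step2 a ha
      · exact step1 a ha 0 (by omega)
    · have hQ : (Polynomial.X ^ q0 + Polynomial.X) * P v = 0 := by
        apply eq_zero_of_eval_zero' _ (by rw [hcard]; exact hndP v hvpos)
        intro a
        rw [Polynomial.eval_mul]
        by_cases ha : a ^ q0 + a = 0
        · simp [ha]
        · rw [step1 a ha v hv, mul_zero]
      rcases mul_eq_zero.1 hQ with h | h
      · exact absurd h (monic_XqX q0 h2).ne_zero
      · exact h
  -- Extract f j = 0
  intro j
  rcases le_or_gt j t with hj | hj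
  · have hv : j % (q0 + 1) < q0 + 1 := Nat.mod_lt _ (by omega)
    have := forall_eq_zero_of_sum_eq_zero q0 h2
      (fun u => f ((q0 + 1) * u + j % (q0 + 1))) (fun u => hdeg _) (t + 1)
      (hPzero (j % (q0 + 1)) hv) (j / (q0 + 1))
      (by
        have : j / (q0 + 1) ≤ j := Nat.div_le_self _ _
        omega)
    have h9 : (q0 + 1) * (j / (q0 + 1)) + j % (q0 + 1) = j := Nat.div_add_mod j (q0 + 1)
    simp only [h9] at this
    exact this
  · exact hsupp j hj
open Polynomial Finset

lemma nat_id1 (q0 : ℕ) (h2 : 2 ≤ q0) : (q0 + 1) * (q0 - 1) = q0 * q0 - 1 := by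
  obtain ⟨m, rfl⟩ : ∃ m, q0 = m + 2 := ⟨q0 - 2, by omega⟩
  have h1 : (m + 2 + 1) * (m + 2 - 1) + 1 = (m + 2) * (m + 2) := by
    have : m + 2 - 1 = m + 1 := rfl
    rw [this]; ring
  omega

lemma hermitian_counts (q0 : ℕ) (h2 : 2 ≤ q0) {F : Type*} [Field F] [Fintype F] [DecidableEq F]
    (hF : Fintype.card F = q0 ^ 2)
    (hfrob : ∀ x y : F, (x + y) ^ q0 = x ^ q0 + y ^ q0) :
    (∀ b : F, (Finset.univ.filter fun a : F => a ^ q0 + a = b ^ (q0 + 1)).card = q0) ∧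
    (∀ a : F, a ^ q0 + a ≠ 0 →
      (Finset.univ.filter fun b : F => b ^ (q0 + 1) = a ^ q0 + a).card = q0 + 1) := by
  classical
  have hcard : Fintype.card F = q0 * q0 := by rw [hF]; ring
  have hpc : ∀ x : F, x ^ (q0 * q0) = x := by
    intro x
    have h := FiniteField.pow_card x
    rwa [hcard] at h
  have htr : ∀ a : F, (a ^ q0 + a) ^ q0 = a ^ q0 + a := by
    intro a
    rw [hfrob (a ^ q0) a, ← pow_mul, hpc]
    exact add_comm _ _
  have hnm : ∀ b : F, (b ^ (q0 + 1)) ^ q0 = b ^ (q0 + 1) := by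
    intro b
    calc (b ^ (q0 + 1)) ^ q0 = b ^ ((q0 + 1) * q0) := (pow_mul b (q0 + 1) q0).symm
      _ = b ^ (q0 * q0 + q0) := by ring_nf
      _ = b ^ (q0 * q0) * b ^ q0 := pow_add b _ _
      _ = b * b ^ q0 := by rw [hpc]
      _ = b ^ (q0 + 1) := by rw [pow_succ]; ring
  set T : Finset F := Finset.univ.filter fun d : F => d ^ q0 = d with hT
  have hTcard : T.card ≤ q0 := by
    have hmon : (Polynomial.X ^ q0 - Polynomial.X : Polynomial F).Monic := by
      rw [sub_eq_add_neg]
      apply Polynomial.monic_X_pow_add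
      rw [Polynomial.degree_neg, Polynomial.degree_X]
      exact_mod_cast h2
    have hnd : (Polynomial.X ^ q0 - Polynomial.X : Polynomial F).natDegree ≤ q0 := by
      refine le_trans (Polynomial.natDegree_sub_le _ _) ?_
      simp [Polynomial.natDegree_X_pow, Polynomial.natDegree_X]
      omega
    refine le_trans (card_le_natDegree_of_roots T _ hmon.ne_zero ?_) hnd
    intro x hx
    rw [hT, Finset.mem_filter] at hx
    simp [hx.2]
  have hfibtr_le : ∀ y : F, (Finset.univ.filter fun a : F => a ^ q0 + a = y).card ≤ q0 := by
    intro y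
    have hmon : (Polynomial.X ^ q0 + (Polynomial.X - Polynomial.C y) : Polynomial F).Monic := by
      apply Polynomial.monic_X_pow_add
      refine lt_of_le_of_lt (Polynomial.degree_X_sub_C_le y) ?_
      exact_mod_cast h2
    have hnd : (Polynomial.X ^ q0 + (Polynomial.X - Polynomial.C y) : Polynomial F).natDegree
        ≤ q0 := by
      refine le_trans (Polynomial.natDegree_add_le _ _) ?_
      simp only [Polynomial.natDegree_X_pow, max_le_iff, le_refl, true_and]
      refine le_trans (Polynomial.natDegree_sub_le _ _) ?_
      simp [Polynomial.natDegree_X, Polynomial.natDegree_C]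
      omega
    refine le_trans (card_le_natDegree_of_roots _ _ hmon.ne_zero ?_) hnd
    intro x hx
    rw [Finset.mem_filter] at hx
    have h := hx.2
    simp only [Polynomial.eval_add, Polynomial.eval_sub, Polynomial.eval_pow,
      Polynomial.eval_X, Polynomial.eval_C]
    rw [← add_sub_assoc, h, sub_self]
  have hfibpow_le : ∀ c : F,
      (Finset.univ.filter fun b : F => b ^ (q0 + 1) = c).card ≤ q0 + 1 := by
    intro c
    have hmon : (Polynomial.X ^ (q0 + 1) + -Polynomial.C c : Polynomial F).Monic := by
      apply Polynomial.monic_X_pow_add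
      rw [Polynomial.degree_neg]
      refine lt_of_le_of_lt (Polynomial.degree_C_le) ?_
      exact_mod_cast Nat.succ_pos q0
    have hnd : (Polynomial.X ^ (q0 + 1) + -Polynomial.C c : Polynomial F).natDegree
        ≤ q0 + 1 := by
      refine le_trans (Polynomial.natDegree_add_le _ _) ?_
      simp [Polynomial.natDegree_X_pow, Polynomial.natDegree_C]
    refine le_trans (card_le_natDegree_of_roots _ _ hmon.ne_zero ?_) hnd
    intro x hx
    rw [Finset.mem_filter] at hx
    simp [hx.2]
  -- trace fibers
  have hsumtr : ∑ d ∈ T, (Finset.univ.filter fun a : F => a ^ q0 + a = d).card = q0 * q0 := by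
    have h := Finset.card_eq_sum_card_fiberwise (s := (Finset.univ : Finset F)) (t := T)
      (f := fun a => a ^ q0 + a)
      (fun a _ => by rw [hT, Finset.mem_coe, Finset.mem_filter]; exact ⟨Finset.mem_univ _, htr a⟩)
    rw [Finset.card_univ, hcard] at h
    exact h.symm
  have hfibtr : ∀ d ∈ T, (Finset.univ.filter fun a : F => a ^ q0 + a = d).card = q0 :=
    all_eq_of_sum_eq _ q0 q0 hTcard (fun y _ => hfibtr_le y) (by rw [hsumtr])
  -- norm fibers
  have h0T : (0 : F) ∈ T := by
    rw [hT, Finset.mem_filter]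
    exact ⟨Finset.mem_univ _, by rw [zero_pow (by omega : q0 ≠ 0)]⟩
  have hfib0 : (Finset.univ.filter fun b : F => b ^ (q0 + 1) = 0).card = 1 := by
    have : (Finset.univ.filter fun b : F => b ^ (q0 + 1) = 0) = {0} := by
      ext b
      simp [pow_eq_zero_iff (by omega : q0 + 1 ≠ 0)]
    rw [this, Finset.card_singleton]
  have hsumpow : ∑ c ∈ T, (Finset.univ.filter fun b : F => b ^ (q0 + 1) = c).card
      = q0 * q0 := by
    have h := Finset.card_eq_sum_card_fiberwise (s := (Finset.univ : Finset F)) (t := T)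
      (f := fun b => b ^ (q0 + 1))
      (fun b _ => by rw [hT, Finset.mem_coe, Finset.mem_filter]; exact ⟨Finset.mem_univ _, hnm b⟩)
    rw [Finset.card_univ, hcard] at h
    exact h.symm
  have hsum_erase : ∑ c ∈ T.erase 0,
      (Finset.univ.filter fun b : F => b ^ (q0 + 1) = c).card = q0 * q0 - 1 := by
    have h := Finset.add_sum_erase T
      (fun c => (Finset.univ.filter fun b : F => b ^ (q0 + 1) = c).card) h0T
    simp only [hsumpow, hfib0] at h
    omega
  have hfibpow : ∀ c ∈ T.erase 0,
      (Finset.univ.filter fun b : F => b ^ (q0 + 1) = c).card = q0 + 1 := by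
    apply all_eq_of_sum_eq _ (q0 + 1) (q0 - 1)
    · rw [Finset.card_erase_of_mem h0T]
      omega
    · exact fun c _ => hfibpow_le c
    · rw [hsum_erase, nat_id1 q0 h2]
  refine ⟨?_, ?_⟩
  · intro b
    apply hfibtr
    rw [hT, Finset.mem_filter]
    exact ⟨Finset.mem_univ _, hnm b⟩
  · intro a ha
    apply hfibpow
    rw [Finset.mem_erase]
    exact ⟨ha, by rw [hT, Finset.mem_filter]; exact ⟨Finset.mem_univ _, htr a⟩⟩

/-- The evaluation map sending a bivariate polynomial `G ∈ F[x,y]` to the vector of its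
values `(G(a,b))_{(a,b) ∈ S}`. -/
def evalMv {F : Type*} [CommSemiring F] (S : Finset (F × F)) :
    MvPolynomial (Fin 2) F →ₗ[F] (S → F) :=
  LinearMap.pi fun p => (MvPolynomial.aeval ![(p : F × F).1, (p : F × F).2]).toLinearMap

/-- The evaluation map of `V = span{x^i y^j : i ≤ q0-2, j ≤ t}` at the affine points `H`
of the Hermitian curve is injective; hence its image is a linear code of length `q0³`
and dimension `(t+1)(q0-1)`. -/
theorem hermitian_lrc_dimension
    (q0 t : ℕ) (hq0 : IsPrimePow q0) (ht : 1 ≤ t)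
    (hlt : t * q0 + (q0 - 2) * (q0 + 1) < q0 ^ 3)
    (F : Type*) [Field F] [Fintype F] [DecidableEq F] (hF : Fintype.card F = q0 ^ 2)
    (H : Finset (F × F))
    (hH : H = Finset.univ.filter fun p : F × F => p.1 ^ q0 + p.1 = p.2 ^ (q0 + 1))
    (V : Submodule F (MvPolynomial (Fin 2) F))
    (hV : V = Submodule.span F
      {p : MvPolynomial (Fin 2) F | ∃ i j : ℕ, i ≤ q0 - 2 ∧ j ≤ t ∧
        p = MvPolynomial.X 0 ^ i * MvPolynomial.X 1 ^ j}) :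
    Set.InjOn (⇑(evalMv H)) (V : Set (MvPolynomial (Fin 2) F)) ∧
    H.card = q0 ^ 3 ∧
    Module.finrank F (Submodule.map (evalMv H) V) = (t + 1) * (q0 - 1) := by
  classical
  have h2 : 2 ≤ q0 := hq0.two_le
  obtain ⟨p, k, hp, hk, hq⟩ := hq0
  haveI hpfact : Fact (Nat.Prime p) := ⟨Nat.prime_iff.2 hp⟩
  haveI hchar : CharP F p := by
    obtain ⟨n, hrp, hcard⟩ := FiniteField.card F (ringChar F)
    have hcf : Fintype.card F = p ^ (k * 2) := by
      rw [hF, ← hq, ← pow_mul]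
    have hdvd : ringChar F ∣ p ^ (k * 2) := by
      rw [← hcf, hcard]
      exact dvd_pow_self _ (by exact_mod_cast n.ne_zero)
    have hrpp : ringChar F = p :=
      (Nat.prime_dvd_prime_iff_eq hrp hpfact.1).1 (hrp.dvd_of_dvd_pow hdvd)
    rw [← hrpp]
    exact ringChar.charP F
  have hfrob : ∀ x y : F, (x + y) ^ q0 = x ^ q0 + y ^ q0 := by
    intro x y
    rw [← hq]
    exact add_pow_char_pow x y p k
  obtain ⟨hcount1, hcount2⟩ := hermitian_counts q0 h2 hF hfrob
  -- the finsupp exponent helpers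
  have he0 : ∀ i j : ℕ, ((Finsupp.single (0 : Fin 2) i + Finsupp.single 1 j : Fin 2 →₀ ℕ)) 0 = i := by
    intro i j; simp [Finsupp.single_apply]
  have he1 : ∀ i j : ℕ, ((Finsupp.single (0 : Fin 2) i + Finsupp.single 1 j : Fin 2 →₀ ℕ)) 1 = j := by
    intro i j; simp [Finsupp.single_apply]
  have hm_eq : ∀ m : Fin 2 →₀ ℕ, Finsupp.single 0 (m 0) + Finsupp.single 1 (m 1) = m := by
    intro m
    ext x
    fin_cases x <;> simp [Finsupp.single_apply]
  have hmono : ∀ i j : ℕ, (MvPolynomial.X 0 : MvPolynomial (Fin 2) F) ^ i * MvPolynomial.X 1 ^ j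
      = MvPolynomial.monomial (Finsupp.single 0 i + Finsupp.single 1 j) 1 := by
    intro i j
    rw [MvPolynomial.X_pow_eq_monomial, MvPolynomial.X_pow_eq_monomial,
      MvPolynomial.monomial_mul, one_mul]
  -- V is contained in the box-supported polynomials
  set box : Set (Fin 2 →₀ ℕ) := {m | m 0 ≤ q0 - 2 ∧ m 1 ≤ t} with hbox_def
  have hVle : V ≤ MvPolynomial.restrictSupport F box := by
    rw [hV, Submodule.span_le]
    rintro z ⟨i, j, hi, hj, rfl⟩
    rw [SetLike.mem_coe, MvPolynomial.mem_restrictSupport_iff]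
    intro m hm
    rw [hmono] at hm
    have : m ∈ (MvPolynomial.monomial (R := F)
        (Finsupp.single (0 : Fin 2) i + Finsupp.single 1 j) 1).support := hm
    rw [MvPolynomial.support_monomial, if_neg (one_ne_zero)] at this
    rw [Finset.mem_singleton] at this
    subst this
    exact ⟨by rw [he0]; exact hi, by rw [he1]; exact hj⟩
  -- key vanishing statement
  have hkey : ∀ z : MvPolynomial (Fin 2) F, z ∈ V →
      (∀ a b : F, b ^ (q0 + 1) = a ^ q0 + a → MvPolynomial.aeval ![a, b] z = 0) → z = 0 := by
    intro z hzV hzero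
    have hbox : ∀ m ∈ z.support, (m : Fin 2 →₀ ℕ) 0 ≤ q0 - 2 ∧ m 1 ≤ t := by
      have hmem := hVle hzV
      rw [MvPolynomial.mem_restrictSupport_iff] at hmem
      intro m hm
      exact hmem hm
    set d : ℕ → ℕ → F :=
      fun i j => MvPolynomial.coeff (Finsupp.single 0 i + Finsupp.single 1 j) z with hd
    have heval : ∀ a b : F, MvPolynomial.aeval ![a, b] z
        = ∑ ij ∈ Finset.range (q0 - 1) ×ˢ Finset.range (t + 1),
            d ij.1 ij.2 * a ^ ij.1 * b ^ ij.2 := by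
      intro a b
      have h1 : MvPolynomial.aeval ![a, b] z = MvPolynomial.eval ![a, b] z := by
        rw [MvPolynomial.aeval_def]
        rw [show algebraMap F F = RingHom.id F from rfl]
        rfl
      rw [h1, MvPolynomial.eval_eq']
      have hprod : ∀ m : Fin 2 →₀ ℕ, (∏ i, (![a, b] : Fin 2 → F) i ^ m i)
          = a ^ m 0 * b ^ m 1 := by
        intro m
        rw [Fin.prod_univ_two]
        simp
      set S2 := (Finset.range (q0 - 1) ×ˢ Finset.range (t + 1)).image
        (fun ij : ℕ × ℕ => Finsupp.single (0 : Fin 2) ij.1 + Finsupp.single 1 ij.2) with hS2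
      have hsub : z.support ⊆ S2 := by
        intro m hm
        have hb := hbox m hm
        rw [hS2, Finset.mem_image]
        exact ⟨(m 0, m 1), Finset.mem_product.2
          ⟨Finset.mem_range.2 (by omega), Finset.mem_range.2 (by omega)⟩, hm_eq m⟩
      rw [Finset.sum_subset hsub (fun m _ hm => by
        rw [MvPolynomial.notMem_support_iff.1 hm, zero_mul])]
      rw [hS2, Finset.sum_image (fun x _ y _ hxy => ?_)]
      · refine Finset.sum_congr rfl fun ij _ => ?_
        simp only [hprod, he0, he1, hd, mul_assoc]
      · have h0 : x.1 = y.1 := by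
          have := congrArg (fun g : Fin 2 →₀ ℕ => g 0) hxy
          simpa [he0] using this
        have h1 : x.2 = y.2 := by
          have := congrArg (fun g : Fin 2 →₀ ℕ => g 1) hxy
          simpa [he1] using this
        exact Prod.ext h0 h1
    -- univariate family
    set f : ℕ → Polynomial F := fun j => if j ≤ t then
      ∑ i ∈ Finset.range (q0 - 1), Polynomial.C (d i j) * Polynomial.X ^ i else 0 with hf
    have hdeg : ∀ j, (f j).natDegree ≤ q0 - 2 := by
      intro j
      by_cases hj : j ≤ t
      · simp only [hf, if_pos hj]
        apply Polynomial.natDegree_sum_le_of_forall_le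
        intro i hi
        rw [Finset.mem_range] at hi
        refine le_trans (Polynomial.natDegree_mul_le) ?_
        rw [Polynomial.natDegree_C, Polynomial.natDegree_X_pow]
        omega
      · simp only [hf, if_neg hj, Polynomial.natDegree_zero]
        omega
    have hsupp : ∀ j, t < j → f j = 0 := by
      intro j hj
      simp only [hf, if_neg (show ¬ j ≤ t by omega)]
    have hfeval : ∀ j, j ≤ t → ∀ a : F, (f j).eval a
        = ∑ i ∈ Finset.range (q0 - 1), d i j * a ^ i := by
      intro j hj a
      simp only [hf, if_pos hj]
      rw [Polynomial.eval_finset_sum]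
      refine Finset.sum_congr rfl fun i _ => by simp
    have hz' : ∀ a b : F, b ^ (q0 + 1) = a ^ q0 + a →
        ∑ j ∈ Finset.range (t + 1), (f j).eval a * b ^ j = 0 := by
      intro a b hcond
      have hstep : ∑ j ∈ Finset.range (t + 1), (f j).eval a * b ^ j
          = ∑ ij ∈ Finset.range (q0 - 1) ×ˢ Finset.range (t + 1),
              d ij.1 ij.2 * a ^ ij.1 * b ^ ij.2 := by
        rw [Finset.sum_product_right]
        refine Finset.sum_congr rfl fun j hj => ?_
        rw [Finset.mem_range] at hj
        rw [hfeval j (by omega) a, Finset.sum_mul]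
      rw [hstep, ← heval a b]
      exact hzero a b hcond
    have hfibGe : ∀ a : F, a ^ q0 + a ≠ 0 →
        q0 + 1 ≤ (Finset.univ.filter fun b : F => b ^ (q0 + 1) = a ^ q0 + a).card :=
      fun a ha => le_of_eq (hcount2 a ha).symm
    have hf0 := core_vanish q0 t h2 hlt hF hfibGe f hdeg hsupp hz'
    have hdz : ∀ i j : ℕ, i < q0 - 1 → j ≤ t → d i j = 0 := by
      intro i j hi hj
      have h1 : (∑ i' ∈ Finset.range (q0 - 1),
          Polynomial.C (d i' j) * Polynomial.X ^ i').coeff i = d i j :=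
        coeff_sum_C_mul_X_pow (q0 - 1) (fun i' => d i' j) i hi
      have h2' : f j = 0 := hf0 j
      simp only [hf, if_pos hj] at h2'
      rw [← h1, h2', Polynomial.coeff_zero]
    ext m
    rw [MvPolynomial.coeff_zero]
    by_cases hm : m ∈ z.support
    · have hb := hbox m hm
      have hcm : MvPolynomial.coeff m z = d (m 0) (m 1) := by
        simp only [hd]
        rw [hm_eq m]
      rw [hcm]
      exact hdz (m 0) (m 1) (by omega) hb.2
    · exact MvPolynomial.notMem_support_iff.1 hm
  -- Injectivity
  have hInj : Set.InjOn (⇑(evalMv H)) (V : Set (MvPolynomial (Fin 2) F)) := by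
    intro x hx y hy hxy
    have hsub : x - y ∈ V := Submodule.sub_mem V hx hy
    have hz0 : evalMv H (x - y) = 0 := by rw [map_sub, hxy, sub_self]
    have hval : ∀ a b : F, b ^ (q0 + 1) = a ^ q0 + a →
        MvPolynomial.aeval ![a, b] (x - y) = 0 := by
      intro a b hcond
      have hmem : ((a, b) : F × F) ∈ H := by
        rw [hH, Finset.mem_filter]
        exact ⟨Finset.mem_univ _, hcond.symm⟩
      have := congrFun hz0 ⟨(a, b), hmem⟩
      simpa [evalMv] using this
    exact sub_eq_zero.1 (hkey (x - y) hsub hval)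
  -- Cardinality of H
  have hHcard : H.card = q0 ^ 3 := by
    rw [hH]
    rw [Finset.card_eq_sum_card_fiberwise
      (f := fun p : F × F => p.2) (t := (Finset.univ : Finset F)) (fun x _ => Finset.mem_univ _)]
    have hfib : ∀ b : F,
        (((Finset.univ : Finset (F × F)).filter
          fun p : F × F => p.1 ^ q0 + p.1 = p.2 ^ (q0 + 1)).filter
            fun p => p.2 = b).card = q0 := by
      intro b
      have hbij : (((Finset.univ : Finset (F × F)).filter
          fun p : F × F => p.1 ^ q0 + p.1 = p.2 ^ (q0 + 1)).filter
            fun p => p.2 = b).card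
          = ((Finset.univ : Finset F).filter fun a : F => a ^ q0 + a = b ^ (q0 + 1)).card := by
        apply Finset.card_bij (fun p _ => p.1)
        · intro pt hpt
          simp only [Finset.mem_filter, Finset.mem_univ, true_and] at hpt ⊢
          rw [← hpt.2]
          exact hpt.1
        · intro pt hpt pt' hpt' hh
          simp only [Finset.mem_filter, Finset.mem_univ, true_and] at hpt hpt'
          exact Prod.ext hh (hpt.2.trans hpt'.2.symm)
        · intro a ha
          simp only [Finset.mem_filter, Finset.mem_univ, true_and] at ha
          exact ⟨(a, b), by simp [ha], rfl⟩
      rw [hbij, hcount1 b]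
    rw [Finset.sum_congr rfl (fun b _ => hfib b), Finset.sum_const, Finset.card_univ, hF,
      smul_eq_mul]
    ring
  refine ⟨hInj, hHcard, ?_⟩
  -- dimension
  set fam : Fin (q0 - 1) × Fin (t + 1) → MvPolynomial (Fin 2) F :=
    fun ij => MvPolynomial.X 0 ^ (ij.1 : ℕ) * MvPolynomial.X 1 ^ (ij.2 : ℕ) with hfam_def
  have hVspan : V = Submodule.span F (Set.range fam) := by
    rw [hV]
    congr 1
    ext z
    constructor
    · rintro ⟨i, j, hi, hj, rfl⟩
      exact ⟨(⟨i, by omega⟩, ⟨j, by omega⟩), rfl⟩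
    · rintro ⟨⟨i, j⟩, rfl⟩
      exact ⟨(i : ℕ), (j : ℕ), by omega, by omega, rfl⟩
  have hli : LinearIndependent F fam := by
    have hinj : Function.Injective (fun ij : Fin (q0 - 1) × Fin (t + 1) =>
        Finsupp.single (0 : Fin 2) (ij.1 : ℕ) + Finsupp.single 1 (ij.2 : ℕ)) := by
      intro x y hxy
      have h0 : (x.1 : ℕ) = y.1 := by
        have := congrArg (fun g : Fin 2 →₀ ℕ => g 0) hxy
        simpa [he0] using this
      have h1 : (x.2 : ℕ) = y.2 := by
        have := congrArg (fun g : Fin 2 →₀ ℕ => g 1) hxy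
        simpa [he1] using this
      exact Prod.ext (Fin.ext h0) (Fin.ext h1)
    have hcomp := (MvPolynomial.basisMonomials (Fin 2) F).linearIndependent.comp _ hinj
    have hfam : fam = (MvPolynomial.basisMonomials (Fin 2) F) ∘
        (fun ij : Fin (q0 - 1) × Fin (t + 1) =>
          Finsupp.single (0 : Fin 2) (ij.1 : ℕ) + Finsupp.single 1 (ij.2 : ℕ)) := by
      funext ij
      simp only [hfam_def, Function.comp_apply, MvPolynomial.coe_basisMonomials]
      exact hmono _ _
    rw [hfam]
    exact hcomp
  have hrank : Module.finrank F V = (t + 1) * (q0 - 1) := by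
    rw [hVspan, finrank_span_eq_card hli, Fintype.card_prod, Fintype.card_fin, Fintype.card_fin,
      Nat.mul_comm]
  have hinj' : Function.Injective ((evalMv H).comp V.subtype) := by
    intro x y hxy
    apply Subtype.ext
    exact hInj x.2 y.2 hxy
  have hmap : Submodule.map (evalMv H) V = LinearMap.range ((evalMv H).comp V.subtype) := by
    rw [LinearMap.range_comp, Submodule.range_subtype]
  rw [hmap, LinearMap.finrank_range_of_inj hinj']
  exact hrank
end
end

section
/- Let q0 be a prime power, q = q0², and let t ≥ 1 be an integer. Let V ⊆ 𝔽_q[x,y] be the 𝔽_q-linear span of the monomials x^i y^j for 0 ≤ i ≤ q0-2 and 0 ≤ j ≤ t, and let C ⊆ 𝔽_q^H be the image of V under the map F ↦ (F(a,b))_{(a,b) ∈ H}, where H is the set of affine points of the Hermitian curve. Then for every F ∈ V and every b ∈ 𝔽_q there is a univariate polynomial f ∈ 𝔽_q[x] of degree at most q0-2 such that F(a,b) = f(a) for all a with a^{q0} + a = b^{q0+1}; consequently C has all-symbol locality q0 - 1, where the recovering set of the coordinate (a,b) ∈ H is {(a',b) ∈ H : a' ≠ a}. -/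
noncomputable section

open Polynomial in
/-- Any fiber of the trace-like map `z ↦ z^q0 + z` on a field of `q0^2` elements
has exactly `q0` points. -/
theorem fiber_card_aux (q0 : ℕ) (hq0 : IsPrimePow q0)
    (F : Type*) [Field F] [Fintype F] [DecidableEq F] (hF : Fintype.card F = q0 ^ 2)
    (a : F) :
    (Finset.univ.filter fun z : F => z ^ q0 + z = a ^ q0 + a).card = q0 := by
  obtain ⟨p, k, hp, hk, rfl⟩ := hq0
  set q0 := p ^ k with hq0def
  have hp' : p.Prime := hp.nat_prime
  have hq0two : 2 ≤ q0 := by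
    calc 2 ≤ p := hp'.two_le
    _ = p ^ 1 := (pow_one p).symm
    _ ≤ p ^ k := Nat.pow_le_pow_right hp'.pos hk
  have hq0pos : 0 < q0 := by omega
  -- characteristic is p
  have hchar : CharP F p := by
    have hdvd : ringChar F ∣ q0 ^ 2 := by
      rw [← hF]; exact ringChar.dvd (by exact_mod_cast FiniteField.cast_card_eq_zero F)
    have hprime : (ringChar F).Prime := CharP.char_is_prime F (ringChar F)
    have h1 : ringChar F ∣ p :=
      hprime.dvd_of_dvd_pow (n := 2 * k) (by rwa [hq0def, ← pow_mul, mul_comm k 2] at hdvd)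
    have h2 : ringChar F = p := (Nat.prime_dvd_prime_iff_eq hprime hp').mp h1
    rw [← h2]; exact ringChar.charP F
  haveI := hchar
  haveI : Fact p.Prime := ⟨hp'⟩
  have hpowadd : ∀ x y : F, (x + y) ^ q0 = x ^ q0 + y ^ q0 := by
    intro x y
    have := add_pow_char_pow (R := F) x y (p := p) (n := k)
    rwa [← hq0def] at this
  -- the additive map T z = z^q0 + z
  set T : F →+ F :=
    { toFun := fun z => z ^ q0 + z
      map_zero' := by simp [zero_pow (by omega : q0 ≠ 0)]
      map_add' := by
        intro x y; show (x+y)^q0 + (x+y) = (x^q0+x) + (y^q0+y); rw [hpowadd]; ring } with hT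
  have hTdef : ∀ z : F, T z = z ^ q0 + z := fun z => rfl
  set K : Finset F := Finset.univ.filter fun z => T z = 0 with hK
  set R : Finset F := Finset.univ.image T with hR
  -- kernel card bound
  have hKle : K.card ≤ q0 := by
    have hg : (X ^ q0 + X : F[X]).natDegree = q0 := by
      compute_degree!
      rw [if_neg (by omega : ¬(1 = q0))]; norm_num
    have hgne : (X ^ q0 + X : F[X]) ≠ 0 := by
      intro h0
      rw [h0] at hg
      simp at hg; omega
    have hsub : K ⊆ (X ^ q0 + X : F[X]).roots.toFinset := by
      intro z hz
      rw [Multiset.mem_toFinset, mem_roots hgne]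
      simp only [hK, Finset.mem_filter] at hz
      simpa [IsRoot, hTdef] using hz.2
    calc K.card ≤ _ := Finset.card_le_card hsub
    _ ≤ Multiset.card (X ^ q0 + X : F[X]).roots := Multiset.toFinset_card_le _
    _ ≤ (X ^ q0 + X : F[X]).natDegree := card_roots' _
    _ = q0 := hg
  -- range card bound
  have hRle : R.card ≤ q0 := by
    have hg : (X ^ q0 - X : F[X]).natDegree = q0 := by
      compute_degree!
      rw [if_neg (by omega : ¬(1 = q0))]; norm_num
    have hgne : (X ^ q0 - X : F[X]) ≠ 0 := by
      intro h0
      rw [h0] at hg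
      simp at hg; omega
    have hsub : R ⊆ (X ^ q0 - X : F[X]).roots.toFinset := by
      intro w hw
      rw [Multiset.mem_toFinset, mem_roots hgne]
      simp only [hR, Finset.mem_image, Finset.mem_univ, true_and] at hw
      obtain ⟨z, rfl⟩ := hw
      have hz2 : z ^ (q0 ^ 2) = z := by rw [← hF]; exact FiniteField.pow_card z
      have : (T z) ^ q0 = T z := by
        rw [hTdef, hpowadd, ← pow_mul, ← pow_two, hz2, add_comm]
      simpa [IsRoot] using sub_eq_zero.mpr this
    calc R.card ≤ _ := Finset.card_le_card hsub
    _ ≤ Multiset.card (X ^ q0 - X : F[X]).roots := Multiset.toFinset_card_le _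
    _ ≤ (X ^ q0 - X : F[X]).natDegree := card_roots' _
    _ = q0 := hg
  -- all fibers have card K.card
  have hfiber : ∀ z0 : F, (Finset.univ.filter fun z => T z = T z0).card = K.card := by
    intro z0
    apply Finset.card_nbij' (i := fun x => x - z0) (j := fun x => x + z0)
    · intro x hx
      simp only [Finset.mem_coe, Finset.mem_filter, Finset.mem_univ, true_and] at hx
      simp only [Finset.mem_coe, hK, Finset.mem_filter, Finset.mem_univ, true_and]
      rw [map_sub, hx, sub_self]
    · intro x hx
      simp only [Finset.mem_coe, hK, Finset.mem_filter, Finset.mem_univ, true_and] at hx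
      simp only [Finset.mem_coe, Finset.mem_filter, Finset.mem_univ, true_and]
      rw [map_add, hx, zero_add]
    · intro x _; ring
    · intro x _; ring
  -- product formula
  have hprod : q0 ^ 2 = R.card * K.card := by
    rw [← hF]
    rw [← Finset.card_univ, Finset.card_eq_sum_card_image T Finset.univ]
    rw [← hR]
    rw [Finset.sum_congr rfl (fun w hw => ?_), Finset.sum_const, smul_eq_mul]
    simp only [hR, Finset.mem_image, Finset.mem_univ, true_and] at hw
    obtain ⟨z, rfl⟩ := hw
    exact hfiber z
  have hKeq : K.card = q0 := by
    have h1 : q0 * q0 ≤ q0 * K.card := by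
      calc q0 * q0 = q0 ^ 2 := (pow_two q0).symm
      _ = R.card * K.card := hprod
      _ ≤ q0 * K.card := Nat.mul_le_mul_right _ hRle
    exact le_antisymm hKle (Nat.le_of_mul_le_mul_left h1 hq0pos)
  calc (Finset.univ.filter fun z : F => z ^ q0 + z = a ^ q0 + a).card
      = (Finset.univ.filter fun z => T z = T a).card := by congr 1
    _ = K.card := hfiber a
    _ = q0 := hKeq

/-- On each fiber of the projection `(x,y) ↦ y`, every `G` in the Hermitian code space
`V = span{x^i y^j : i ≤ q0-2, j ≤ t}` agrees with a univariate polynomial of degree at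
most `q0 - 2`; consequently the evaluation code `C` has all-symbol locality `q0 - 1`,
the recovering set of a coordinate `(a,b) ∈ H` being `{(a',b) ∈ H : a' ≠ a}`. -/
theorem hermitian_lrc_locality
    (q0 t : ℕ) (hq0 : IsPrimePow q0) (ht : 1 ≤ t)
    (F : Type*) [Field F] [Fintype F] [DecidableEq F] (hF : Fintype.card F = q0 ^ 2)
    (H : Finset (F × F))
    (hH : H = Finset.univ.filter fun p : F × F => p.1 ^ q0 + p.1 = p.2 ^ (q0 + 1))
    (V : Submodule F (MvPolynomial (Fin 2) F))
    (hV : V = Submodule.span F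
      {p : MvPolynomial (Fin 2) F | ∃ i j : ℕ, i ≤ q0 - 2 ∧ j ≤ t ∧
        p = MvPolynomial.X 0 ^ i * MvPolynomial.X 1 ^ j})
    (C : Submodule F (H → F)) (hC : C = Submodule.map (evalMv H) V) :
    (∀ G ∈ V, ∀ b : F, ∃ f : Polynomial F, f.degree ≤ ((q0 - 2 : ℕ) : WithBot ℕ) ∧
        ∀ a : F, a ^ q0 + a = b ^ (q0 + 1) → MvPolynomial.eval ![a, b] G = f.eval a) ∧
    (∀ P : H, (H.filter fun p : F × F => p.2 = (P : F × F).2 ∧ p.1 ≠ (P : F × F).1).card ≤ q0 - 1 ∧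
        ∀ c ∈ C, ∀ c' ∈ C,
          (∀ Q : H, (Q : F × F).2 = (P : F × F).2 → Q ≠ P → c Q = c' Q) → c P = c' P) := by
  have hq0two : 2 ≤ q0 := hq0.two_le
  -- Part 1 : restriction to a fiber is a low degree univariate polynomial
  have part1 : ∀ G ∈ V, ∀ b : F, ∃ f : Polynomial F, f.degree ≤ ((q0 - 2 : ℕ) : WithBot ℕ) ∧
      ∀ a : F, MvPolynomial.eval ![a, b] G = f.eval a := by
    intro G hG b
    set Φ : MvPolynomial (Fin 2) F →ₐ[F] Polynomial F :=
      MvPolynomial.aeval ![Polynomial.X, Polynomial.C b] with hΦ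
    refine ⟨Φ G, ?_, ?_⟩
    · have hle : V ≤ Submodule.comap Φ.toLinearMap
          (Polynomial.degreeLE F ((q0 - 2 : ℕ) : WithBot ℕ)) := by
        rw [hV]
        apply Submodule.span_le.mpr
        rintro _ ⟨i, j, hi, hj, rfl⟩
        simp only [SetLike.mem_coe, Submodule.mem_comap, AlgHom.toLinearMap_apply,
          Polynomial.mem_degreeLE, map_mul, map_pow, hΦ, MvPolynomial.aeval_X]
        simp only [Matrix.cons_val_zero, Matrix.cons_val_one, Matrix.head_cons]
        calc (Polynomial.X ^ i * Polynomial.C b ^ j : Polynomial F).degree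
            ≤ (Polynomial.X ^ i : Polynomial F).degree + (Polynomial.C b ^ j).degree :=
              Polynomial.degree_mul_le _ _
          _ ≤ (i : WithBot ℕ) + 0 := by
              apply add_le_add
              · exact Polynomial.degree_X_pow_le i
              · rw [← Polynomial.C_pow]; exact Polynomial.degree_C_le
          _ = (i : WithBot ℕ) := add_zero _
          _ ≤ ((q0 - 2 : ℕ) : WithBot ℕ) := by exact_mod_cast Nat.cast_le.mpr hi
      exact Polynomial.mem_degreeLE.mp (hle hG)
    · intro a
      have hcomp : (Polynomial.aeval a).comp Φ = MvPolynomial.aeval ![a, b] := by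
        apply MvPolynomial.algHom_ext
        intro i
        fin_cases i <;> simp [hΦ]
      have h1 : Polynomial.aeval a (Φ G) = MvPolynomial.aeval ![a, b] G := by
        rw [← hcomp]; rfl
      rw [← Polynomial.coe_aeval_eq_eval, h1]
      exact (DFunLike.congr_fun (MvPolynomial.coe_aeval_eq_eval ![a, b]) G).symm
  constructor
  · intro G hG b
    obtain ⟨f, hf1, hf2⟩ := part1 G hG b
    exact ⟨f, hf1, fun a _ => hf2 a⟩
  · intro P
    obtain ⟨⟨a, b⟩, hPmem⟩ := P
    have hPcurve : a ^ q0 + a = b ^ (q0 + 1) := by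
      rw [hH] at hPmem
      simpa using (Finset.mem_filter.mp hPmem).2
    -- the recovering set has the same cardinality as the set of "other roots"
    set s : Finset F := Finset.univ.filter fun z : F => z ^ q0 + z = b ^ (q0 + 1) ∧ z ≠ a
      with hs
    have hcard_eq :
        (H.filter fun p : F × F => p.2 = b ∧ p.1 ≠ a).card = s.card := by
      apply Finset.card_nbij' (i := fun p => p.1) (j := fun z => (z, b))
      · rintro ⟨x, y⟩ hx
        simp only [Finset.mem_coe, Finset.mem_filter, hH, Finset.mem_univ, true_and] at hx
        obtain ⟨hcurve, hy, hxa⟩ := hx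
        subst hy
        simp only [Finset.mem_coe, hs, Finset.mem_filter, Finset.mem_univ, true_and]
        exact ⟨hcurve, hxa⟩
      · intro z hz
        simp only [Finset.mem_coe, hs, Finset.mem_filter, Finset.mem_univ, true_and] at hz
        simp only [Finset.mem_coe, Finset.mem_filter, hH, Finset.mem_univ, true_and]
        exact hz
      · rintro ⟨x, y⟩ hx
        simp only [Finset.mem_coe, Finset.mem_filter] at hx
        simp [hx.2.1]
      · intro z _; rfl
    have hscard : s.card = q0 - 1 := by
      have hfull := fiber_card_aux q0 hq0 F hF a
      have hsplit : s = (Finset.univ.filter fun z : F => z ^ q0 + z = a ^ q0 + a).erase a := by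
        ext z
        simp only [hs, Finset.mem_filter, Finset.mem_univ, true_and, Finset.mem_erase, hPcurve]
        tauto
      rw [hsplit, Finset.card_erase_of_mem, hfull]
      simp [hPcurve]
    constructor
    · rw [hcard_eq, hscard]
    · intro c hc c' hc' hagree
      rw [hC] at hc hc'
      obtain ⟨G, hG, rfl⟩ := hc
      obtain ⟨G', hG', rfl⟩ := hc'
      have hD : G - G' ∈ V := sub_mem hG hG'
      obtain ⟨f, hfdeg, hfeval⟩ := part1 (G - G') hD b
      -- evaluation of the code at a point
      have hevalMv : ∀ (D : MvPolynomial (Fin 2) F) (Q : H),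
          evalMv H D Q = MvPolynomial.eval ![(Q : F × F).1, (Q : F × F).2] D := by
        intro D Q
        show (MvPolynomial.aeval ![(Q : F × F).1, (Q : F × F).2]) D = _
        exact DFunLike.congr_fun (MvPolynomial.coe_aeval_eq_eval _) D
      -- f vanishes on s
      have hvanish : ∀ z ∈ s, f.eval z = 0 := by
        intro z hz
        simp only [hs, Finset.mem_filter, Finset.mem_univ, true_and] at hz
        have hQmem : (z, b) ∈ H := by
          rw [hH]; simp [hz.1]
        have hQP : (⟨(z, b), hQmem⟩ : H) ≠ ⟨(a, b), hPmem⟩ := by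
          intro h
          apply hz.2
          have := congrArg (fun Q : H => (Q : F × F).1) h
          simpa using this
        have := hagree ⟨(z, b), hQmem⟩ rfl hQP
        rw [hevalMv, hevalMv] at this
        have hDz : MvPolynomial.eval ![z, b] (G - G') = 0 := by
          rw [map_sub]; simpa using sub_eq_zero.mpr this
        rw [← hfeval z, hDz]
      -- f is zero since it has too many roots
      have hf0 : f = 0 := by
        apply Polynomial.eq_zero_of_natDegree_lt_card_of_eval_eq_zero' f s hvanish
        have hnd : f.natDegree ≤ q0 - 2 := Polynomial.natDegree_le_iff_degree_le.mpr hfdeg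
        rw [hscard]; omega
      have hDa : MvPolynomial.eval ![a, b] (G - G') = 0 := by
        rw [hfeval a, hf0, Polynomial.eval_zero]
      rw [hevalMv, hevalMv]
      simp only [map_sub] at hDa
      exact sub_eq_zero.mp (by simpa using hDa)
end
end

section
/- Let q0 be a prime power, q = q0², and let t ≥ 1 be an integer with t(q0+1) + q0(q0-1) < q0³ - q0. Let M = {a ∈ 𝔽_q : a^{q0} + a = 0}, let S = {(a,b) ∈ 𝔽_q × 𝔽_q : a^{q0} + a = b^{q0+1}, a ∉ M}, so |S| = q0³ - q0, and let W ⊆ 𝔽_q[x,y] be the 𝔽_q-linear span of the monomials x^j y^i for 0 ≤ j ≤ t and 0 ≤ i ≤ q0-1. Then the evaluation map W → 𝔽_q^S, F ↦ (F(a,b))_{(a,b) ∈ S}, is injective, its image C is a linear code of length q0³ - q0 and dimension (t+1)q0, and the minimum distance of C is at least (q0³ - q0) - t(q0+1) - q0(q0-1). -/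
noncomputable section

namespace HermAux


open Polynomial

variable {F : Type*} [Field F]

/-- weight of monomial x^j y^i -/
def mwt (q0 i j : ℕ) : ℕ := j * (q0 + 1) + i * q0

lemma mwt_add (q0 i j i' j' : ℕ) : mwt q0 (i+i') (j+j') = mwt q0 i j + mwt q0 i' j' := by
  unfold mwt; ring

lemma mwt_inj {q0 i j i' j' : ℕ} (hi : i ≤ q0) (hi' : i' ≤ q0)
    (h : mwt q0 i j = mwt q0 i' j') : i = i' ∧ j = j' := by
  unfold mwt at h
  have hmod : i % (q0+1) = i' % (q0+1) := by
    have h1 : (i * q0) % (q0+1) = (i' * q0) % (q0+1) := by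
      have := congrArg (· % (q0+1)) h
      simpa [Nat.add_mul_mod_self_left, Nat.mul_add_mod, Nat.add_comm] using this
    have hco : Nat.Coprime q0 (q0+1) := by
      have h3 : Nat.gcd q0 (1 + q0) = Nat.gcd q0 1 := Nat.gcd_add_self_right q0 1
      unfold Nat.Coprime
      rw [show q0 + 1 = 1 + q0 by omega, h3, Nat.gcd_one_right]
    have h2 : i * q0 ≡ i' * q0 [MOD q0+1] := h1
    have := (Nat.ModEq.cancel_right_of_coprime (by simpa [Nat.coprime_comm] using hco) h2)
    exact this
  have hii : i = i' := by
    rwa [Nat.mod_eq_of_lt (by omega), Nat.mod_eq_of_lt (by omega)] at hmod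
  subst hii
  have : j * (q0+1) = j' * (q0+1) := by omega
  exact ⟨rfl, Nat.eq_of_mul_eq_mul_right (by omega) this⟩

/-- `P` (as element of F[x][y], outer variable = y) has a unique monomial of maximal
weight `ω`, located at y-degree `i₀`, x-degree `j₀`. -/
def IsTop (q0 : ℕ) (P : Polynomial (Polynomial F)) (ω i₀ j₀ : ℕ) : Prop :=
  ((P.coeff i₀).coeff j₀ ≠ 0) ∧ mwt q0 i₀ j₀ = ω ∧
  (∀ i j, (P.coeff i).coeff j ≠ 0 → mwt q0 i j ≤ ω) ∧
  (∀ i j, (P.coeff i).coeff j ≠ 0 → mwt q0 i j = ω → i = i₀ ∧ j = j₀)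

lemma exists_top {q0 : ℕ} {P : Polynomial (Polynomial F)} (hP : P ≠ 0)
    (hbox : ∀ i j, (P.coeff i).coeff j ≠ 0 → i ≤ q0) :
    ∃ ω i₀ j₀, IsTop q0 P ω i₀ j₀ := by
  classical
  set T : Finset ℕ := P.support.biUnion
    (fun i => (P.coeff i).support.image (fun j => mwt q0 i j)) with hT
  have hmemT : ∀ i j, (P.coeff i).coeff j ≠ 0 → mwt q0 i j ∈ T := by
    intro i j h
    refine Finset.mem_biUnion.2 ⟨i, ?_, Finset.mem_image.2 ⟨j, ?_, rfl⟩⟩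
    · exact Polynomial.mem_support_iff.2 (fun hc => h (by simp [hc]))
    · exact Polynomial.mem_support_iff.2 h
  have hTne : T.Nonempty := by
    obtain ⟨i, hi⟩ := Polynomial.support_nonempty.2 hP
    have hci : P.coeff i ≠ 0 := Polynomial.mem_support_iff.1 hi
    obtain ⟨j, hj⟩ := Polynomial.support_nonempty.2 hci
    exact ⟨_, hmemT i j (Polynomial.mem_support_iff.1 hj)⟩
  set ω := T.max' hTne with hω
  have hωT : ω ∈ T := T.max'_mem hTne
  obtain ⟨i₀, hi₀, hrest⟩ := Finset.mem_biUnion.1 hωT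
  obtain ⟨j₀, hj₀, hmw⟩ := Finset.mem_image.1 hrest
  refine ⟨ω, i₀, j₀, Polynomial.mem_support_iff.1 hj₀, hmw, ?_, ?_⟩
  · intro i j h
    exact Finset.le_max' T _ (hmemT i j h)
  · intro i j h hw
    have h1 : i ≤ q0 := hbox i j h
    have h2 : i₀ ≤ q0 := hbox i₀ j₀ (Polynomial.mem_support_iff.1 hj₀)
    have := mwt_inj h1 h2 (hw.trans hmw.symm)
    exact ⟨this.1, this.2⟩

lemma coeff2_sum {ι : Type*} (s : Finset ι) (f : ι → Polynomial (Polynomial F)) (i j : ℕ) :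
    (((∑ m ∈ s, f m).coeff i).coeff j) = ∑ m ∈ s, ((f m).coeff i).coeff j := by
  rw [Polynomial.finset_sum_coeff, Polynomial.finset_sum_coeff]

lemma coeff2_mul (P Q : Polynomial (Polynomial F)) (i j : ℕ) :
    ((P * Q).coeff i).coeff j
      = ∑ p ∈ Finset.HasAntidiagonal.antidiagonal i, ∑ r ∈ Finset.HasAntidiagonal.antidiagonal j,
          (P.coeff p.1).coeff r.1 * (Q.coeff p.2).coeff r.2 := by
  rw [Polynomial.coeff_mul, Polynomial.finset_sum_coeff]
  exact Finset.sum_congr rfl (fun p _ => Polynomial.coeff_mul _ _ _)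

lemma top_mul {q0 : ℕ} {P Q : Polynomial (Polynomial F)} {ω1 ω2 i1 j1 i2 j2 : ℕ}
    (h1 : IsTop q0 P ω1 i1 j1) (h2 : IsTop q0 Q ω2 i2 j2) :
    IsTop q0 (P * Q) (ω1 + ω2) (i1 + i2) (j1 + j2) := by
  obtain ⟨hc1, hw1, hb1, hu1⟩ := h1
  obtain ⟨hc2, hw2, hb2, hu2⟩ := h2
  have key : ∀ i j (p : ℕ × ℕ) (r : ℕ × ℕ), p ∈ Finset.HasAntidiagonal.antidiagonal i →
      r ∈ Finset.HasAntidiagonal.antidiagonal j →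
      (P.coeff p.1).coeff r.1 * (Q.coeff p.2).coeff r.2 ≠ 0 →
      mwt q0 i j ≤ ω1 + ω2 ∧
      (mwt q0 i j = ω1 + ω2 → p.1 = i1 ∧ p.2 = i2 ∧ r.1 = j1 ∧ r.2 = j2) := by
    intro i j p r hp hr hne
    have hP := hb1 p.1 r.1 (left_ne_zero_of_mul hne)
    have hQ := hb2 p.2 r.2 (right_ne_zero_of_mul hne)
    have hi : p.1 + p.2 = i := by simpa [Finset.mem_antidiagonal] using hp
    have hj : r.1 + r.2 = j := by simpa [Finset.mem_antidiagonal] using hr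
    have hsum : mwt q0 i j = mwt q0 p.1 r.1 + mwt q0 p.2 r.2 := by
      rw [← hi, ← hj, mwt_add]
    constructor
    · omega
    · intro he
      have e1 : mwt q0 p.1 r.1 = ω1 := by omega
      have e2 : mwt q0 p.2 r.2 = ω2 := by omega
      obtain ⟨a1, b1⟩ := hu1 _ _ (left_ne_zero_of_mul hne) e1
      obtain ⟨a2, b2⟩ := hu2 _ _ (right_ne_zero_of_mul hne) e2
      exact ⟨a1, a2, b1, b2⟩
  have hwsum : mwt q0 (i1+i2) (j1+j2) = ω1 + ω2 := by rw [mwt_add, hw1, hw2]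
  refine ⟨?_, hwsum, ?_, ?_⟩
  · rw [coeff2_mul]
    rw [Finset.sum_eq_single (i1, i2)]
    · rw [Finset.sum_eq_single (j1, j2)]
      · exact mul_ne_zero hc1 hc2
      · intro r hr hrne
        by_contra hne
        obtain ⟨-, -, c, d⟩ := (key _ _ (i1,i2) r (by simp) hr hne).2 hwsum
        exact hrne (Prod.ext c d)
      · intro h; exact absurd (by simp) h
    · intro p hp hpne
      apply Finset.sum_eq_zero
      intro r hr
      by_contra hne
      obtain ⟨a, b, -, -⟩ := (key _ _ p r hp hr hne).2 hwsum
      exact hpne (Prod.ext a b)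
    · intro h; exact absurd (by simp) h
  · intro i j h
    rw [coeff2_mul] at h
    obtain ⟨p, hp, hpne⟩ := Finset.exists_ne_zero_of_sum_ne_zero h
    obtain ⟨r, hr, hrne⟩ := Finset.exists_ne_zero_of_sum_ne_zero hpne
    exact (key i j p r hp hr hrne).1
  · intro i j h he
    rw [coeff2_mul] at h
    obtain ⟨p, hp, hpne⟩ := Finset.exists_ne_zero_of_sum_ne_zero h
    obtain ⟨r, hr, hrne⟩ := Finset.exists_ne_zero_of_sum_ne_zero hpne
    obtain ⟨a, b, c, d⟩ := (key i j p r hp hr hrne).2 he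
    have hi : p.1 + p.2 = i := by simpa [Finset.mem_antidiagonal] using hp
    have hj : r.1 + r.2 = j := by simpa [Finset.mem_antidiagonal] using hr
    omega




open Polynomial


lemma mwt_right_le {q0 i j j' : ℕ} : mwt q0 i j ≤ mwt q0 i j' ↔ j ≤ j' := by
  unfold mwt
  constructor
  · intro h
    have : j * (q0+1) ≤ j' * (q0+1) := by omega
    exact Nat.le_of_mul_le_mul_right this (by omega)
  · intro h
    have : j * (q0+1) ≤ j' * (q0+1) := Nat.mul_le_mul_right _ h
    omega

/-- evaluation of an element of F[x][y] at (a,b) (outer variable = y evaluated at b). -/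
def pev (a b : F) : Polynomial (Polynomial F) →+* F :=
  Polynomial.eval₂RingHom (Polynomial.evalRingHom a) b

@[simp] lemma pev_C (a b : F) (r : Polynomial F) : pev a b (Polynomial.C r) = r.eval a := by
  simp [pev]

@[simp] lemma pev_X (a b : F) : pev a b Polynomial.X = b := by
  simp [pev]

lemma red_step {q0 : ℕ} (hq02 : 2 ≤ q0) {P : Polynomial (Polynomial F)} {ω i₀ j₀ : ℕ}
    (htop : IsTop q0 P ω i₀ j₀) (hd : q0 + 1 ≤ P.natDegree) :
    ∃ P' : Polynomial (Polynomial F), P'.natDegree < P.natDegree ∧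
      (∀ a b : F, b ^ (q0+1) = a ^ q0 + a → pev a b P' = pev a b P) ∧
      ∃ i₁ j₁, IsTop q0 P' ω i₁ j₁ := by
  classical
  obtain ⟨hc0, hw0, hbnd, huniq⟩ := htop
  set d := P.natDegree with hdd
  set e := d - (q0+1) with hee
  have hde : d = e + (q0+1) := by omega
  have hdne : e ≠ d := by omega
  set pd := P.coeff d with hpd
  set cx : Polynomial F := Polynomial.X ^ q0 + Polynomial.X with hcx
  set P' := P - Polynomial.C pd * Polynomial.X ^ d + Polynomial.C (pd * cx) * Polynomial.X ^ e
    with hP'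
  -- coefficient description
  have hco : ∀ i, P'.coeff i =
      P.coeff i - (if d = i then pd else 0) + (if e = i then pd * cx else 0) := by
    intro i
    rw [hP']
    rw [Polynomial.coeff_add, Polynomial.coeff_sub,
      Polynomial.C_mul_X_pow_eq_monomial, Polynomial.C_mul_X_pow_eq_monomial,
      Polynomial.coeff_monomial, Polynomial.coeff_monomial]
  have hcxco : ∀ j, (pd * cx).coeff j =
      (if q0 ≤ j then pd.coeff (j - q0) else 0) + (if 1 ≤ j then pd.coeff (j-1) else 0) := by
    intro j
    rw [hcx, mul_add, Polynomial.coeff_add]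
    congr 1
    · exact Polynomial.coeff_mul_X_pow' pd q0 j
    · have : pd * Polynomial.X = pd * Polynomial.X ^ 1 := by rw [pow_one]
      rw [this, Polynomial.coeff_mul_X_pow' pd 1 j]
  have hco2 : ∀ i j, (P'.coeff i).coeff j =
      (if i = d then 0 else (P.coeff i).coeff j)
      + (if i = e then ((if q0 ≤ j then pd.coeff (j - q0) else 0)
            + (if 1 ≤ j then pd.coeff (j-1) else 0)) else 0) := by
    intro i j
    rw [hco i]
    by_cases h1 : i = d
    · subst h1
      rw [if_pos rfl, if_pos rfl, if_neg (by omega)]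
      rw [if_neg (show ¬ d = e by omega)]
      simp [hpd]
    · rw [if_neg h1, if_neg (fun h => h1 h.symm)]
      by_cases h2 : i = e
      · subst h2
        rw [if_pos rfl, if_pos rfl]
        simp [hcxco]
      · rw [if_neg h2, if_neg (fun h => h2 h.symm)]
        simp
  -- weight identities
  have id1 : ∀ j, mwt q0 e (j + q0) = mwt q0 d j := by
    intro j; rw [hde]; unfold mwt; ring
  have id2 : ∀ j, mwt q0 e (j + 1) < mwt q0 d j := by
    intro j
    have h1 : mwt q0 e (j+1) + (q0+1) * q0 = mwt q0 d j + (q0+1) := by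
      rw [hde]; unfold mwt; ring
    have h2 : (q0 + 1) * 1 < (q0+1) * q0 := by nlinarith
    omega
  -- degree decreases
  have hdeg : P'.natDegree < d := by
    have hle : P'.natDegree ≤ d - 1 := by
      rw [Polynomial.natDegree_le_iff_coeff_eq_zero]
      intro N hN
      rw [hco N]
      by_cases hNd : N = d
      · subst hNd
        rw [if_pos rfl, if_neg (by omega)]
        simp [hpd]
      · have hgt : d < N := by omega
        rw [if_neg (by omega), if_neg (by omega),
          Polynomial.coeff_eq_zero_of_natDegree_lt hgt]
        simp
    omega
  -- evaluation invariance
  have heval : ∀ a b : F, b ^ (q0+1) = a ^ q0 + a → pev a b P' = pev a b P := by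
    intro a b hb
    rw [hP']
    rw [map_add, map_sub, map_mul, map_mul, map_pow, map_pow, pev_C, pev_C, pev_X]
    have hbd : b ^ d = (a ^ q0 + a) * b ^ e := by
      rw [← hb, ← pow_add]
      congr 1
      omega
    have : (pd * cx).eval a = pd.eval a * (a ^ q0 + a) := by
      rw [Polynomial.eval_mul, hcx]
      simp
    rw [this, hbd]
    ring
  refine ⟨P', hdeg, heval, ?_⟩
  -- general bound
  have hbnd' : ∀ i j, (P'.coeff i).coeff j ≠ 0 → mwt q0 i j ≤ ω := by
    intro i j hne
    rw [hco2 i j] at hne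
    by_cases h1 : i = d
    · rw [if_pos h1, if_neg (by omega)] at hne
      simp at hne
    · rw [if_neg h1] at hne
      by_cases h2 : i = e
      · rw [if_pos h2] at hne
        subst h2
        rcases (by by_contra hcon; push_neg at hcon; rw [hcon.1, hcon.2.1, hcon.2.2] at hne; simp at hne :
          (P.coeff e).coeff j ≠ 0 ∨ (if q0 ≤ j then pd.coeff (j - q0) else 0) ≠ 0
            ∨ (if 1 ≤ j then pd.coeff (j-1) else 0) ≠ 0) with hA | hB | hC
        · exact hbnd e j hA
        · by_cases hq : q0 ≤ j
          · rw [if_pos hq] at hB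
            have := hbnd d (j - q0) hB
            have hj : j = (j - q0) + q0 := by omega
            rw [hj, id1]
            exact this
          · rw [if_neg hq] at hB; simp at hB
        · by_cases hq : 1 ≤ j
          · rw [if_pos hq] at hC
            have := hbnd d (j - 1) hC
            have hj : j = (j - 1) + 1 := by omega
            have := (id2 (j-1)).le.trans this
            rw [hj]
            exact this
          · rw [if_neg hq] at hC; simp at hC
      · rw [if_neg h2] at hne
        simp only [add_zero] at hne
        exact hbnd i j hne
  by_cases hcase : i₀ = d
  · -- top moves to (e, j₀ + q0)
    subst hcase
    refine ⟨e, j₀ + q0, ?_, by rw [id1, hw0], hbnd', ?_⟩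
    · -- coefficient nonzero
      rw [hco2]
      rw [if_neg hdne, if_pos rfl, if_pos (by omega)]
      have hz1 : (P.coeff e).coeff (j₀ + q0) = 0 := by
        by_contra hcon
        have := huniq e (j₀ + q0) hcon (by rw [id1, hw0])
        exact hdne this.1
      have hz2 : pd.coeff (j₀ + q0 - 1) = 0 := by
        by_contra hcon
        have hle := hbnd d (j₀ + q0 - 1) hcon
        rw [← hw0] at hle
        have : j₀ + q0 - 1 ≤ j₀ := mwt_right_le.1 hle
        omega
      rw [hz1, if_pos (show (1:ℕ) ≤ j₀ + q0 by omega), hz2]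
      simpa using hc0
    · -- uniqueness
      intro i j hne hw
      rw [hco2 i j] at hne
      by_cases h1 : i = d
      · rw [if_pos h1, if_neg (by omega)] at hne; simp at hne
      · rw [if_neg h1] at hne
        by_cases h2 : i = e
        · rw [if_pos h2] at hne
          subst h2
          rcases (by by_contra hcon; push_neg at hcon; rw [hcon.1, hcon.2.1, hcon.2.2] at hne; simp at hne :
            (P.coeff e).coeff j ≠ 0 ∨ (if q0 ≤ j then pd.coeff (j - q0) else 0) ≠ 0
              ∨ (if 1 ≤ j then pd.coeff (j-1) else 0) ≠ 0) with hA | hB | hC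
          · exact absurd (huniq e j hA hw).1 hdne
          · by_cases hq : q0 ≤ j
            · rw [if_pos hq] at hB
              have hwj : mwt q0 d (j - q0) = ω := by
                rw [← id1 (j - q0), show j - q0 + q0 = j by omega, hw]
              have := huniq d (j - q0) hB hwj
              exact ⟨rfl, by omega⟩
            · rw [if_neg hq] at hB; simp at hB
          · by_cases hq : 1 ≤ j
            · rw [if_pos hq] at hC
              have hle := hbnd d (j-1) hC
              have hlt := id2 (j-1)
              rw [show j - 1 + 1 = j by omega] at hlt
              omega
            · rw [if_neg hq] at hC; simp at hC
        · rw [if_neg h2] at hne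
          simp only [add_zero] at hne
          exact absurd (huniq i j hne hw).1 h1
  · -- top stays at (i₀, j₀)
    refine ⟨i₀, j₀, ?_, hw0, hbnd', ?_⟩
    · rw [hco2]
      rw [if_neg hcase]
      by_cases h2 : i₀ = e
      · rw [if_pos h2]
        subst h2
        have hz1 : (if q0 ≤ j₀ then pd.coeff (j₀ - q0) else 0) = 0 := by
          by_cases hq : q0 ≤ j₀
          · rw [if_pos hq]
            by_contra hcon
            have hwj : mwt q0 d (j₀ - q0) = ω := by
              rw [← id1 (j₀ - q0), show j₀ - q0 + q0 = j₀ by omega, hw0]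
            exact hcase ((huniq d (j₀ - q0) hcon hwj).1).symm
          · rw [if_neg hq]
        have hz2 : (if 1 ≤ j₀ then pd.coeff (j₀-1) else 0) = 0 := by
          by_cases hq : 1 ≤ j₀
          · rw [if_pos hq]
            by_contra hcon
            have hle := hbnd d (j₀-1) hcon
            have hlt := id2 (j₀-1)
            rw [show j₀ - 1 + 1 = j₀ by omega, hw0] at hlt
            omega
          · rw [if_neg hq]
        rw [hz1, hz2]
        simpa using hc0
      · rw [if_neg h2]
        simpa using hc0
    · intro i j hne hw
      rw [hco2 i j] at hne
      by_cases h1 : i = d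
      · rw [if_pos h1, if_neg (by omega)] at hne; simp at hne
      · rw [if_neg h1] at hne
        by_cases h2 : i = e
        · rw [if_pos h2] at hne
          subst h2
          rcases (by by_contra hcon; push_neg at hcon; rw [hcon.1, hcon.2.1, hcon.2.2] at hne; simp at hne :
            (P.coeff e).coeff j ≠ 0 ∨ (if q0 ≤ j then pd.coeff (j - q0) else 0) ≠ 0
              ∨ (if 1 ≤ j then pd.coeff (j-1) else 0) ≠ 0) with hA | hB | hC
          · exact huniq e j hA hw
          · by_cases hq : q0 ≤ j
            · rw [if_pos hq] at hB
              have hwj : mwt q0 d (j - q0) = ω := by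
                rw [← id1 (j - q0), show j - q0 + q0 = j by omega, hw]
              exact absurd ((huniq d (j - q0) hB hwj).1).symm hcase
            · rw [if_neg hq] at hB; simp at hB
          · by_cases hq : 1 ≤ j
            · rw [if_pos hq] at hC
              have hle := hbnd d (j-1) hC
              have hlt := id2 (j-1)
              rw [show j - 1 + 1 = j by omega, hw] at hlt
              omega
            · rw [if_neg hq] at hC; simp at hC
        · rw [if_neg h2] at hne
          simp only [add_zero] at hne
          exact huniq i j hne hw




open Polynomial Finset


variable [Fintype F] [DecidableEq F] {q0 : ℕ}

/-- number of distinct roots of a divisor of `X^q - X`. -/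
lemma card_filter_eval_eq (h : Polynomial F) (hne : h ≠ 0)
    (hdvd : h ∣ (X ^ (Fintype.card F) - X)) :
    (Finset.univ.filter fun b : F => h.eval b = 0).card = h.natDegree := by
  have h1q : 1 < Fintype.card F := Fintype.one_lt_card
  have hXq : (X ^ (Fintype.card F) - X : F[X]) ≠ 0 :=
    FiniteField.X_pow_card_sub_X_ne_zero F h1q
  have hroots : (X ^ (Fintype.card F) - X : F[X]).roots = Finset.univ.val :=
    FiniteField.roots_X_pow_card_sub_X F
  have hnatdeg : (X ^ (Fintype.card F) - X : F[X]).natDegree = Fintype.card F :=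
    FiniteField.X_pow_card_sub_X_natDegree_eq F h1q
  have hsplits : Splits (X ^ (Fintype.card F) - X : F[X]) := by
    rw [splits_iff_card_roots, hroots, hnatdeg]
    simp
  have hsp : Splits h := hsplits.of_dvd hXq hdvd
  have hcard : h.roots.card = h.natDegree := (splits_iff_card_roots).1 hsp
  have hle : h.roots ≤ (X ^ (Fintype.card F) - X : F[X]).roots :=
    Polynomial.roots.le_of_dvd hXq hdvd
  have hnodup : h.roots.Nodup := by
    apply Multiset.nodup_of_le hle
    rw [hroots]
    exact Finset.univ.nodup
  have hset : Finset.univ.filter (fun b : F => h.eval b = 0) = h.roots.toFinset := by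
    ext b
    simp [Polynomial.mem_roots, hne, Polynomial.IsRoot.def]
  rw [hset, Multiset.toFinset_card_of_nodup hnodup, hcard]


lemma M_card (hq02 : 2 ≤ q0) (hF : Fintype.card F = q0 ^ 2)
    (hfrobP : ∀ u v : Polynomial F, (u + v) ^ q0 = u ^ q0 + v ^ q0) :
    (Finset.univ.filter fun a : F => a ^ q0 + a = 0).card = q0 := by
  set f : Polynomial F := X ^ q0 + X with hf
  have hdeg : f.degree = (q0 : ℕ∞) := by
    rw [hf]
    rw [Polynomial.degree_add_eq_left_of_degree_lt]
    · exact Polynomial.degree_X_pow q0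
    · rw [Polynomial.degree_X_pow, Polynomial.degree_X]
      exact_mod_cast hq02.trans_lt' (by norm_num)
  have hndeg : f.natDegree = q0 := Polynomial.natDegree_eq_of_degree_eq_some hdeg
  have hne : f ≠ 0 := Polynomial.ne_zero_of_natDegree_gt (n := 0) (by rw [hndeg]; omega)
  have hdvd : f ∣ (X ^ (Fintype.card F) - X) := by
    have hpow : f ^ q0 = X ^ (q0 * q0) + X ^ q0 := by
      rw [hf, hfrobP, ← pow_mul]
    have hXq : (X ^ (Fintype.card F) - X : F[X]) = f ^ q0 - f := by
      rw [hpow, hf, hF, pow_two]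
      ring
    rw [hXq]
    exact dvd_sub (dvd_pow_self f (by omega)) dvd_rfl
  have hcf := card_filter_eval_eq f hne hdvd
  rw [hndeg] at hcf
  have hset2 : (Finset.univ.filter fun a : F => a ^ q0 + a = 0)
      = Finset.univ.filter (fun b : F => f.eval b = 0) := by
    ext a
    simp [hf]
  rw [hset2, hcf]

lemma fiber_card (hq02 : 2 ≤ q0) (hF : Fintype.card F = q0 ^ 2)
    (hfrobF : ∀ u v : F, (u + v) ^ q0 = u ^ q0 + v ^ q0)
    (a : F) (ha : a ^ q0 + a ≠ 0) :
    (Finset.univ.filter fun b : F => b ^ (q0+1) = a ^ q0 + a).card = q0 + 1 := by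
  set c := a ^ q0 + a with hc
  have hcq : c ^ q0 = c := by
    rw [hc, hfrobF, ← pow_mul, ← pow_two, ← hF, FiniteField.pow_card, add_comm]
  have hc1 : c ^ (q0 - 1) = 1 := by
    have h1 : c * c ^ (q0 - 1) = c * 1 := by
      rw [mul_one, ← pow_succ', show q0 - 1 + 1 = q0 by omega, hcq]
    exact mul_left_cancel₀ ha h1
  set h : Polynomial F := X ^ (q0+1) - C c with hh
  have hdeg : h.degree = ((q0+1 : ℕ) : ℕ∞) := by
    rw [hh, Polynomial.degree_sub_eq_left_of_degree_lt, Polynomial.degree_X_pow]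
    · rfl
    apply lt_of_le_of_lt (Polynomial.degree_C_le)
    rw [Polynomial.degree_X_pow]
    exact_mod_cast Nat.succ_pos q0
  have hndeg : h.natDegree = q0 + 1 := Polynomial.natDegree_eq_of_degree_eq_some hdeg
  have hne : h ≠ 0 := Polynomial.ne_zero_of_natDegree_gt (n := 0) (by rw [hndeg]; omega)
  have hexp : (q0+1) * (q0-1) = q0^2 - 1 := by
    obtain ⟨m, rfl⟩ : ∃ m, q0 = m + 1 := ⟨q0 - 1, by omega⟩
    simp only [Nat.add_sub_cancel]
    have h2 : (m + 1 + 1) * m + 1 = (m + 1)^2 := by ring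
    omega
  have hdvd : h ∣ (X ^ (Fintype.card F) - X) := by
    have d1 : h ∣ (X ^ (q0+1)) ^ (q0-1) - (C c) ^ (q0-1) :=
      sub_dvd_pow_sub_pow _ _ _
    rw [← Polynomial.C_pow, hc1, Polynomial.C_1, ← pow_mul, hexp] at d1
    have hXq : (X ^ (Fintype.card F) - X : F[X]) = X * (X ^ (q0^2 - 1) - 1) := by
      have h1 : q0 ^ 2 - 1 + 1 = q0 ^ 2 := by
        have : 1 ≤ q0 ^ 2 := by nlinarith
        omega
      rw [hF, mul_sub, mul_one, ← pow_succ', h1]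
    rw [hXq]
    exact Dvd.dvd.mul_left d1 X
  have hcf := card_filter_eval_eq h hne hdvd
  rw [hndeg] at hcf
  have hset2 : (Finset.univ.filter fun b : F => b ^ (q0+1) = a ^ q0 + a)
      = Finset.univ.filter (fun b : F => h.eval b = 0) := by
    ext b
    simp [hh, sub_eq_zero, hc]
  rw [hset2, hcf]

lemma offM_card (hq02 : 2 ≤ q0) (hF : Fintype.card F = q0 ^ 2)
    (hfrobP : ∀ u v : Polynomial F, (u + v) ^ q0 = u ^ q0 + v ^ q0) :
    (Finset.univ.filter fun a : F => ¬(a ^ q0 + a = 0)).card = q0 ^ 2 - q0 := by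
  have h1 := Finset.card_filter_add_card_filter_not
    (s := (Finset.univ : Finset F)) (p := fun a : F => a ^ q0 + a = 0)
  rw [M_card hq02 hF hfrobP, Finset.card_univ, hF] at h1
  omega

lemma no_vanish (hq02 : 2 ≤ q0) (hF : Fintype.card F = q0 ^ 2)
    (hfrobF : ∀ u v : F, (u + v) ^ q0 = u ^ q0 + v ^ q0)
    (hfrobP : ∀ u v : Polynomial F, (u + v) ^ q0 = u ^ q0 + v ^ q0)
    {P : Polynomial (Polynomial F)} {ω i₀ j₀ : ℕ}
    (htop : IsTop q0 P ω i₀ j₀)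
    (hcan : ∃ i' j', i' ≤ q0 ∧ j' < q0 ^ 2 - q0 ∧ mwt q0 i' j' = ω)
    (hvan : ∀ a b : F, b ^ (q0+1) = a ^ q0 + a → a ^ q0 + a ≠ 0 → pev a b P = 0) :
    False := by
  -- terminal case
  have hterm : ∀ (P : Polynomial (Polynomial F)) (i₀ j₀ : ℕ), P.natDegree ≤ q0 →
      IsTop q0 P ω i₀ j₀ →
      (∀ a b : F, b ^ (q0+1) = a ^ q0 + a → a ^ q0 + a ≠ 0 → pev a b P = 0) → False := by
    clear htop hvan i₀ j₀ P
    intro P i₀ j₀ hdeg htop hvan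
    obtain ⟨hc0, hw0, hbnd, huniq⟩ := htop
    obtain ⟨i', j', hi', hj', hw'⟩ := hcan
    have hci : P.coeff i₀ ≠ 0 := fun h => hc0 (by rw [h]; simp)
    have hi₀ : i₀ ≤ q0 := (Polynomial.le_natDegree_of_ne_zero hci).trans hdeg
    obtain ⟨hii, hjj⟩ := mwt_inj hi₀ hi' (hw0.trans hw'.symm)
    have hj₀ : j₀ < q0 ^ 2 - q0 := by omega
    set r := P.coeff i₀ with hr
    have hrdeg : r.natDegree ≤ j₀ := by
      rw [Polynomial.natDegree_le_iff_coeff_eq_zero]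
      intro N hN
      by_contra hcon
      have := mwt_right_le.1 (hw0 ▸ hbnd i₀ N hcon)
      omega
    have hveval : ∀ a : F, a ^ q0 + a ≠ 0 → r.eval a = 0 := by
      intro a ha
      set s := P.map (Polynomial.evalRingHom a) with hs
      have hsd : s.natDegree ≤ q0 := (Polynomial.natDegree_map_le).trans hdeg
      have hz : s = 0 := by
        apply Polynomial.eq_zero_of_natDegree_lt_card_of_eval_eq_zero' s
          (Finset.univ.filter fun b : F => b ^ (q0+1) = a ^ q0 + a)
        · intro b hb
          rw [Finset.mem_filter] at hb
          rw [hs, Polynomial.eval_map]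
          exact hvan a b hb.2 ha
        · rw [fiber_card hq02 hF hfrobF a ha]
          omega
      have : s.coeff i₀ = 0 := by rw [hz]; simp
      rwa [hs, Polynomial.coeff_map] at this
    have : r = 0 := by
      apply Polynomial.eq_zero_of_natDegree_lt_card_of_eval_eq_zero' r
        (Finset.univ.filter fun a : F => ¬(a ^ q0 + a = 0))
      · intro a ha
        rw [Finset.mem_filter] at ha
        exact hveval a ha.2
      · rw [offM_card hq02 hF hfrobP]
        omega
    exact hci this
  -- induction on the degree
  suffices H : ∀ n (P : Polynomial (Polynomial F)) (i₀ j₀ : ℕ), P.natDegree ≤ n →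
      IsTop q0 P ω i₀ j₀ →
      (∀ a b : F, b ^ (q0+1) = a ^ q0 + a → a ^ q0 + a ≠ 0 → pev a b P = 0) → False by
    exact H P.natDegree P i₀ j₀ le_rfl htop hvan
  intro n
  induction n with
  | zero => exact fun P i₀ j₀ h ht hv => hterm P i₀ j₀ (by omega) ht hv
  | succ n ih =>
    intro P i₀ j₀ hdn htop hvan
    by_cases hsmall : P.natDegree ≤ q0
    · exact hterm P i₀ j₀ hsmall htop hvan
    · obtain ⟨P', hd', hev', i₁, j₁, htop'⟩ := red_step hq02 htop (by omega)
      exact ih P' i₁ j₁ (by omega) htop'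
        (fun a b hb ha => by rw [hev' a b hb]; exact hvan a b hb ha)




open Polynomial Finset


/-- transfer from `MvPolynomial (Fin 2) F` to `F[x][y]` (y = outer variable). -/
def phi : MvPolynomial (Fin 2) F →ₐ[F] Polynomial (Polynomial F) :=
  MvPolynomial.aeval ![Polynomial.C Polynomial.X, Polynomial.X]

def psi : Polynomial (Polynomial F) →ₐ[F] MvPolynomial (Fin 2) F :=
  Polynomial.aevalTower
    (Polynomial.aeval (MvPolynomial.X 0) : Polynomial F →ₐ[F] MvPolynomial (Fin 2) F)
    (MvPolynomial.X 1)

lemma psi_phi (G : MvPolynomial (Fin 2) F) : psi (phi G) = G := by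
  have : (psi.comp (phi : MvPolynomial (Fin 2) F →ₐ[F] Polynomial (Polynomial F))) =
      AlgHom.id F (MvPolynomial (Fin 2) F) := by
    apply MvPolynomial.algHom_ext
    intro i
    fin_cases i
    · simp [phi, psi]
    · simp [phi, psi]
  calc psi (phi G) = (psi.comp phi) G := rfl
    _ = G := by rw [this]; rfl

lemma pev_phi (a b : F) (G : MvPolynomial (Fin 2) F) :
    pev a b (phi G) = MvPolynomial.aeval ![a, b] G := by
  induction G using MvPolynomial.induction_on with
  | C r => simp [phi, pev]
  | add p q hp hq => simp [map_add, hp, hq]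
  | mul_X p n hp =>
    simp only [map_mul, hp]
    congr 1
    fin_cases n
    · simp [phi]
    · simp [phi]

lemma mwt_shift (q0 x y : ℕ) : mwt q0 (x + (q0+1)) y = mwt q0 x (y + q0) := by
  unfold mwt; ring

end HermAux

set_option maxHeartbeats 3200000 in
open HermAux Polynomial in
/-- Hermitian LRC codes from the projection on `x`: evaluating
`W = span{x^j y^i : j ≤ t, i ≤ q0-1}` at the points `S` of the Hermitian curve lying over
`𝔽_q \ M` gives an injective map, hence a linear code of length `q0³ - q0`, dimension
`(t+1)q0`, and minimum distance at least `(q0³ - q0) - t(q0+1) - q0(q0-1)`. -/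
theorem hermitian_lrc_x_projection
    (q0 t : ℕ) (hq0 : IsPrimePow q0) (ht : 1 ≤ t)
    (hlt : t * (q0 + 1) + q0 * (q0 - 1) < q0 ^ 3 - q0)
    (F : Type*) [Field F] [Fintype F] [DecidableEq F] (hF : Fintype.card F = q0 ^ 2)
    (M : Finset F) (hM : M = Finset.univ.filter fun a : F => a ^ q0 + a = 0)
    (S : Finset (F × F))
    (hS : S = Finset.univ.filter fun p : F × F =>
      p.1 ^ q0 + p.1 = p.2 ^ (q0 + 1) ∧ p.1 ∉ M)
    (W : Submodule F (MvPolynomial (Fin 2) F))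
    (hW : W = Submodule.span F
      {p : MvPolynomial (Fin 2) F | ∃ j i : ℕ, j ≤ t ∧ i ≤ q0 - 1 ∧
        p = MvPolynomial.X 0 ^ j * MvPolynomial.X 1 ^ i})
    (C : Submodule F (S → F)) (hC : C = Submodule.map (evalMv S) W) :
    S.card = q0 ^ 3 - q0 ∧
    Set.InjOn (⇑(evalMv S)) (W : Set (MvPolynomial (Fin 2) F)) ∧
    Module.finrank F C = (t + 1) * q0 ∧
    (∀ c ∈ C, ∀ c' ∈ C, c ≠ c' →
      (q0 ^ 3 - q0) - t * (q0 + 1) - q0 * (q0 - 1) ≤ hammingDist c c') := by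
  classical
  have hq02 : 2 ≤ q0 := hq0.two_le
  obtain ⟨pp, kk, hppP, hkk, hpk⟩ := hq0
  have hppnat : pp.Prime := Nat.prime_iff.2 hppP
  have hcast0 : (q0 : F) = 0 := by
    have h0 : ((q0 ^ 2 : ℕ) : F) = 0 := by
      rw [← hF]; exact FiniteField.cast_card_eq_zero F
    push_cast at h0
    exact pow_eq_zero_iff (n := 2) (by omega) |>.1 h0
  have hpp0 : (pp : F) = 0 := by
    have hpow : ((pp : F)) ^ kk = 0 := by
      rw [← Nat.cast_pow, hpk, hcast0]
    exact pow_eq_zero_iff (by omega) |>.1 hpow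
  have hrc : ringChar F = pp := by
    have hdvd : ringChar F ∣ pp := ringChar.dvd (by exact_mod_cast hpp0)
    rcases (Nat.Prime.eq_one_or_self_of_dvd hppnat _ hdvd) with h1 | h2
    · exfalso
      have hcast := CharP.cast_eq_zero F (ringChar F)
      rw [h1] at hcast
      simp at hcast
    · exact h2
  haveI : CharP F pp := hrc ▸ ringChar.charP F
  haveI : Fact pp.Prime := ⟨hppnat⟩
  haveI : ExpChar F pp := ExpChar.prime hppnat
  haveI : ExpChar (Polynomial F) pp := ExpChar.prime hppnat
  have hfrobF : ∀ u v : F, (u + v) ^ q0 = u ^ q0 + v ^ q0 := by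
    intro u v
    rw [← hpk]
    exact add_pow_char_pow u v pp kk
  have hfrobP : ∀ u v : Polynomial F, (u + v) ^ q0 = u ^ q0 + v ^ q0 := by
    intro u v
    rw [← hpk]
    exact add_pow_char_pow u v pp kk
  have hq3 : (q0 ^ 2 - q0) * (q0 + 1) = q0 ^ 3 - q0 := by
    have e1 : q0 ^ 2 * (q0 + 1) = q0 ^ 3 + q0 ^ 2 := by ring
    have e2 : q0 * (q0 + 1) = q0 ^ 2 + q0 := by ring
    have e3 : q0 ≤ q0 ^ 2 := by nlinarith
    have e4 : q0 ≤ q0 ^ 3 := by nlinarith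
    rw [Nat.sub_mul, e1, e2]
    omega
  have ht' : t < q0 ^ 2 - q0 := by
    have h1 : t * (q0 + 1) < (q0 ^ 2 - q0) * (q0 + 1) := by omega
    exact Nat.lt_of_mul_lt_mul_right h1
  have hmemS : ∀ a b : F, b ^ (q0+1) = a ^ q0 + a → a ^ q0 + a ≠ 0 → (a, b) ∈ S := by
    intro a b hb ha
    rw [hS, Finset.mem_filter]
    refine ⟨Finset.mem_univ _, hb.symm, ?_⟩
    rw [hM, Finset.mem_filter]
    push_neg
    exact fun _ => ha
  have hmemS' : ∀ p : F × F, p ∈ S → p.1 ^ q0 + p.1 = p.2 ^ (q0+1) ∧ p.1 ^ q0 + p.1 ≠ 0 := by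
    intro p hp
    rw [hS, Finset.mem_filter] at hp
    refine ⟨hp.2.1, ?_⟩
    have hnm := hp.2.2
    rw [hM, Finset.mem_filter] at hnm
    push_neg at hnm
    exact hnm (Finset.mem_univ _)
  have hScard : S.card = q0 ^ 3 - q0 := by
    rw [Finset.card_eq_sum_card_fiberwise (f := Prod.fst) (t := Finset.univ)
      (fun x _ => Finset.mem_univ _)]
    have hfib : ∀ a : F, (S.filter fun p => p.1 = a).card =
        if a ^ q0 + a = 0 then 0 else q0 + 1 := by
      intro a
      by_cases ha : a ^ q0 + a = 0
      · rw [if_pos ha, Finset.card_eq_zero, Finset.filter_eq_empty_iff]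
        rintro ⟨x, y⟩ hp
        intro hxa
        have hxa' : x = a := hxa
        subst hxa'
        exact (hmemS' _ hp).2 ha
      · rw [if_neg ha]
        have himg : S.filter (fun p => p.1 = a) =
            (Finset.univ.filter fun b : F => b ^ (q0+1) = a ^ q0 + a).image
              (fun b => (a, b)) := by
          ext ⟨x, y⟩
          simp only [Finset.mem_filter, Finset.mem_image, Finset.mem_univ, true_and]
          constructor
          · rintro ⟨hp, hxa⟩
            have hxa' : x = a := hxa
            subst hxa'
            exact ⟨y, ((hmemS' _ hp).1).symm, rfl⟩
          · rintro ⟨b, hb, heq⟩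
            have h1 : a = x := congrArg Prod.fst heq
            have h2 : b = y := congrArg Prod.snd heq
            subst h1; subst h2
            exact ⟨hmemS a b hb ha, rfl⟩
        rw [himg, Finset.card_image_of_injective _
            (fun b b' hbb => congrArg Prod.snd hbb),
          fiber_card hq02 hF hfrobF a ha]
    calc ∑ a : F, (S.filter fun p => p.1 = a).card
        = ∑ a : F, if a ^ q0 + a = 0 then 0 else q0 + 1 :=
          Finset.sum_congr rfl (fun a _ => hfib a)
      _ = q0 ^ 3 - q0 := by
          rw [Finset.sum_ite, Finset.sum_const, Finset.sum_const, smul_eq_mul, smul_eq_mul,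
            mul_zero, zero_add, offM_card hq02 hF hfrobP, hq3]
  have hbox : ∀ D ∈ W, ∀ i j, ((phi D).coeff i).coeff j ≠ 0 → i < q0 ∧ j ≤ t := by
    intro D hD
    rw [hW] at hD
    refine Submodule.span_induction ?_ ?_ ?_ ?_ hD
    · rintro x ⟨j', i', hj', hi', rfl⟩
      intro i j hne
      have hphix : phi (MvPolynomial.X 0 ^ j' * MvPolynomial.X 1 ^ i' : MvPolynomial (Fin 2) F)
          = Polynomial.C (Polynomial.X ^ j') * Polynomial.X ^ i' := by
        rw [map_mul, map_pow, map_pow]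
        simp [phi]
      rw [hphix, Polynomial.C_mul_X_pow_eq_monomial, Polynomial.coeff_monomial] at hne
      by_cases hii : i' = i
      · subst hii
        rw [if_pos rfl, Polynomial.coeff_X_pow] at hne
        by_cases hjj : j = j'
        · subst hjj
          exact ⟨by omega, by omega⟩
        · rw [if_neg hjj] at hne
          simp at hne
      · rw [if_neg hii] at hne
        simp at hne
    · intro i j hne
      rw [map_zero] at hne
      simp at hne
    · intro x y _ _ ihx ihy i j hne
      rw [map_add, Polynomial.coeff_add, Polynomial.coeff_add] at hne
      by_cases hx0 : ((phi x).coeff i).coeff j ≠ 0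
      · exact ihx i j hx0
      · push_neg at hx0
        rw [hx0, zero_add] at hne
        exact ihy i j hne
    · intro a x _ ih i j hne
      rw [map_smul, Polynomial.coeff_smul, Polynomial.coeff_smul, smul_eq_mul] at hne
      exact ih i j (right_ne_zero_of_mul hne)
  have hkey : ∀ D ∈ W, (∀ p : F × F, p ∈ S → MvPolynomial.aeval ![p.1, p.2] D = 0) → D = 0 := by
    intro D hD hvan
    have hphiD : phi D = 0 := by
      by_contra hPne
      obtain ⟨ω, i₀, j₀, htop⟩ := exists_top hPne (fun i j h => ((hbox D hD i j h).1).le)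
      obtain ⟨hI, hJ⟩ := hbox D hD i₀ j₀ htop.1
      refine no_vanish hq02 hF hfrobF hfrobP htop
        ⟨i₀, j₀, by omega, by omega, htop.2.1⟩ ?_
      intro a b hb ha
      rw [pev_phi]
      exact hvan (a, b) (hmemS a b hb ha)
    rw [← psi_phi D, hphiD, map_zero]
  have hev : ∀ (G : MvPolynomial (Fin 2) F) (p : ↥S),
      evalMv S G p = MvPolynomial.aeval ![(p : F × F).1, (p : F × F).2] G := by
    intro G p
    rfl
  have hinj : Set.InjOn (⇑(evalMv S)) (W : Set (MvPolynomial (Fin 2) F)) := by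
    intro x hx y hy hxy
    have hsub : x - y ∈ W := W.sub_mem hx hy
    have hz : x - y = 0 := by
      apply hkey _ hsub
      intro p hp
      rw [map_sub]
      have hcomp := congrFun hxy ⟨p, hp⟩
      rw [hev x ⟨p, hp⟩, hev y ⟨p, hp⟩] at hcomp
      simp only at hcomp
      rw [hcomp, sub_self]
    exact sub_eq_zero.1 hz
  -- finrank
  set fam2 : Fin (t+1) × Fin q0 → MvPolynomial (Fin 2) F :=
    fun m => MvPolynomial.X 0 ^ (m.1 : ℕ) * MvPolynomial.X 1 ^ (m.2 : ℕ) with hfam2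
  have hWspan : W = Submodule.span F (Set.range fam2) := by
    rw [hW]
    congr 1
    ext p
    constructor
    · rintro ⟨j', i', hj', hi', rfl⟩
      exact ⟨(⟨j', by omega⟩, ⟨i', by omega⟩), rfl⟩
    · rintro ⟨m, rfl⟩
      exact ⟨m.1, m.2, by omega, by omega, rfl⟩
  have hlin : LinearIndependent F fam2 := by
    have hmono : fam2 = (fun s : (Fin 2 →₀ ℕ) => MvPolynomial.monomial s (1 : F)) ∘
        (fun m : Fin (t+1) × Fin q0 =>
          Finsupp.single 0 (m.1 : ℕ) + Finsupp.single 1 (m.2 : ℕ)) := by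
      funext m
      simp only [Function.comp_apply, hfam2]
      rw [MvPolynomial.X_pow_eq_monomial, MvPolynomial.X_pow_eq_monomial,
        MvPolynomial.monomial_mul, one_mul]
    rw [hmono]
    apply LinearIndependent.comp
    · have hb := (MvPolynomial.basisMonomials (Fin 2) F).linearIndependent
      rwa [MvPolynomial.coe_basisMonomials] at hb
    · intro m m' hmm
      have h0 := congrArg (fun f : Fin 2 →₀ ℕ => f 0) hmm
      have h1 := congrArg (fun f : Fin 2 →₀ ℕ => f 1) hmm
      simp only [Finsupp.add_apply, Finsupp.single_apply] at h0 h1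
      norm_num at h0 h1
      exact Prod.ext (Fin.ext h0) (Fin.ext h1)
  haveI hWfd : FiniteDimensional F ↥W := by
    rw [hWspan]
    exact FiniteDimensional.span_of_finite F (Set.finite_range fam2)
  have hWrank : Module.finrank F ↥W = (t+1) * q0 := by
    rw [hWspan, finrank_span_eq_card hlin]
    simp
  set L : ↥W →ₗ[F] (↥S → F) := (evalMv S).comp W.subtype with hL
  have hLker : LinearMap.ker L = ⊥ := by
    rw [LinearMap.ker_eq_bot']
    intro m hm
    have hz : (m : MvPolynomial (Fin 2) F) = 0 := by
      apply hkey _ m.2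
      intro p hp
      have := congrFun hm ⟨p, hp⟩
      rw [← hev _ ⟨p, hp⟩]
      exact this
    exact Subtype.ext hz
  have hLrange : LinearMap.range L = C := by
    rw [hC, hL, LinearMap.range_comp, Submodule.range_subtype]
  have hrankC : Module.finrank F ↥C = (t+1) * q0 := by
    have hrnW := LinearMap.finrank_range_add_finrank_ker L
    rw [hLker, hLrange, finrank_bot, hWrank] at hrnW
    omega
  refine ⟨hScard, hinj, hrankC, ?_⟩
  -- minimum distance
  intro c hc c' hc' hcc
  rw [hC] at hc hc'
  obtain ⟨f1, hf1W, hf1e⟩ := hc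
  obtain ⟨f2, hf2W, hf2e⟩ := hc'
  set D := f1 - f2 with hDdef
  have hDW : D ∈ W := W.sub_mem hf1W hf2W
  set P : Polynomial (Polynomial F) := phi D with hP
  have hDev : ∀ p : ↥S, pev (p : F × F).1 (p : F × F).2 P = c p - c' p := by
    intro p
    rw [hP, pev_phi, ← hev]
    rw [hDdef, map_sub]
    rw [← hf1e, ← hf2e]
    rfl
  have hPne : P ≠ 0 := by
    intro h0
    apply hcc
    funext p
    have h := hDev p
    rw [h0, map_zero] at h
    exact sub_eq_zero.1 h.symm
  obtain ⟨ω, i₀, j₀, htopP⟩ := exists_top hPne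
    (fun i j h => ((hbox D hDW i j (by rwa [← hP])).1).le)
  obtain ⟨hI, hJ⟩ := hbox D hDW i₀ j₀ (by rw [← hP]; exact htopP.1)
  set Qv := q0 ^ 2 - q0 with hQv
  set Mst : Finset (ℕ × ℕ) :=
    (Finset.range (Qv - t) ×ˢ Finset.range (q0 - i₀ + 1)) ∪
    (Finset.range (Qv - t - q0) ×ˢ Finset.Icc (q0 + 1 - i₀) q0) with hMst
  have hdisj : Disjoint (Finset.range (Qv - t) ×ˢ Finset.range (q0 - i₀ + 1))
      (Finset.range (Qv - t - q0) ×ˢ Finset.Icc (q0 + 1 - i₀) q0) := by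
    rw [Finset.disjoint_left]
    rintro ⟨u, v⟩ h1 h2
    rw [Finset.mem_product, Finset.mem_range, Finset.mem_range] at h1
    rw [Finset.mem_product, Finset.mem_Icc] at h2
    omega
  have hMstcard : Mst.card = (Qv - t) * (q0 - i₀ + 1) + (Qv - t - q0) * i₀ := by
    rw [hMst, Finset.card_union_of_disjoint hdisj, Finset.card_product, Finset.card_product,
      Finset.card_range, Finset.card_range, Finset.card_range, Nat.card_Icc]
    congr 2
    omega
  have hcount : Qv * (q0 + 1) ≤ Mst.card + (t * (q0+1) + q0 * (q0-1)) := by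
    rw [hMstcard]
    have hexp : Qv * (q0+1) = t * (q0+1) + (Qv - t) * (q0 - i₀ + 1) + (Qv - t) * i₀ := by
      have h1 : Qv = t + (Qv - t) := by omega
      have h2 : q0 + 1 = (q0 - i₀ + 1) + i₀ := by omega
      calc Qv * (q0+1) = (t + (Qv - t)) * ((q0 - i₀ + 1) + i₀) := by rw [← h1, ← h2]
        _ = t * ((q0 - i₀ + 1) + i₀) + (Qv - t) * (q0 - i₀ + 1) + (Qv - t) * i₀ := by ring
        _ = t * (q0+1) + (Qv - t) * (q0 - i₀ + 1) + (Qv - t) * i₀ := by rw [← h2]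
    rcases le_or_gt (Qv - t) q0 with hcase | hcase
    · have e2 : Qv - t - q0 = 0 := by omega
      rw [e2, Nat.zero_mul, Nat.add_zero]
      have hkey2 : (Qv - t) * i₀ ≤ q0 * (q0 - 1) := Nat.mul_le_mul hcase (by omega)
      omega
    · have hsplitA : Qv - t = q0 + (Qv - t - q0) := by omega
      have hsplit2 : (Qv - t) * i₀ = q0 * i₀ + (Qv - t - q0) * i₀ := by
        conv_lhs => rw [hsplitA]
        rw [Nat.add_mul]
      have hkey2 : q0 * i₀ ≤ q0 * (q0 - 1) := Nat.mul_le_mul_left _ (by omega)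
      omega
  have hGood : ∀ u v, (u, v) ∈ Mst → ∃ i' j', i' ≤ q0 ∧ j' < Qv ∧
      mwt q0 i' j' = ω + mwt q0 v u := by
    intro u v hm
    rw [hMst, Finset.mem_union] at hm
    rcases hm with h1 | h2
    · rw [Finset.mem_product, Finset.mem_range, Finset.mem_range] at h1
      refine ⟨i₀ + v, j₀ + u, by omega, by omega, ?_⟩
      rw [mwt_add, htopP.2.1]
    · rw [Finset.mem_product, Finset.mem_range, Finset.mem_Icc] at h2
      have hiv : q0 + 1 ≤ i₀ + v := by omega
      refine ⟨i₀ + v - (q0+1), j₀ + u + q0, by omega, by omega, ?_⟩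
      have hcalc : mwt q0 (i₀ + v - (q0+1)) (j₀ + u + q0) = mwt q0 (i₀ + v) (j₀ + u) := by
        rw [← mwt_shift q0 (i₀ + v - (q0+1)) (j₀ + u)]
        congr 1
        omega
      rw [hcalc, mwt_add, htopP.2.1]
  set Z : Finset ↥S :=
    Finset.univ.filter (fun p : ↥S => pev (p : F × F).1 (p : F × F).2 P = 0) with hZ
  set π : (↥S → F) →ₗ[F] (↥Z → F) :=
    LinearMap.funLeft F F (fun z : ↥Z => (z : ↥S)) with hπ
  set fam : ↥Mst → (↥S → F) := fun m p =>
    pev (p : F × F).1 (p : F × F).2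
      (P * (Polynomial.C (Polynomial.X ^ m.val.1) * Polynomial.X ^ m.val.2)) with hfam
  have hfam_apply : ∀ (m : ↥Mst) (p : ↥S), fam m p =
      pev (p : F × F).1 (p : F × F).2
        (P * (Polynomial.C (Polynomial.X ^ m.val.1) * Polynomial.X ^ m.val.2)) := by
    intro m p
    rw [hfam]
  have hπ_apply : ∀ (f : ↥S → F) (z : ↥Z), π f z = f (z : ↥S) := by
    intro f z
    rw [hπ, LinearMap.funLeft_apply]
  have hfamker : ∀ m, fam m ∈ LinearMap.ker π := by
    intro m
    rw [LinearMap.mem_ker]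
    ext z
    have hz2 : (z : ↥S) ∈ Finset.univ.filter
        (fun p : ↥S => pev (p : F × F).1 (p : F × F).2 P = 0) := by
      rw [← hZ]; exact z.2
    have hz : pev ((z : ↥S) : F × F).1 ((z : ↥S) : F × F).2 P = 0 :=
      (Finset.mem_filter.1 hz2).2
    rw [hπ_apply, hfam_apply, map_mul, hz, zero_mul]
    simp
  have hind : LinearIndependent F fam := by
    rw [Fintype.linearIndependent_iff]
    intro g hg
    by_contra hgz
    push_neg at hgz
    obtain ⟨m, hgm⟩ := hgz
    set G : Polynomial (Polynomial F) := ∑ m' ∈ Mst.attach,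
      Polynomial.C (Polynomial.C (g m')) *
        (Polynomial.C (Polynomial.X ^ m'.val.1) * Polynomial.X ^ m'.val.2) with hG
    have hterm : ∀ (m' : ↥Mst) (x : ℕ × ℕ),
        (((Polynomial.C (Polynomial.C (g m')) *
          (Polynomial.C (Polynomial.X ^ m'.val.1) * Polynomial.X ^ m'.val.2)).coeff x.2).coeff x.1)
          = if m'.val = x then g m' else 0 := by
      intro m' x
      rw [← mul_assoc, ← map_mul, Polynomial.C_mul_X_pow_eq_monomial, Polynomial.coeff_monomial]
      by_cases hv : m'.val.2 = x.2
      · rw [if_pos hv, Polynomial.C_mul_X_pow_eq_monomial, Polynomial.coeff_monomial]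
        by_cases hu : m'.val.1 = x.1
        · rw [if_pos hu, if_pos (Prod.ext hu hv)]
        · rw [if_neg hu, if_neg (fun h => hu (congrArg Prod.fst h))]
      · rw [if_neg hv, if_neg (fun h => hv (congrArg Prod.snd h))]
        simp
    have hGco : ∀ x : ℕ × ℕ, ((G.coeff x.2).coeff x.1)
        = if h : x ∈ Mst then g ⟨x, h⟩ else 0 := by
      intro x
      rw [hG, coeff2_sum, Finset.sum_congr rfl (fun m' _ => hterm m' x)]
      by_cases hx : x ∈ Mst
      · rw [dif_pos hx, Finset.sum_eq_single (⟨x, hx⟩ : ↥Mst)]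
        · rw [if_pos rfl]
        · intro b _ hbne
          rw [if_neg (fun h => hbne (Subtype.ext h))]
        · intro habs
          exact absurd (Finset.mem_attach _ _) habs
      · rw [dif_neg hx]
        apply Finset.sum_eq_zero
        intro m' _
        rw [if_neg (fun h => hx (by rw [← h]; exact m'.2))]
    have hGne : G ≠ 0 := by
      intro h0
      apply hgm
      have hco := hGco m.val
      rw [h0] at hco
      simp only [Polynomial.coeff_zero] at hco
      rw [dif_pos m.2, Subtype.coe_eta] at hco
      exact hco.symm
    have hGbox : ∀ i j, (G.coeff i).coeff j ≠ 0 → i ≤ q0 := by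
      intro i j hne
      rw [hGco (j, i)] at hne
      by_cases hx : (j, i) ∈ Mst
      · rw [hMst, Finset.mem_union] at hx
        rcases hx with h1 | h2
        · rw [Finset.mem_product, Finset.mem_range, Finset.mem_range] at h1; omega
        · rw [Finset.mem_product, Finset.mem_range, Finset.mem_Icc] at h2; omega
      · rw [dif_neg hx] at hne; simp at hne
    obtain ⟨ω2, v₁, u₁, htG⟩ := exists_top hGne hGbox
    have hmem1 : (u₁, v₁) ∈ Mst := by
      by_contra hnm
      have hco := hGco (u₁, v₁)
      rw [dif_neg hnm] at hco
      exact htG.1 hco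
    have htPG := top_mul htopP htG
    obtain ⟨i', j', hi', hj', hw'⟩ := hGood u₁ v₁ hmem1
    refine no_vanish hq02 hF hfrobF hfrobP htPG ⟨i', j', hi', hj', ?_⟩ ?_
    · rw [hw', htG.2.1]
    · intro a b hb ha
      have hpS := hmemS a b hb ha
      have hcombo := congrFun hg ⟨(a, b), hpS⟩
      rw [Finset.sum_apply] at hcombo
      have hexpand : pev a b P * pev a b G
          = ∑ m' ∈ Mst.attach, g m' • fam m' ⟨(a, b), hpS⟩ := by
        rw [hG, map_sum, Finset.mul_sum]
        apply Finset.sum_congr rfl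
        intro m' _
        simp only [map_mul, pev_C, Polynomial.eval_C, hfam_apply, smul_eq_mul]
        ring
      rw [map_mul, hexpand, ← Finset.univ_eq_attach]
      simpa using hcombo
  have hindcard : Mst.card ≤ Module.finrank F ↥(LinearMap.ker π) := by
    have hfam' : LinearIndependent F
        (fun m : ↥Mst => (⟨fam m, hfamker m⟩ : ↥(LinearMap.ker π))) := by
      apply LinearIndependent.of_comp (LinearMap.ker π).subtype
      exact hind
    have hcard := hfam'.fintype_card_le_finrank
    rwa [Fintype.card_coe] at hcard
  have hsurj : Function.Surjective π :=
    LinearMap.funLeft_surjective_of_injective F F _ Subtype.val_injective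
  have hrn := LinearMap.finrank_range_add_finrank_ker π
  rw [LinearMap.range_eq_top.2 hsurj, finrank_top, Module.finrank_fintype_fun_eq_card,
    Module.finrank_fintype_fun_eq_card, Fintype.card_coe, Fintype.card_coe] at hrn
  have hZM : Z.card + Mst.card ≤ S.card := by omega
  have hham : hammingDist c c' =
      (Finset.univ.filter (fun p : ↥S =>
        ¬ (pev (p : F × F).1 (p : F × F).2 P = 0))).card := by
    show (Finset.univ.filter fun p : ↥S => c p ≠ c' p).card = _
    congr 1
    apply Finset.filter_congr
    intro p _
    have hd := hDev p
    simp only [ne_eq]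
    constructor
    · intro hne h0
      rw [hd] at h0
      exact hne (sub_eq_zero.1 h0)
    · intro hne h0
      apply hne
      rw [hd, h0, sub_self]
  have hsplitZ := Finset.card_filter_add_card_filter_not
      (s := (Finset.univ : Finset ↥S))
      (p := fun p : ↥S => pev (p : F × F).1 (p : F × F).2 P = 0)
  rw [Finset.card_univ, Fintype.card_coe] at hsplitZ
  rw [hham]
  rw [← hZ] at hsplitZ
  omega
end
end

section
/- Let q0 be a prime power, q = q0², and let t ≥ 1 be an integer. Let M = {a ∈ 𝔽_q : a^{q0} + a = 0}, let S = {(a,b) ∈ 𝔽_q × 𝔽_q : a^{q0} + a = b^{q0+1}, a ∉ M}, and let W ⊆ 𝔽_q[x,y] be the 𝔽_q-linear span of the monomials x^j y^i for 0 ≤ j ≤ t and 0 ≤ i ≤ q0-1, with C ⊆ 𝔽_q^S the image of W under the evaluation map F ↦ (F(a,b))_{(a,b) ∈ S}. Then for every F ∈ W and every a ∈ 𝔽_q \ M there is a univariate polynomial f ∈ 𝔽_q[y] of degree at most q0-1 such that F(a,b) = f(b) for all b with b^{q0+1} = a^{q0} + a; consequently C has all-symbol locality q0, where the recovering set of the coordinate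 (a,b) ∈ S is {(a,b') ∈ S : b' ≠ b}. -/
noncomputable section

lemma aeval_eq_eval' {F : Type*} [CommSemiring F] (v : Fin 2 → F) (p : MvPolynomial (Fin 2) F) :
    MvPolynomial.aeval v p = MvPolynomial.eval v p := by
  rw [← MvPolynomial.coe_aeval_eq_eval]; rfl

/-- On each fiber of the projection `(x,y) ↦ x` over `𝔽_q \ M`, every `G` in the code
space `W = span{x^j y^i : j ≤ t, i ≤ q0-1}` agrees with a univariate polynomial in `y` of
degree at most `q0 - 1`; consequently the evaluation code `C` has all-symbol locality
`q0`, the recovering set of a coordinate `(a,b) ∈ S` being `{(a,b') ∈ S : b' ≠ b}`. -/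
theorem hermitian_lrc_x_projection_locality
    (q0 t : ℕ) (hq0 : IsPrimePow q0) (ht : 1 ≤ t)
    (F : Type*) [Field F] [Fintype F] [DecidableEq F] (hF : Fintype.card F = q0 ^ 2)
    (M : Finset F) (hM : M = Finset.univ.filter fun a : F => a ^ q0 + a = 0)
    (S : Finset (F × F))
    (hS : S = Finset.univ.filter fun p : F × F =>
      p.1 ^ q0 + p.1 = p.2 ^ (q0 + 1) ∧ p.1 ∉ M)
    (W : Submodule F (MvPolynomial (Fin 2) F))
    (hW : W = Submodule.span F
      {p : MvPolynomial (Fin 2) F | ∃ j i : ℕ, j ≤ t ∧ i ≤ q0 - 1 ∧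
        p = MvPolynomial.X 0 ^ j * MvPolynomial.X 1 ^ i})
    (C : Submodule F (S → F)) (hC : C = Submodule.map (evalMv S) W) :
    (∀ G ∈ W, ∀ a : F, a ∉ M → ∃ f : Polynomial F, f.degree ≤ ((q0 - 1 : ℕ) : WithBot ℕ) ∧
        ∀ b : F, b ^ (q0 + 1) = a ^ q0 + a → MvPolynomial.eval ![a, b] G = f.eval b) ∧
    (∀ P : S, (S.filter fun p : F × F => p.1 = (P : F × F).1 ∧ p.2 ≠ (P : F × F).2).card ≤ q0 ∧
        ∀ c ∈ C, ∀ c' ∈ C,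
          (∀ Q : S, (Q : F × F).1 = (P : F × F).1 → Q ≠ P → c Q = c' Q) → c P = c' P) := by
  classical
  subst hM hS hW hC
  set S : Finset (F × F) := Finset.univ.filter (fun p : F × F =>
    p.1 ^ q0 + p.1 = p.2 ^ (q0 + 1) ∧
      p.1 ∉ Finset.univ.filter fun a : F => a ^ q0 + a = 0) with hS'
  have hq2 : 2 ≤ q0 := hq0.two_le
  -- Part 1 core: projection to a univariate polynomial on the fiber over `a`.
  have part1 : ∀ G ∈ Submodule.span F
      {p : MvPolynomial (Fin 2) F | ∃ j i : ℕ, j ≤ t ∧ i ≤ q0 - 1 ∧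
        p = MvPolynomial.X 0 ^ j * MvPolynomial.X 1 ^ i}, ∀ a : F, ∃ f : Polynomial F,
      f.degree ≤ ((q0 - 1 : ℕ) : WithBot ℕ) ∧
      ∀ b : F, MvPolynomial.eval ![a, b] G = f.eval b := by
    intro G hG a
    induction hG using Submodule.span_induction with
    | mem p hp =>
        obtain ⟨j, i, hj, hi, rfl⟩ := hp
        refine ⟨Polynomial.C (a ^ j) * Polynomial.X ^ i, ?_, ?_⟩
        · exact (Polynomial.degree_C_mul_X_pow_le _ _).trans (by exact_mod_cast hi)
        · intro b; simp
    | zero => exact ⟨0, by simp, by simp⟩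
    | add x y _ _ hx hy =>
        obtain ⟨f, hf, hfe⟩ := hx; obtain ⟨g, hg, hge⟩ := hy
        exact ⟨f + g, (Polynomial.degree_add_le _ _).trans (max_le hf hg),
          fun b => by simp [hfe b, hge b]⟩
    | smul r x _ hx =>
        obtain ⟨f, hf, hfe⟩ := hx
        exact ⟨r • f, (Polynomial.degree_smul_le _ _).trans hf,
          fun b => by simp [hfe b]⟩
  -- Counting: there is a primitive (q0+1)-th root of unity in F.
  have hmul : (q0 + 1) * (q0 - 1) + 1 = q0 ^ 2 := by
    obtain ⟨k, rfl⟩ := Nat.exists_eq_add_of_le hq2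
    have h1 : 2 + k - 1 = k + 1 := by omega
    rw [h1]; ring
  have hcardU : Fintype.card Fˣ = (q0 + 1) * (q0 - 1) := by
    rw [Fintype.card_units, hF, ← hmul, Nat.add_sub_cancel]
  obtain ⟨g, hg⟩ := IsCyclic.exists_generator (α := Fˣ)
  have hog : orderOf g = (q0 + 1) * (q0 - 1) := by
    rw [orderOf_eq_card_of_forall_mem_zpowers hg, Nat.card_eq_fintype_card, hcardU]
  have hoz : orderOf (g ^ (q0 - 1)) = q0 + 1 := by
    rw [orderOf_pow, hog, Nat.gcd_eq_right ⟨q0 + 1, by ring⟩,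
      Nat.mul_div_cancel _ (by omega)]
  have hζ : IsPrimitiveRoot ((g ^ (q0 - 1) : Fˣ) : F) (q0 + 1) := by
    rw [IsPrimitiveRoot.coe_units_iff]
    exact hoz ▸ IsPrimitiveRoot.orderOf _
  have hKcard : (Polynomial.nthRootsFinset (q0 + 1) (1 : F)).card = q0 + 1 :=
    hζ.card_nthRootsFinset
  -- The fiber over `a` has exactly q0+1 points.
  have fiber_card : ∀ a b : F,
      a ∉ (Finset.univ.filter fun x : F => x ^ q0 + x = 0) → b ^ (q0 + 1) = a ^ q0 + a →
      (Finset.univ.filter fun x : F => x ^ (q0 + 1) = a ^ q0 + a).card = q0 + 1 := by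
    intro a b haM hb
    have hc : a ^ q0 + a ≠ 0 := by
      simpa using haM
    have hb0 : b ≠ 0 := by
      rintro rfl
      exact hc (by rw [← hb, zero_pow (by omega)])
    refine Eq.trans (Finset.card_bij' (fun y _ => y / b) (fun x _ => x * b) ?_ ?_ ?_ ?_) hKcard
    · intro y hy
      rw [Finset.mem_filter] at hy
      rw [Polynomial.mem_nthRootsFinset (by omega)]
      rw [div_pow, hy.2, ← hb, div_self (pow_ne_zero _ hb0)]
    · intro x hx
      rw [Polynomial.mem_nthRootsFinset (by omega)] at hx
      rw [Finset.mem_filter]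
      exact ⟨Finset.mem_univ _, by rw [mul_pow, hx, one_mul, hb]⟩
    · intro y _; field_simp
    · intro x _; field_simp
  refine ⟨fun G hG a _ => ?_, fun P => ?_⟩
  · obtain ⟨f, hdeg, he⟩ := part1 G hG a
    exact ⟨f, hdeg, fun b _ => he b⟩
  · set a := (P : F × F).1 with ha
    set b := (P : F × F).2 with hb
    obtain ⟨-, hab, haM⟩ := Finset.mem_filter.mp P.2
    have hbfib : b ^ (q0 + 1) = a ^ q0 + a := hab.symm
    set fib : Finset F := Finset.univ.filter fun x : F => x ^ (q0 + 1) = a ^ q0 + a with hfib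
    have hfibcard : fib.card = q0 + 1 := fiber_card a b haM hbfib
    have hbmem : b ∈ fib := by
      rw [hfib, Finset.mem_filter]; exact ⟨Finset.mem_univ _, hbfib⟩
    -- the recovering set corresponds to fib.erase b
    have hTcard : (S.filter fun p : F × F => p.1 = a ∧ p.2 ≠ b).card = (fib.erase b).card := by
      refine Finset.card_bij (fun p _ => p.2) ?_ ?_ ?_
      · intro p hp
        rw [Finset.mem_filter, Finset.mem_filter] at hp
        obtain ⟨⟨-, hp1, -⟩, hpa, hpb⟩ := hp
        rw [Finset.mem_erase, hfib, Finset.mem_filter]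
        exact ⟨hpb, Finset.mem_univ _, by rw [← hp1, hpa]⟩
      · intro p hp p' hp' hpp
        rw [Finset.mem_filter] at hp hp'
        exact Prod.ext (hp.2.1.trans hp'.2.1.symm) hpp
      · intro y hy
        rw [Finset.mem_erase, hfib, Finset.mem_filter] at hy
        obtain ⟨hyb, -, hy⟩ := hy
        refine ⟨(a, y), ?_, rfl⟩
        rw [Finset.mem_filter, Finset.mem_filter]
        exact ⟨⟨Finset.mem_univ _, hy.symm, haM⟩, rfl, hyb⟩
    have hecard : (fib.erase b).card = q0 := by
      rw [Finset.card_erase_of_mem hbmem, hfibcard]; rfl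
    refine ⟨by rw [hTcard, hecard], ?_⟩
    intro c hc c' hc' hagree
    obtain ⟨G, hG, rfl⟩ := hc
    obtain ⟨G', hG', rfl⟩ := hc'
    obtain ⟨f, hdeg, he⟩ := part1 (G - G') (Submodule.sub_mem _ hG hG') a
    have hf0 : f = 0 := by
      refine Polynomial.eq_zero_of_natDegree_lt_card_of_eval_eq_zero' f (fib.erase b) ?_ ?_
      · intro y hy
        rw [Finset.mem_erase, hfib, Finset.mem_filter] at hy
        obtain ⟨hyb, -, hy⟩ := hy
        have hQS : (a, y) ∈ Finset.univ.filter (fun p : F × F =>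
            p.1 ^ q0 + p.1 = p.2 ^ (q0 + 1) ∧ p.1 ∉ Finset.univ.filter fun a : F =>
              a ^ q0 + a = 0) := by
          rw [Finset.mem_filter]
          exact ⟨Finset.mem_univ _, hy.symm, haM⟩
        have hQP : (⟨(a, y), hQS⟩ : S) ≠ P := by
          intro h
          apply hyb
          have := congrArg (fun Q : S => (Q : F × F).2) h
          simpa using this
        have := hagree ⟨(a, y), hQS⟩ rfl hQP
        simp only [evalMv, LinearMap.pi_apply, AlgHom.toLinearMap_apply] at this
        rw [← he y, map_sub]
        rw [← aeval_eq_eval' ![a, y] G, ← aeval_eq_eval' ![a, y] G']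
        simpa using sub_eq_zero_of_eq this
      · rw [hecard]
        have h1 : f.natDegree ≤ q0 - 1 := Polynomial.natDegree_le_iff_degree_le.mpr hdeg
        omega
    have := he b
    rw [hf0, Polynomial.eval_zero, map_sub, sub_eq_zero] at this
    simp only [evalMv, LinearMap.pi_apply, AlgHom.toLinearMap_apply]
    rw [aeval_eq_eval' ![a, b] G, aeval_eq_eval' ![a, b] G']
    exact this
end
end

section
/- Let q0 ≥ 2 be a prime power and q = q0². Let B = {(a,b) ∈ 𝔽_q × 𝔽_q : a^{q0} + a = b^{q0+1}, b ≠ 0}, let L ⊆ 𝔽_q[x,y] be the 𝔽_q-linear span of the monomials x^i y^j for 0 ≤ i ≤ q0-2 and 0 ≤ j ≤ q0-1, and let C ⊆ 𝔽_q^B be the image of L under the evaluation map F ↦ (F(a,b))_{(a,b) ∈ B}. Then every coordinate P = (a,b) ∈ B has two disjoint recovering sets: I_P = {(a',b) ∈ B : a' ≠ a} of size q0 - 1 and J_P = {(a,b') ∈ B : b' ≠ b} of size q0, i.e., I_P ∩ J_P = ∅ and any two codewords of C that agree on all coordinates in I_P (respectively, on all coordinates in J_P) also agree in coordinate P. -/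
noncomputable section

open Polynomial Finset

lemma rootBound {F : Type*} [Field F] [Fintype F] [DecidableEq F] (p : Polynomial F)
    (hp : p ≠ 0) :
    (Finset.univ.filter fun x => p.eval x = 0).card ≤ p.natDegree := by
  have h1 : (Finset.univ.filter fun x => p.eval x = 0) ⊆ p.roots.toFinset := by
    intro x hx
    simp only [Finset.mem_filter] at hx
    simp [Polynomial.mem_roots', hp, hx.2, Polynomial.IsRoot]
  calc (Finset.univ.filter fun x => p.eval x = 0).card
      ≤ p.roots.toFinset.card := Finset.card_le_card h1
    _ ≤ Multiset.card p.roots := p.roots.toFinset_card_le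
    _ ≤ p.natDegree := p.card_roots'

lemma freshman {F : Type*} [Field F] [Fintype F] (q0 : ℕ) (hq0 : IsPrimePow q0)
    (hF : Fintype.card F = q0 ^ 2) (x y : F) : (x + y) ^ q0 = x ^ q0 + y ^ q0 := by
  obtain ⟨p, n, hp, hn, rfl⟩ := hq0
  have hpprime : p.Prime := hp.nat_prime
  set r := ringChar F with hr
  haveI : CharP F r := ringChar.charP F
  have hrprime : r.Prime := CharP.char_is_prime F r
  obtain ⟨m, -, hcard⟩ := FiniteField.card F r
  have hrp : r = p := by
    have hdvd : r ∣ p := by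
      have : r ∣ (p ^ n) ^ 2 := by
        rw [← hF, hcard]
        exact dvd_pow_self r (by positivity)
      exact hrprime.dvd_of_dvd_pow (by rwa [← pow_mul] at this)
    exact ((Nat.prime_dvd_prime_iff_eq hrprime hpprime).mp hdvd)
  haveI : Fact p.Prime := ⟨hpprime⟩
  haveI : CharP F p := hrp ▸ (ringChar.charP F)
  exact add_pow_char_pow ..

lemma traceFiber {F : Type*} [Field F] [Fintype F] [DecidableEq F] (q0 : ℕ)
    (hq0 : IsPrimePow q0) (hq0' : 2 ≤ q0) (hF : Fintype.card F = q0 ^ 2)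
    (c a : F) (ha : a ^ q0 + a = c) :
    (Finset.univ.filter fun x : F => x ^ q0 + x = c).card = q0 := by
  have hq0pos : 0 < q0 := by omega
  -- the kernel
  set K := Finset.univ.filter fun x : F => x ^ q0 + x = 0 with hK
  have hfib : ∀ d b : F, b ^ q0 + b = d →
      (Finset.univ.filter fun x : F => x ^ q0 + x = d) = K.image (fun k => k + b) := by
    intro d b hb
    ext x
    simp only [Finset.mem_filter, Finset.mem_univ, true_and, Finset.mem_image, hK]
    constructor
    · intro hx
      refine ⟨x - b, ?_, by ring⟩
      have : (x - b) + b = x := by ring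
      have h2 : (x - b) ^ q0 + b ^ q0 = x ^ q0 := by
        rw [← freshman q0 hq0 hF, this]
      have : (x - b) ^ q0 + (x - b) = (x ^ q0 + x) - (b ^ q0 + b) := by
        rw [← h2]; ring
      rw [this, hx, hb, sub_self]
    · rintro ⟨k, hk, rfl⟩
      rw [freshman q0 hq0 hF]
      have : k ^ q0 + b ^ q0 + (k + b) = (k ^ q0 + k) + (b ^ q0 + b) := by ring
      rw [this, hk, hb, zero_add]
  -- bound on kernel size
  have hpK : (X ^ q0 + X : Polynomial F).natDegree = q0 := by
    compute_degree! <;> first | omega | simp [show ¬(1 = q0) by omega]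
  have hpKne : (X ^ q0 + X : Polynomial F) ≠ 0 := by
    intro h
    rw [h, Polynomial.natDegree_zero] at hpK; omega
  have hKle : K.card ≤ q0 := by
    have := rootBound (X ^ q0 + X : Polynomial F) hpKne
    rw [hpK] at this
    refine le_trans (le_of_eq ?_) this
    congr 1
    ext x; simp [hK]
  -- bound on image size
  set T := Finset.univ.image (fun x : F => x ^ q0 + x) with hT
  have hpT : (X ^ q0 - X : Polynomial F).natDegree = q0 := by
    compute_degree! <;> first | omega | simp [show ¬(1 = q0) by omega]
  have hpTne : (X ^ q0 - X : Polynomial F) ≠ 0 := by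
    intro h
    rw [h, Polynomial.natDegree_zero] at hpT; omega
  have hTle : T.card ≤ q0 := by
    have hb := rootBound (X ^ q0 - X : Polynomial F) hpTne
    rw [hpT] at hb
    refine le_trans (Finset.card_le_card ?_) hb
    intro t ht
    simp only [hT, Finset.mem_image, Finset.mem_univ, true_and] at ht
    obtain ⟨x, rfl⟩ := ht
    simp only [Finset.mem_filter, Finset.mem_univ, true_and]
    have h1 : (x ^ q0 + x) ^ q0 = x ^ q0 + x := by
      rw [freshman q0 hq0 hF, ← pow_mul, ← sq, ← hF, FiniteField.pow_card, add_comm]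
    simp [h1]
  -- the counting identity
  have hcount : Fintype.card F = ∑ t ∈ T, ((Finset.univ.filter fun x : F => x ^ q0 + x = t)).card := by
    rw [← Finset.card_univ]
    exact Finset.card_eq_sum_card_fiberwise (fun x _ => Finset.mem_image_of_mem _ (Finset.mem_univ x))
  have hfibK : ∀ t ∈ T, ((Finset.univ.filter fun x : F => x ^ q0 + x = t)).card = K.card := by
    intro t ht
    simp only [hT, Finset.mem_image, Finset.mem_univ, true_and] at ht
    obtain ⟨b, hb⟩ := ht
    rw [hfib t b hb]
    exact Finset.card_image_of_injective _ (add_left_injective b)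
  have hsum : Fintype.card F = T.card * K.card := by
    rw [hcount, Finset.sum_congr rfl hfibK, Finset.sum_const, smul_eq_mul]
  have hKge : q0 ≤ K.card := by
    by_contra h
    push_neg at h
    have : Fintype.card F < q0 * q0 := by
      rw [hsum]
      calc T.card * K.card ≤ q0 * K.card := Nat.mul_le_mul_right _ hTle
        _ < q0 * q0 := (Nat.mul_lt_mul_left hq0pos).mpr h
    rw [hF, sq] at this; omega
  have hKcard : K.card = q0 := le_antisymm hKle hKge
  rw [hfib c a ha, Finset.card_image_of_injective _ (add_left_injective a), hKcard]

lemma normFiber {F : Type*} [Field F] [Fintype F] [DecidableEq F] (q0 : ℕ)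
    (hq0 : IsPrimePow q0) (hq0' : 2 ≤ q0) (hF : Fintype.card F = q0 ^ 2)
    (c b : F) (hc : c ≠ 0) (hb : b ^ (q0 + 1) = c) :
    (Finset.univ.filter fun y : F => y ^ (q0 + 1) = c).card = q0 + 1 := by
  have hbne : b ≠ 0 := by
    intro h; rw [h, zero_pow (by omega)] at hb; exact hc hb.symm
  set U := Finset.univ.filter fun u : F => u ^ (q0 + 1) = 1 with hU
  have hfib : ∀ d e : F, d ≠ 0 → e ^ (q0 + 1) = d →
      (Finset.univ.filter fun y : F => y ^ (q0 + 1) = d) = U.image (fun u => u * e) := by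
    intro d e hd he
    have hene : e ≠ 0 := by
      intro h; rw [h, zero_pow (by omega)] at he; exact hd he.symm
    ext y
    simp only [Finset.mem_filter, Finset.mem_univ, true_and, Finset.mem_image, hU]
    constructor
    · intro hy
      refine ⟨y * e⁻¹, ?_, by field_simp⟩
      rw [mul_pow, hy, inv_pow, he, mul_inv_cancel₀ hd]
    · rintro ⟨u, hu, rfl⟩
      rw [mul_pow, hu, he, one_mul]
  have hpU : ((X : Polynomial F) ^ (q0 + 1) - C 1).natDegree = q0 + 1 := by
    compute_degree!
  have hpUne : ((X : Polynomial F) ^ (q0 + 1) - C 1) ≠ 0 := by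
    intro h; rw [h, Polynomial.natDegree_zero] at hpU; omega
  have hUle : U.card ≤ q0 + 1 := by
    have hbd := rootBound _ hpUne
    rw [hpU] at hbd
    refine le_trans (le_of_eq ?_) hbd
    congr 1
    ext x
    simp [hU, sub_eq_zero]
  -- the nonzero elements
  set S := Finset.univ.filter fun y : F => y ≠ (0 : F) with hS
  have hScard : S.card = q0 ^ 2 - 1 := by
    have : S = Finset.univ.erase 0 := by
      ext x; simp [hS, eq_comm]
    rw [this, Finset.card_erase_of_mem (Finset.mem_univ 0), Finset.card_univ, hF]
  set T := Finset.univ.filter fun t : F => t ^ q0 = t ∧ t ≠ 0 with hT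
  have hpT : (X ^ q0 - X : Polynomial F).natDegree = q0 := by
    compute_degree! <;> first | omega | simp [show ¬(1 = q0) by omega]
  have hpTne : (X ^ q0 - X : Polynomial F) ≠ 0 := by
    intro h; rw [h, Polynomial.natDegree_zero] at hpT; omega
  have hTle : T.card ≤ q0 - 1 := by
    have hbd := rootBound (X ^ q0 - X : Polynomial F) hpTne
    rw [hpT] at hbd
    have hsub : T ⊆ (Finset.univ.filter fun x : F => (X ^ q0 - X : Polynomial F).eval x = 0).erase 0 := by
      intro t ht
      simp only [hT, Finset.mem_filter, Finset.mem_univ, true_and] at ht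
      refine Finset.mem_erase.mpr ⟨ht.2, ?_⟩
      simp [ht.1, sub_eq_zero]
    have h0mem : (0 : F) ∈ (Finset.univ.filter fun x : F => (X ^ q0 - X : Polynomial F).eval x = 0) := by
      simp [zero_pow (show q0 ≠ 0 by omega)]
    calc T.card ≤ _ := Finset.card_le_card hsub
      _ = _ - 1 := Finset.card_erase_of_mem h0mem
      _ ≤ q0 - 1 := by omega
  have hmapsto : ∀ y ∈ S, (y ^ (q0 + 1) : F) ∈ T := by
    intro y hy
    simp only [hS, Finset.mem_filter, Finset.mem_univ, true_and] at hy
    simp only [hT, Finset.mem_filter, Finset.mem_univ, true_and]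
    constructor
    · rw [← pow_mul]
      have : (q0 + 1) * q0 = q0 ^ 2 + q0 := by ring
      rw [this, pow_add, ← hF, FiniteField.pow_card]
      ring
    · exact pow_ne_zero _ hy
  have hcount : S.card = ∑ t ∈ T, (S.filter fun y => y ^ (q0 + 1) = t).card :=
    Finset.card_eq_sum_card_fiberwise hmapsto
  have hfible : ∀ t ∈ T, (S.filter fun y => y ^ (q0 + 1) = t).card ≤ U.card := by
    intro t ht
    simp only [hT, Finset.mem_filter, Finset.mem_univ, true_and] at ht
    rcases Finset.eq_empty_or_nonempty (S.filter fun y => y ^ (q0 + 1) = t) with h | ⟨e, he⟩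
    · rw [h]; simp
    · simp only [hS, Finset.mem_filter, Finset.mem_univ, true_and] at he
      have hSf : (S.filter fun y => y ^ (q0 + 1) = t) ⊆ U.image (fun u => u * e) := by
        refine le_trans (Finset.filter_subset_filter _ (Finset.filter_subset _ _)) ?_
        rw [show (Finset.univ.filter fun y : F => y ^ (q0+1) = t) = U.image (fun u => u * e) from hfib t e ht.2 he.2]
      calc _ ≤ (U.image (fun u => u * e)).card := Finset.card_le_card hSf
        _ ≤ U.card := Finset.card_image_le
  have hUge : q0 + 1 ≤ U.card := by
    by_contra h
    push_neg at h
    have hle : S.card ≤ T.card * U.card := by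
      rw [hcount]
      calc ∑ t ∈ T, (S.filter fun y => y ^ (q0 + 1) = t).card
          ≤ ∑ _t ∈ T, U.card := Finset.sum_le_sum hfible
        _ = T.card * U.card := by rw [Finset.sum_const, smul_eq_mul]
    have : q0 ^ 2 - 1 ≤ (q0 - 1) * q0 := by
      calc q0 ^ 2 - 1 = S.card := hScard.symm
        _ ≤ T.card * U.card := hle
        _ ≤ (q0 - 1) * U.card := Nat.mul_le_mul_right _ hTle
        _ ≤ (q0 - 1) * q0 := Nat.mul_le_mul_left _ (by omega)
    nlinarith [sq_nonneg q0, Nat.sub_add_cancel (show 1 ≤ q0 by omega),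
      Nat.sub_add_cancel (show 1 ≤ q0 ^ 2 by nlinarith)]
  have hUcard : U.card = q0 + 1 := le_antisymm hUle hUge
  rw [hfib c b hc hb, Finset.card_image_of_injective _ (mul_left_injective₀ hbne), hUcard]

lemma keyEval1 {F : Type*} [Field F] (a b : F) (H : MvPolynomial (Fin 2) F) :
    MvPolynomial.aeval ![a, b] H =
      Polynomial.eval a (MvPolynomial.aeval ![Polynomial.X, Polynomial.C b] H) := by
  have h : (Polynomial.aeval a).comp
      (MvPolynomial.aeval ![Polynomial.X, Polynomial.C b]) = MvPolynomial.aeval ![a, b] := by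
    apply MvPolynomial.algHom_ext
    intro i
    fin_cases i <;> simp
  rw [← h]
  simp

lemma keyEval2 {F : Type*} [Field F] (a b : F) (H : MvPolynomial (Fin 2) F) :
    MvPolynomial.aeval ![a, b] H =
      Polynomial.eval b (MvPolynomial.aeval ![Polynomial.C a, Polynomial.X] H) := by
  have h : (Polynomial.aeval b).comp
      (MvPolynomial.aeval ![Polynomial.C a, Polynomial.X]) = MvPolynomial.aeval ![a, b] := by
    apply MvPolynomial.algHom_ext
    intro i
    fin_cases i <;> simp
  rw [← h]
  simp

lemma vanish1 {F : Type*} [Field F] [Fintype F] [DecidableEq F] (q0 : ℕ) (hq0' : 2 ≤ q0)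
    (H : MvPolynomial (Fin 2) F)
    (hH : H ∈ Submodule.span F
      {p : MvPolynomial (Fin 2) F | ∃ i j : ℕ, i ≤ q0 - 2 ∧ j ≤ q0 - 1 ∧
        p = MvPolynomial.X 0 ^ i * MvPolynomial.X 1 ^ j})
    (b : F) (s : Finset F) (hcard : q0 - 1 ≤ s.card)
    (hv : ∀ x ∈ s, MvPolynomial.aeval ![x, b] H = 0) (a : F) :
    MvPolynomial.aeval ![a, b] H = 0 := by
  set ψ := MvPolynomial.aeval (R := F) ![Polynomial.X, Polynomial.C b] with hψ
  have hdeg : ψ H ∈ Polynomial.degreeLT F (q0 - 1) := by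
    have hle : Submodule.span F
        {p : MvPolynomial (Fin 2) F | ∃ i j : ℕ, i ≤ q0 - 2 ∧ j ≤ q0 - 1 ∧
          p = MvPolynomial.X 0 ^ i * MvPolynomial.X 1 ^ j} ≤
        (Polynomial.degreeLT F (q0 - 1)).comap ψ.toLinearMap := by
      rw [Submodule.span_le]
      rintro p ⟨i, j, hi, hj, rfl⟩
      rw [SetLike.mem_coe, Submodule.mem_comap]
      simp only [AlgHom.toLinearMap_apply, map_mul, map_pow, hψ,
        MvPolynomial.aeval_X, Matrix.cons_val_zero, Matrix.cons_val_one, Matrix.head_cons]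
      rw [Polynomial.mem_degreeLT]
      calc Polynomial.degree (Polynomial.X ^ i * Polynomial.C b ^ j)
          ≤ Polynomial.degree ((Polynomial.X : Polynomial F) ^ i) +
            Polynomial.degree (Polynomial.C b ^ j) := Polynomial.degree_mul_le _ _
        _ ≤ (i : WithBot ℕ) + 0 := by
            refine add_le_add (le_of_eq (Polynomial.degree_X_pow i)) ?_
            rw [← Polynomial.C_pow]
            exact Polynomial.degree_C_le
        _ = (i : WithBot ℕ) := add_zero _
        _ < ((q0 - 1 : ℕ) : WithBot ℕ) := by exact_mod_cast (by omega : i < q0 - 1)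
    exact hle hH
  have hzero : ψ H = 0 := by
    by_contra hne
    have h1 : s ⊆ Finset.univ.filter fun x => (ψ H).eval x = 0 := by
      intro x hx
      simp only [Finset.mem_filter, Finset.mem_univ, true_and]
      rw [← keyEval1]
      exact hv x hx
    have h2 := rootBound (ψ H) hne
    have h3 : (ψ H).natDegree < q0 - 1 :=
      (Polynomial.natDegree_lt_iff_degree_lt hne).mpr (Polynomial.mem_degreeLT.mp hdeg)
    have := Finset.card_le_card h1
    omega
  rw [keyEval1, hzero, Polynomial.eval_zero]

lemma vanish2 {F : Type*} [Field F] [Fintype F] [DecidableEq F] (q0 : ℕ) (hq0' : 2 ≤ q0)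
    (H : MvPolynomial (Fin 2) F)
    (hH : H ∈ Submodule.span F
      {p : MvPolynomial (Fin 2) F | ∃ i j : ℕ, i ≤ q0 - 2 ∧ j ≤ q0 - 1 ∧
        p = MvPolynomial.X 0 ^ i * MvPolynomial.X 1 ^ j})
    (a : F) (s : Finset F) (hcard : q0 ≤ s.card)
    (hv : ∀ y ∈ s, MvPolynomial.aeval ![a, y] H = 0) (b : F) :
    MvPolynomial.aeval ![a, b] H = 0 := by
  set ψ := MvPolynomial.aeval (R := F) ![Polynomial.C a, Polynomial.X] with hψ
  have hdeg : ψ H ∈ Polynomial.degreeLT F q0 := by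
    have hle : Submodule.span F
        {p : MvPolynomial (Fin 2) F | ∃ i j : ℕ, i ≤ q0 - 2 ∧ j ≤ q0 - 1 ∧
          p = MvPolynomial.X 0 ^ i * MvPolynomial.X 1 ^ j} ≤
        (Polynomial.degreeLT F q0).comap ψ.toLinearMap := by
      rw [Submodule.span_le]
      rintro p ⟨i, j, hi, hj, rfl⟩
      rw [SetLike.mem_coe, Submodule.mem_comap]
      simp only [AlgHom.toLinearMap_apply, map_mul, map_pow, hψ,
        MvPolynomial.aeval_X, Matrix.cons_val_zero, Matrix.cons_val_one, Matrix.head_cons]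
      rw [Polynomial.mem_degreeLT]
      calc Polynomial.degree (Polynomial.C a ^ i * Polynomial.X ^ j)
          ≤ Polynomial.degree ((Polynomial.C a : Polynomial F) ^ i) +
            Polynomial.degree ((Polynomial.X : Polynomial F) ^ j) := Polynomial.degree_mul_le _ _
        _ ≤ 0 + (j : WithBot ℕ) := by
            refine add_le_add ?_ (le_of_eq (Polynomial.degree_X_pow j))
            rw [← Polynomial.C_pow]
            exact Polynomial.degree_C_le
        _ = (j : WithBot ℕ) := zero_add _
        _ < ((q0 : ℕ) : WithBot ℕ) := by exact_mod_cast (by omega : j < q0)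
    exact hle hH
  have hzero : ψ H = 0 := by
    by_contra hne
    have h1 : s ⊆ Finset.univ.filter fun y => (ψ H).eval y = 0 := by
      intro y hy
      simp only [Finset.mem_filter, Finset.mem_univ, true_and]
      rw [← keyEval2]
      exact hv y hy
    have h2 := rootBound (ψ H) hne
    have h3 : (ψ H).natDegree < q0 :=
      (Polynomial.natDegree_lt_iff_degree_lt hne).mpr (Polynomial.mem_degreeLT.mp hdeg)
    have := Finset.card_le_card h1
    omega
  rw [keyEval2, hzero, Polynomial.eval_zero]


/-- The Hermitian LRC(2) code has, for every coordinate `P = (a,b) ∈ B`, two disjoint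
recovering sets: `I_P = {(a',b) ∈ B : a' ≠ a}` of size `q0 - 1` and
`J_P = {(a,b') ∈ B : b' ≠ b}` of size `q0`. -/
theorem hermitian_lrc2_two_recovering_sets
    (q0 : ℕ) (hq0 : IsPrimePow q0) (hq0' : 2 ≤ q0)
    (F : Type*) [Field F] [Fintype F] [DecidableEq F] (hF : Fintype.card F = q0 ^ 2)
    (B : Finset (F × F))
    (hB : B = Finset.univ.filter fun p : F × F =>
      p.1 ^ q0 + p.1 = p.2 ^ (q0 + 1) ∧ p.2 ≠ 0)
    (L : Submodule F (MvPolynomial (Fin 2) F))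
    (hL : L = Submodule.span F
      {p : MvPolynomial (Fin 2) F | ∃ i j : ℕ, i ≤ q0 - 2 ∧ j ≤ q0 - 1 ∧
        p = MvPolynomial.X 0 ^ i * MvPolynomial.X 1 ^ j})
    (C : Submodule F (B → F)) (hC : C = Submodule.map (evalMv B) L) :
    ∀ P : B,
      (B.filter fun p : F × F => p.2 = (P : F × F).2 ∧ p.1 ≠ (P : F × F).1).card = q0 - 1 ∧
      (B.filter fun p : F × F => p.1 = (P : F × F).1 ∧ p.2 ≠ (P : F × F).2).card = q0 ∧
      Disjoint
        (B.filter fun p : F × F => p.2 = (P : F × F).2 ∧ p.1 ≠ (P : F × F).1)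
        (B.filter fun p : F × F => p.1 = (P : F × F).1 ∧ p.2 ≠ (P : F × F).2) ∧
      (∀ c ∈ C, ∀ c' ∈ C,
        (∀ Q : B, (Q : F × F).2 = (P : F × F).2 → (Q : F × F).1 ≠ (P : F × F).1 →
          c Q = c' Q) → c P = c' P) ∧
      (∀ c ∈ C, ∀ c' ∈ C,
        (∀ Q : B, (Q : F × F).1 = (P : F × F).1 → (Q : F × F).2 ≠ (P : F × F).2 →
          c Q = c' Q) → c P = c' P) := by

  intro P
  obtain ⟨⟨a, b⟩, hPmem⟩ := P
  have hP' := Finset.mem_filter.mp (hB ▸ hPmem)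
  obtain ⟨-, hab, hbne⟩ := hP'
  simp only at hab hbne ⊢
  have hcne : b ^ (q0 + 1) ≠ 0 := pow_ne_zero _ hbne
  set fibA := Finset.univ.filter fun x : F => x ^ q0 + x = b ^ (q0 + 1) with hfibAdef
  have hfibA : fibA.card = q0 := traceFiber q0 hq0 hq0' hF _ a hab
  have haA : a ∈ fibA := by simp [hfibAdef, hab]
  set fibB := Finset.univ.filter fun y : F => y ^ (q0 + 1) = b ^ (q0 + 1) with hfibBdef
  have hfibB : fibB.card = q0 + 1 := normFiber q0 hq0 hq0' hF _ b hcne rfl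
  have hbB : b ∈ fibB := by simp [hfibBdef]
  have hinjA : Function.Injective (fun x : F => (x, b)) := fun x y h => congrArg Prod.fst h
  have hinjB : Function.Injective (fun y : F => ((a, y) : F × F)) :=
    fun x y h => congrArg Prod.snd h
  have hIset : B.filter (fun p : F × F => p.2 = b ∧ p.1 ≠ a) =
      (fibA.erase a).image (fun x => (x, b)) := by
    ext ⟨u, v⟩
    simp only [hB, hfibAdef, Finset.mem_filter, Finset.mem_univ, true_and, Finset.mem_image,
      Finset.mem_erase, Prod.mk.injEq]
    constructor
    · rintro ⟨⟨h1, h2⟩, h3, h4⟩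
      subst h3
      exact ⟨u, ⟨h4, h1⟩, rfl, rfl⟩
    · rintro ⟨x, ⟨hx1, hx2⟩, rfl, rfl⟩
      exact ⟨⟨hx2, hbne⟩, rfl, hx1⟩
  have hJset : B.filter (fun p : F × F => p.1 = a ∧ p.2 ≠ b) =
      (fibB.erase b).image (fun y => (a, y)) := by
    ext ⟨u, v⟩
    simp only [hB, hfibBdef, Finset.mem_filter, Finset.mem_univ, true_and, Finset.mem_image,
      Finset.mem_erase, Prod.mk.injEq]
    constructor
    · rintro ⟨⟨h1, h2⟩, h3, h4⟩
      subst h3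
      exact ⟨v, ⟨h4, by rw [← h1, hab]⟩, rfl, rfl⟩
    · rintro ⟨y, ⟨hy1, hy2⟩, rfl, rfl⟩
      refine ⟨⟨by rw [hab, hy2], ?_⟩, rfl, hy1⟩
      intro h
      rw [h, zero_pow (by omega : q0 + 1 ≠ 0)] at hy2
      exact hcne hy2.symm
  have hIcard : (B.filter fun p : F × F => p.2 = b ∧ p.1 ≠ a).card = q0 - 1 := by
    rw [hIset, Finset.card_image_of_injective _ hinjA, Finset.card_erase_of_mem haA, hfibA]
  have hJcard : (B.filter fun p : F × F => p.1 = a ∧ p.2 ≠ b).card = q0 := by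
    rw [hJset, Finset.card_image_of_injective _ hinjB, Finset.card_erase_of_mem hbB, hfibB]
    omega
  refine ⟨hIcard, hJcard, ?_, ?_, ?_⟩
  · rw [Finset.disjoint_left]
    intro p hp1 hp2
    exact (Finset.mem_filter.mp hp1).2.2 (Finset.mem_filter.mp hp2).2.1
  · rintro c hc c' hc' hagree
    rw [hC] at hc hc'
    obtain ⟨G, hG, rfl⟩ := hc
    obtain ⟨G', hG', rfl⟩ := hc'
    rw [hL] at hG hG'
    have hH : G - G' ∈ Submodule.span F
        {p : MvPolynomial (Fin 2) F | ∃ i j : ℕ, i ≤ q0 - 2 ∧ j ≤ q0 - 1 ∧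
          p = MvPolynomial.X 0 ^ i * MvPolynomial.X 1 ^ j} := sub_mem hG hG'
    have hvan : ∀ x ∈ fibA.erase a, MvPolynomial.aeval ![x, b] (G - G') = 0 := by
      intro x hx
      obtain ⟨hxa, hxA⟩ := Finset.mem_erase.mp hx
      have hxeq : x ^ q0 + x = b ^ (q0 + 1) := by
        simpa [hfibAdef] using hxA
      have hxB : (x, b) ∈ B := by
        rw [hB]; simp [hxeq, hbne]
      have h := hagree ⟨(x, b), hxB⟩ rfl hxa
      simp only [evalMv, LinearMap.pi_apply, AlgHom.toLinearMap_apply] at h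
      rw [map_sub, h, sub_self]
    have hcard' : q0 - 1 ≤ (fibA.erase a).card := by
      rw [Finset.card_erase_of_mem haA, hfibA]
    have hfin := vanish1 q0 hq0' (G - G') hH b (fibA.erase a) hcard' hvan a
    rw [map_sub, sub_eq_zero] at hfin
    simpa only [evalMv, LinearMap.pi_apply, AlgHom.toLinearMap_apply] using hfin
  · rintro c hc c' hc' hagree
    rw [hC] at hc hc'
    obtain ⟨G, hG, rfl⟩ := hc
    obtain ⟨G', hG', rfl⟩ := hc'
    rw [hL] at hG hG'
    have hH : G - G' ∈ Submodule.span F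
        {p : MvPolynomial (Fin 2) F | ∃ i j : ℕ, i ≤ q0 - 2 ∧ j ≤ q0 - 1 ∧
          p = MvPolynomial.X 0 ^ i * MvPolynomial.X 1 ^ j} := sub_mem hG hG'
    have hvan : ∀ y ∈ fibB.erase b, MvPolynomial.aeval ![a, y] (G - G') = 0 := by
      intro y hy
      obtain ⟨hyb, hyB⟩ := Finset.mem_erase.mp hy
      have hyeq : y ^ (q0 + 1) = b ^ (q0 + 1) := by
        simpa [hfibBdef] using hyB
      have hyne : y ≠ 0 := by
        intro h
        rw [h, zero_pow (by omega : q0 + 1 ≠ 0)] at hyeq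
        exact hcne hyeq.symm
      have hyB' : (a, y) ∈ B := by
        rw [hB]; simp [hab, hyeq, hyne]
      have h := hagree ⟨(a, y), hyB'⟩ rfl hyb
      simp only [evalMv, LinearMap.pi_apply, AlgHom.toLinearMap_apply] at h
      rw [map_sub, h, sub_self]
    have hcard' : q0 ≤ (fibB.erase b).card := by
      rw [Finset.card_erase_of_mem hbB, hfibB]
      omega
    have hfin := vanish2 q0 hq0' (G - G') hH a (fibB.erase b) hcard' hvan b
    rw [map_sub, sub_eq_zero] at hfin
    simpa only [evalMv, LinearMap.pi_apply, AlgHom.toLinearMap_apply] using hfin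
end
end
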